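/- arXiv:2508.21753 — 5 statements merged into one kernel-verified Lean document; each statement's English description precedes it below -/
import Mathlib

section
/- Let α* = μ_B/μ_N and assume α* ≤ A_max. For each capacity M > 0, run the inventory process under the static policy A_t = α* for all t. Then there exist constants 0 < c ≤ C < ∞ and M₀ > 0, depending only on the distributions of B_1 and N_1 (not on M), such that for every M ≥ M₀, almost surely c/M ≤ W̄ ≤ C/M and c/M ≤ V̄ ≤ C/M. In particular, for any per-unit costs h, b > 0 the inefficiency h·W̄ + b·V̄ is Θ(1/M) as M → ∞. -/
open MeasureTheory ProbabilityTheory Filter Set Real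
open Topology

noncomputable section

/-- Clamp a real number to the interval `[0, M]`. -/
def clamp (M x : ℝ) : ℝ := min (max x 0) M

/-- The inventory process: `inv M S0 B N A t` is the inventory level after `t` steps,
starting from `S0`, with budgets `B`, demands `N` and allocations `A`.
(Indexing: the paper's `B_t, N_t, A_t, S_t` for `t ≥ 1` correspond to
`B (t-1), N (t-1), A (t-1), inv … t` here.) -/
def inv {Ω : Type*} (M S0 : ℝ) (B N A : ℕ → Ω → ℝ) : ℕ → Ω → ℝ
  | 0 => fun _ => S0
  | t + 1 => fun ω => clamp M (inv M S0 B N A t ω + B t ω - N t ω * A t ω)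

/-- Overflow in the step from time `t` to time `t+1` (the paper's `W_{t+1}`). -/
def ovf {Ω : Type*} (M S0 : ℝ) (B N A : ℕ → Ω → ℝ) (t : ℕ) (ω : Ω) : ℝ :=
  max (inv M S0 B N A t ω + B t ω - N t ω * A t ω - M) 0

/-- Stockout in the step from time `t` to time `t+1` (the paper's `V_{t+1}`). -/
def sko {Ω : Type*} (M S0 : ℝ) (B N A : ℕ → Ω → ℝ) (t : ℕ) (ω : Ω) : ℝ :=
  max (-(inv M S0 B N A t ω + B t ω - N t ω * A t ω)) 0

/-- Long-run average overflow `W̄`. -/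
def Wbar {Ω : Type*} (M S0 : ℝ) (B N A : ℕ → Ω → ℝ) (ω : Ω) : ℝ :=
  Filter.limsup (fun T : ℕ => (∑ t ∈ Finset.range T, ovf M S0 B N A t ω) / T) atTop

/-- Long-run average stockout `V̄`. -/
def Vbar {Ω : Type*} (M S0 : ℝ) (B N A : ℕ → Ω → ℝ) (ω : Ω) : ℝ :=
  Filter.limsup (fun T : ℕ => (∑ t ∈ Finset.range T, sko M S0 B N A t ω) / T) atTop

/-- `B, N` are i.i.d. across time (as a pair process), with the two sequences
independent of each other, and everything measurable. -/
def IsIIDPair {Ω : Type*} [MeasurableSpace Ω] (μ : Measure Ω) (B N : ℕ → Ω → ℝ) : Prop :=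
  (∀ t, Measurable (B t)) ∧ (∀ t, Measurable (N t)) ∧
  iIndepFun (fun t ω => (B t ω, N t ω)) μ ∧
  (∀ t, IdentDistrib (fun ω => (B t ω, N t ω)) (fun ω => (B 0 ω, N 0 ω)) μ μ) ∧
  (∀ t, IndepFun (B t) (N t) μ)

/-- `N` takes values in `{0, 1, …, Nmax}`. -/
def NatValued {Ω : Type*} (N : ℕ → Ω → ℝ) (Nmax : ℕ) : Prop :=
  ∀ t ω, ∃ k : ℕ, k ≤ Nmax ∧ N t ω = k

lemma clamp_eq (M u : ℝ) (hM : 0 ≤ M) :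
    clamp M u = u - max (u - M) 0 + max (-u) 0 := by
  unfold clamp
  rcases le_total u 0 with h | h
  · rw [max_eq_right h, max_eq_right (by linarith : u - M ≤ 0),
      max_eq_left (by linarith : (0:ℝ) ≤ -u), min_eq_left hM]; ring
  · rcases le_total u M with h' | h'
    · rw [max_eq_left h, max_eq_right (by linarith : u - M ≤ 0),
        max_eq_right (by linarith : -u ≤ 0), min_eq_left h']; ring
    · rw [max_eq_left h, max_eq_left (by linarith : (0:ℝ) ≤ u - M),
        max_eq_right (by linarith : -u ≤ 0), min_eq_right h']; ring

lemma clamp_sq (M u : ℝ) (hM : 0 ≤ M) :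
    (clamp M u) ^ 2 = u ^ 2 - 2 * M * max (u - M) 0 - (max (u - M) 0) ^ 2
      - (max (-u) 0) ^ 2 := by
  unfold clamp
  rcases le_total u 0 with h | h
  · rw [max_eq_right h, max_eq_right (by linarith : u - M ≤ 0),
      max_eq_left (by linarith : (0:ℝ) ≤ -u), min_eq_left hM]; ring
  · rcases le_total u M with h' | h'
    · rw [max_eq_left h, max_eq_right (by linarith : u - M ≤ 0),
        max_eq_right (by linarith : -u ≤ 0), min_eq_left h']; ring
    · rw [max_eq_left h, max_eq_left (by linarith : (0:ℝ) ≤ u - M),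
        max_eq_right (by linarith : -u ≤ 0), min_eq_right h']; ring

lemma clamp_nonneg (M u : ℝ) (hM : 0 ≤ M) : 0 ≤ clamp M u :=
  le_min (le_max_right u 0) hM

lemma clamp_le (M u : ℝ) : clamp M u ≤ M := min_le_right _ _

lemma abs_diff_le_of_inc (T : ℕ → ℝ) (K : ℝ) (hinc : ∀ n, |T (n + 1) - T n| ≤ K)
    (a : ℕ) : ∀ k : ℕ, |T (a + k) - T a| ≤ k * K := by
  intro k
  induction k with
  | zero => simp
  | succ k ih =>
      have h1 := hinc (a + k)
      have e : T (a + (k+1)) - T a = (T (a+k+1) - T (a+k)) + (T (a+k) - T a) := by ring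
      rw [e]
      push_cast
      calc |(T (a+k+1) - T (a+k)) + (T (a+k) - T a)|
          ≤ |T (a + k + 1) - T (a+k)| + |T (a+k) - T a| := abs_add_le _ _
        _ ≤ K + k * K := add_le_add h1 ih
        _ = ((k:ℝ) + 1) * K := by ring

lemma tendsto_div_of_sq (T : ℕ → ℝ) (K : ℝ) (hK : 0 ≤ K)
    (hinc : ∀ n, |T (n + 1) - T n| ≤ K)
    (h2 : Tendsto (fun n : ℕ => T (n ^ 2) / ((n : ℝ) ^ 2)) atTop (𝓝 0)) :
    Tendsto (fun n : ℕ => T n / n) atTop (𝓝 0) := by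
  have hdiff : ∀ a b : ℕ, a ≤ b → |T b - T a| ≤ ((b - a : ℕ) : ℝ) * K := by
    intro a b hab
    obtain ⟨k, rfl⟩ := Nat.exists_eq_add_of_le hab
    simpa using abs_diff_le_of_inc T K hinc a k
  rw [Metric.tendsto_atTop] at h2 ⊢
  intro ε hε
  obtain ⟨N1, hN1⟩ := h2 (ε / 2) (by linarith)
  set N2 : ℕ := max N1 (⌈6 * K / ε⌉₊ + 1) with hN2
  refine ⟨(N2 + 1) ^ 2, fun m hm => ?_⟩
  set n := Nat.sqrt m with hn
  have hn2m : n ^ 2 ≤ m := Nat.sqrt_le' m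
  have hmn : m < (n + 1) ^ 2 := Nat.lt_succ_sqrt' m
  have hnge : N2 + 1 ≤ n := by
    have := Nat.sqrt_le_sqrt hm
    rwa [Nat.sqrt_eq'] at this
  have hnN1 : N1 ≤ n := le_trans (le_trans (le_max_left _ _) (Nat.le_succ _)) hnge
  have hn1 : 1 ≤ n := le_trans (Nat.le_add_left 1 N2) hnge
  have hnR : (1:ℝ) ≤ (n:ℝ) := by exact_mod_cast hn1
  have hnpos : (0:ℝ) < (n:ℝ) := by linarith
  have hKn : 6 * K / ε ≤ (n:ℝ) := by
    have h1 : (⌈6 * K / ε⌉₊ : ℝ) ≤ ((N2 : ℝ)) := by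
      exact_mod_cast le_trans (Nat.le_succ _) (le_max_right N1 (⌈6 * K / ε⌉₊ + 1))
    have h2 := Nat.le_ceil (6 * K / ε)
    have h3 : (N2 : ℝ) ≤ (n : ℝ) := by exact_mod_cast le_trans (Nat.le_succ _) hnge
    linarith
  -- subsequence bound
  have hsub := hN1 n hnN1
  rw [Real.dist_eq, sub_zero] at hsub
  -- increments bound
  have hstep : |T m - T (n ^ 2)| ≤ ((m - n ^ 2 : ℕ) : ℝ) * K := hdiff _ _ hn2m
  have hcount : ((m - n ^ 2 : ℕ) : ℝ) ≤ 2 * (n : ℝ) := by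
    have h5 : m < n * n + 2 * n + 1 := by
      have := hmn; nlinarith [hmn]
    have h6 : n * n ≤ m := by nlinarith [hn2m]
    have : m - n ^ 2 ≤ 2 * n := by
      have : n ^ 2 = n * n := sq n
      omega
    calc ((m - n ^ 2 : ℕ) : ℝ) ≤ ((2 * n : ℕ) : ℝ) := by exact_mod_cast this
      _ = 2 * (n:ℝ) := by push_cast; ring
  have hm2 : ((n:ℝ))^2 ≤ (m:ℝ) := by exact_mod_cast hn2m
  have hmpos : (0:ℝ) < (m:ℝ) := by nlinarith
  rw [Real.dist_eq, sub_zero]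
  have hTn2 : |T (n ^ 2)| < ε / 2 * (n:ℝ)^2 := by
    have hn2pos : (0:ℝ) < (n:ℝ)^2 := by positivity
    have habs : |T (n ^ 2)| / (n:ℝ)^2 < ε / 2 := by
      have heq : |T (n ^ 2) / ((n:ℝ)^2)| = |T (n^2)| / (n:ℝ)^2 := by
        rw [abs_div, abs_of_pos hn2pos]
      linarith [heq ▸ hsub]
    calc |T (n^2)| = |T (n^2)| / (n:ℝ)^2 * (n:ℝ)^2 := by field_simp
      _ < ε / 2 * (n:ℝ)^2 := by
          apply mul_lt_mul_of_pos_right habs (by positivity)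
  have h2nK : 2 * (n:ℝ) * K ≤ ε / 2 * (n:ℝ)^2 := by
    have : 6 * K ≤ ε * (n:ℝ) := by
      rw [div_le_iff₀ hε] at hKn; linarith
    nlinarith
  have hTm : |T m| < ε * (m:ℝ) := by
    have : |T m| ≤ |T (n^2)| + 2 * (n:ℝ) * K := by
      have := abs_sub_abs_le_abs_sub (T m) (T (n^2))
      have h4 : |T m - T (n^2)| ≤ 2*(n:ℝ)*K :=
        le_trans hstep (mul_le_mul_of_nonneg_right hcount hK)
      linarith
    calc |T m| ≤ |T (n^2)| + 2*(n:ℝ)*K := this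
      _ < ε/2 * (n:ℝ)^2 + ε/2 * (n:ℝ)^2 := by linarith
      _ = ε * (n:ℝ)^2 := by ring
      _ ≤ ε * m := by nlinarith
  rw [abs_div, abs_of_pos hmpos, div_lt_iff₀ hmpos]
  linarith [abs_nonneg (T m)]

lemma lln_orth {Ω : Type*} [MeasurableSpace Ω] (μ : Measure Ω) [IsProbabilityMeasure μ]
    (Y : ℕ → Ω → ℝ) (K : ℝ) (hK : 0 ≤ K)
    (hmeas : ∀ t, Measurable (Y t))
    (hbd : ∀ t ω, |Y t ω| ≤ K)
    (horth : ∀ s t : ℕ, s < t → ∫ ω, Y s ω * Y t ω ∂μ = 0)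
    (hmean : ∀ t, ∫ ω, Y t ω ∂μ = 0) :
    ∀ᵐ ω ∂μ, Tendsto (fun n : ℕ => (∑ t ∈ Finset.range n, Y t ω) / n) atTop (𝓝 0) := by
  set T : ℕ → Ω → ℝ := fun n ω => ∑ t ∈ Finset.range n, Y t ω with hT
  have hTmeas : ∀ n, Measurable (T n) := fun n =>
    Finset.measurable_sum _ (fun t _ => hmeas t)
  have hTbd : ∀ n ω, |T n ω| ≤ n * K := by
    intro n ω
    calc |T n ω| ≤ ∑ t ∈ Finset.range n, |Y t ω| := Finset.abs_sum_le_sum_abs _ _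
      _ ≤ ∑ t ∈ Finset.range n, K := Finset.sum_le_sum (fun t _ => hbd t ω)
      _ = n * K := by simp [Finset.sum_const, Finset.card_range, nsmul_eq_mul]
  have hYint : ∀ t, Integrable (Y t) μ := fun t =>
    (integrable_const K).mono' (hmeas t).aestronglyMeasurable
      (ae_of_all _ fun ω => by rw [Real.norm_eq_abs]; exact hbd t ω)
  have hprodint : ∀ s t, Integrable (fun ω => Y s ω * Y t ω) μ := fun s t =>
    (integrable_const (K * K)).mono' ((hmeas s).mul (hmeas t)).aestronglyMeasurable
      (ae_of_all _ fun ω => by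
        rw [Real.norm_eq_abs, abs_mul]
        exact mul_le_mul (hbd s ω) (hbd t ω) (abs_nonneg _) hK)
  have hTmean : ∀ n, ∫ ω, T n ω ∂μ = 0 := by
    intro n
    rw [hT]
    simp only []
    rw [integral_finset_sum _ (fun t _ => hYint t)]
    simp [hmean]
  have hTsq : ∀ n, ∫ ω, (T n ω) ^ 2 ∂μ ≤ n * K ^ 2 := by
    intro n
    have hexp : ∀ ω, (T n ω) ^ 2
        = ∑ s ∈ Finset.range n, ∑ t ∈ Finset.range n, Y s ω * Y t ω := by
      intro ω; rw [hT]; simp only []; rw [pow_two, Finset.sum_mul_sum]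
    calc ∫ ω, (T n ω) ^ 2 ∂μ
        = ∑ s ∈ Finset.range n, ∑ t ∈ Finset.range n, ∫ ω, Y s ω * Y t ω ∂μ := by
          simp_rw [hexp]
          rw [integral_finset_sum _
            (fun s _ => integrable_finset_sum _ (fun t _ => hprodint s t))]
          exact Finset.sum_congr rfl fun s _ =>
            integral_finset_sum _ (fun t _ => hprodint s t)
      _ = ∑ s ∈ Finset.range n, ∫ ω, Y s ω * Y s ω ∂μ := by
          refine Finset.sum_congr rfl fun s hs => ?_
          refine Finset.sum_eq_single s (fun t ht hts => ?_) (fun hs' => absurd hs hs')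
          rcases lt_or_gt_of_ne hts with h | h
          · have e : (fun ω => Y s ω * Y t ω) = fun ω => Y t ω * Y s ω := by
              ext ω; ring
            rw [e]
            exact horth t s h
          · exact horth s t h
      _ ≤ ∑ s ∈ Finset.range n, K ^ 2 := by
          refine Finset.sum_le_sum fun s _ => ?_
          have hpt : ∀ ω, Y s ω * Y s ω ≤ K ^ 2 := fun ω => by
            obtain ⟨h1, h2⟩ := abs_le.mp (hbd s ω)
            nlinarith
          calc ∫ ω, Y s ω * Y s ω ∂μ ≤ ∫ _ω, K ^ 2 ∂μ :=
                integral_mono (hprodint s s) (integrable_const _) hpt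
            _ = K ^ 2 := by simp
      _ = n * K ^ 2 := by simp [Finset.sum_const, Finset.card_range, nsmul_eq_mul]
  have hTmem : ∀ n, MemLp (T n) 2 μ := fun n =>
    memLp_of_bounded (ae_of_all _ fun ω => Set.mem_Icc.mpr (abs_le.mp (hTbd n ω)))
      (hTmeas n).aestronglyMeasurable 2
  have hvar : ∀ n, variance (T n) μ ≤ n * K ^ 2 := by
    intro n
    rw [variance_eq_sub (hTmem n)]
    have h1 : μ[T n] = 0 := hTmean n
    have h2 : μ[(T n) ^ 2] = ∫ ω, (T n ω) ^ 2 ∂μ := rfl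
    rw [h1, h2]
    simpa using hTsq n
  -- Chebyshev on the subsequence of squares
  have hcheb : ∀ j n : ℕ,
      μ {ω | ((n : ℝ) + 1) ^ 2 / ((j : ℝ) + 1) ≤ |T ((n + 1) ^ 2) ω|}
        ≤ ENNReal.ofReal (K ^ 2 * ((j : ℝ) + 1) ^ 2 / ((n : ℝ) + 1) ^ 2) := by
    intro j n
    set A : ℝ := (n : ℝ) + 1 with hA
    have hApos : (0 : ℝ) < A := by positivity
    have hJpos : (0 : ℝ) < (j : ℝ) + 1 := by positivity
    have hc : (0 : ℝ) < A ^ 2 / ((j : ℝ) + 1) := by positivity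
    have h := meas_ge_le_variance_div_sq (μ := μ) (hTmem ((n + 1) ^ 2)) hc
    have h0 : μ[T ((n + 1) ^ 2)] = 0 := hTmean _
    rw [h0] at h
    simp only [sub_zero] at h
    refine h.trans (ENNReal.ofReal_le_ofReal ?_)
    have hvar' : variance (T ((n + 1) ^ 2)) μ ≤ A ^ 2 * K ^ 2 := by
      have := hvar ((n + 1) ^ 2)
      have hcast : (((n + 1) ^ 2 : ℕ) : ℝ) = A ^ 2 := by push_cast; ring
      rw [hcast] at this; linarith
    rw [div_le_div_iff₀ (by positivity) (by positivity)]
    have e2 : K ^ 2 * (((j : ℝ) + 1) ^ 2) * ((A ^ 2 / ((j : ℝ) + 1)) ^ 2)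
        = K ^ 2 * A ^ 4 := by field_simp
    calc variance (T ((n + 1) ^ 2)) μ * A ^ 2 ≤ A ^ 2 * K ^ 2 * A ^ 2 :=
          mul_le_mul_of_nonneg_right hvar' (sq_nonneg A)
      _ = K ^ 2 * A ^ 4 := by ring
      _ = K ^ 2 * (((j : ℝ) + 1) ^ 2) * ((A ^ 2 / ((j : ℝ) + 1)) ^ 2) := e2.symm
      _ = K ^ 2 * ((j : ℝ) + 1) ^ 2 * (A ^ 2 / ((j : ℝ) + 1)) ^ 2 := by ring
  have hsum : ∀ j : ℕ,
      (∑' n : ℕ, μ {ω | ((n : ℝ) + 1) ^ 2 / ((j : ℝ) + 1) ≤ |T ((n + 1) ^ 2) ω|}) ≠ ⊤ := by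
    intro j
    have h1 : Summable (fun n : ℕ => 1 / ((n : ℝ) + 1) ^ 2) := by
      have h2 : Summable (fun n : ℕ => 1 / ((n : ℝ)) ^ 2) :=
        summable_one_div_nat_pow.mpr one_lt_two
      have h3 := (summable_nat_add_iff 1).mpr h2
      exact h3.congr fun n => by push_cast; ring
    have hs : Summable (fun n : ℕ => K ^ 2 * ((j : ℝ) + 1) ^ 2 / ((n : ℝ) + 1) ^ 2) :=
      (h1.mul_left (K ^ 2 * ((j : ℝ) + 1) ^ 2)).congr fun n => by rw [mul_one_div]
    have hle : (∑' n : ℕ, μ {ω | ((n : ℝ) + 1) ^ 2 / ((j : ℝ) + 1) ≤ |T ((n + 1) ^ 2) ω|})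
        ≤ ENNReal.ofReal (∑' n : ℕ, K ^ 2 * ((j : ℝ) + 1) ^ 2 / ((n : ℝ) + 1) ^ 2) := by
      rw [ENNReal.ofReal_tsum_of_nonneg (fun n => by positivity) hs]
      exact ENNReal.tsum_le_tsum (fun n => hcheb j n)
    exact ne_top_of_le_ne_top ENNReal.ofReal_ne_top hle
  have hBC : ∀ᵐ ω ∂μ, ∀ j : ℕ, ∀ᶠ n : ℕ in atTop,
      ω ∉ {ω | ((n : ℝ) + 1) ^ 2 / ((j : ℝ) + 1) ≤ |T ((n + 1) ^ 2) ω|} :=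
    ae_all_iff.mpr fun j => ae_eventually_notMem (hsum j)
  filter_upwards [hBC] with ω hω
  have hsubseq : Tendsto (fun n : ℕ => T (n ^ 2) ω / ((n : ℝ) ^ 2)) atTop (𝓝 0) := by
    rw [Metric.tendsto_atTop]
    intro ε hε
    obtain ⟨j, hj⟩ := exists_nat_one_div_lt hε
    obtain ⟨N, hN⟩ := eventually_atTop.mp (hω j)
    refine ⟨N + 1, fun m hm => ?_⟩
    have hm1 : 1 ≤ m := le_trans (Nat.le_add_left 1 N) hm
    have hmN : N ≤ m - 1 := by omega
    have h := hN (m - 1) hmN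
    simp only [Set.mem_setOf_eq, not_le] at h
    have hmm : m - 1 + 1 = m := by omega
    rw [hmm] at h
    have hcast : ((m - 1 : ℕ) : ℝ) + 1 = (m : ℝ) := by
      rw [Nat.cast_sub hm1]; push_cast; ring
    rw [hcast] at h
    have hmpos : (0 : ℝ) < (m : ℝ) := by exact_mod_cast hm1
    have hm2pos : (0 : ℝ) < (m : ℝ) ^ 2 := by positivity
    rw [Real.dist_eq, sub_zero, abs_div, abs_of_pos hm2pos, div_lt_iff₀ hm2pos]
    have hjpos : (0 : ℝ) < (j : ℝ) + 1 := by positivity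
    calc |T (m ^ 2) ω| < (m : ℝ) ^ 2 / ((j : ℝ) + 1) := h
      _ = 1 / ((j : ℝ) + 1) * (m : ℝ) ^ 2 := by ring
      _ < ε * (m : ℝ) ^ 2 := by
          exact mul_lt_mul_of_pos_right hj hm2pos
  have hinc : ∀ n : ℕ, |T (n + 1) ω - T n ω| ≤ K := by
    intro n
    have : T (n + 1) ω - T n ω = Y n ω := by
      rw [hT]; simp [Finset.sum_range_succ]
    rw [this]; exact hbd n ω
  exact tendsto_div_of_sq (fun n => T n ω) K hK hinc hsubseq

lemma inv_step {Ω : Type*} (M S0 : ℝ) (hM : 0 ≤ M) (B N A : ℕ → Ω → ℝ) (t : ℕ) (ω : Ω) :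
    inv M S0 B N A (t + 1) ω
      = inv M S0 B N A t ω + (B t ω - N t ω * A t ω)
        - ovf M S0 B N A t ω + sko M S0 B N A t ω ∧
    (inv M S0 B N A (t + 1) ω) ^ 2
      = (inv M S0 B N A t ω) ^ 2
        + 2 * (inv M S0 B N A t ω * (B t ω - N t ω * A t ω))
        + (B t ω - N t ω * A t ω) ^ 2 - 2 * M * ovf M S0 B N A t ω
        - (ovf M S0 B N A t ω) ^ 2 - (sko M S0 B N A t ω) ^ 2 := by
  set u := inv M S0 B N A t ω + B t ω - N t ω * A t ω with hu
  have h1 : inv M S0 B N A (t + 1) ω = clamp M u := rfl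
  have h2 : ovf M S0 B N A t ω = max (u - M) 0 := rfl
  have h3 : sko M S0 B N A t ω = max (-u) 0 := rfl
  refine ⟨?_, ?_⟩
  · rw [h1, h2, h3, clamp_eq M u hM]; rw [hu]; ring
  · rw [h1, h2, h3, clamp_sq M u hM]; rw [hu]; ring

lemma inv_mem {Ω : Type*} (M S0 : ℝ) (hM : 0 ≤ M) (hS0 : S0 ∈ Set.Icc (0:ℝ) M)
    (B N A : ℕ → Ω → ℝ) (t : ℕ) (ω : Ω) :
    inv M S0 B N A t ω ∈ Set.Icc (0:ℝ) M := by
  cases t with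
  | zero => exact hS0
  | succ t => exact ⟨clamp_nonneg _ _ hM, clamp_le _ _⟩

lemma pathwise (M K σ2 : ℝ) (S W V x : ℕ → ℝ)
    (hM : 0 < M) (hK : 0 ≤ K) (hMK : K ≤ M) (hσ : 0 < σ2)
    (hS : ∀ t, S t ∈ Set.Icc 0 M)
    (hW0 : ∀ t, 0 ≤ W t) (hWK : ∀ t, W t ≤ K)
    (hV0 : ∀ t, 0 ≤ V t) (hVK : ∀ t, V t ≤ K)
    (hstep1 : ∀ t, S (t + 1) = S t + (x t - W t + V t))
    (hstep2 : ∀ t, (S (t + 1)) ^ 2 = (S t) ^ 2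
      + (2 * (S t * x t) + (x t) ^ 2 - 2 * M * (W t) - (W t) ^ 2 - (V t) ^ 2))
    (h1 : Tendsto (fun n : ℕ => (∑ t ∈ Finset.range n, x t) / n) atTop (𝓝 0))
    (h2 : Tendsto (fun n : ℕ => (∑ t ∈ Finset.range n, ((x t) ^ 2 - σ2)) / n) atTop (𝓝 0))
    (h3 : Tendsto (fun n : ℕ => (∑ t ∈ Finset.range n, S t * x t) / n) atTop (𝓝 0)) :
    σ2 / (2 * (M + K)) ≤ limsup (fun n : ℕ => (∑ t ∈ Finset.range n, W t) / n) atTop ∧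
    limsup (fun n : ℕ => (∑ t ∈ Finset.range n, W t) / n) atTop ≤ σ2 / (2 * M) ∧
    σ2 / (2 * (M + K)) ≤ limsup (fun n : ℕ => (∑ t ∈ Finset.range n, V t) / n) atTop ∧
    limsup (fun n : ℕ => (∑ t ∈ Finset.range n, V t) / n) atTop ≤ σ2 / (2 * M) := by
  have hkey : ∀ n : ℕ,
      2 * M * (∑ t ∈ Finset.range n, W t)
        + (∑ t ∈ Finset.range n, ((W t) ^ 2 + (V t) ^ 2))
      = 2 * (∑ t ∈ Finset.range n, S t * x t) + (∑ t ∈ Finset.range n, (x t) ^ 2)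
        + (S 0) ^ 2 - (S n) ^ 2 := by
    intro n
    induction n with
    | zero => simp
    | succ n ih =>
        simp only [Finset.sum_range_succ]
        have h := hstep2 n
        linarith
  have hsum1 : ∀ n : ℕ,
      (∑ t ∈ Finset.range n, W t) - (∑ t ∈ Finset.range n, V t)
        = (∑ t ∈ Finset.range n, x t) - (S n - S 0) := by
    intro n
    induction n with
    | zero => simp
    | succ n ih =>
        simp only [Finset.sum_range_succ]
        have h := hstep1 n
        linarith
  have hSQ : ∀ n : ℕ, (∑ t ∈ Finset.range n, ((W t) ^ 2 + (V t) ^ 2))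
      ≤ K * ((∑ t ∈ Finset.range n, W t) + (∑ t ∈ Finset.range n, V t)) := by
    intro n
    calc (∑ t ∈ Finset.range n, ((W t) ^ 2 + (V t) ^ 2))
        ≤ ∑ t ∈ Finset.range n, (K * W t + K * V t) :=
          Finset.sum_le_sum (fun t _ => by nlinarith [hW0 t, hWK t, hV0 t, hVK t])
      _ = K * (∑ t ∈ Finset.range n, W t) + K * (∑ t ∈ Finset.range n, V t) := by
          rw [Finset.sum_add_distrib, ← Finset.mul_sum, ← Finset.mul_sum]
      _ = K * ((∑ t ∈ Finset.range n, W t) + (∑ t ∈ Finset.range n, V t)) := by ring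
  have hSQ0 : ∀ n : ℕ, 0 ≤ (∑ t ∈ Finset.range n, ((W t) ^ 2 + (V t) ^ 2)) :=
    fun n => Finset.sum_nonneg fun t _ => by positivity
  -- limits of error terms
  have htendS : Tendsto (fun n : ℕ => ((S 0) ^ 2 - (S n) ^ 2) / n) atTop (𝓝 0) := by
    apply squeeze_zero_norm (a := fun n : ℕ => M ^ 2 / n)
      ?_ (tendsto_const_div_atTop_nhds_zero_nat (M ^ 2))
    intro n
    rcases Nat.eq_zero_or_pos n with hn | hn
    · subst hn; simp
    · have hnp : (0 : ℝ) < n := by exact_mod_cast hn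
      have hb : |(S 0) ^ 2 - (S n) ^ 2| ≤ M ^ 2 := by
        obtain ⟨ha1, ha2⟩ := hS 0
        obtain ⟨hb1, hb2⟩ := hS n
        rw [abs_le]; constructor <;> nlinarith
      rw [Real.norm_eq_abs, abs_div, abs_of_pos hnp]
      exact div_le_div_of_nonneg_right hb hnp.le
  have htendS1 : Tendsto (fun n : ℕ => (S n - S 0) / n) atTop (𝓝 0) := by
    apply squeeze_zero_norm (a := fun n : ℕ => M / n)
      ?_ (tendsto_const_div_atTop_nhds_zero_nat M)
    intro n
    rcases Nat.eq_zero_or_pos n with hn | hn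
    · subst hn; simp
    · have hnp : (0 : ℝ) < n := by exact_mod_cast hn
      have hb : |S n - S 0| ≤ M := by
        obtain ⟨ha1, ha2⟩ := hS 0
        obtain ⟨hb1, hb2⟩ := hS n
        rw [abs_le]; constructor <;> linarith
      rw [Real.norm_eq_abs, abs_div, abs_of_pos hnp]
      exact div_le_div_of_nonneg_right hb hnp.le
  set e : ℕ → ℝ := fun n => (2 * (∑ t ∈ Finset.range n, S t * x t)
      + (∑ t ∈ Finset.range n, (x t) ^ 2) + (S 0) ^ 2 - (S n) ^ 2) / n with hedef
  set d : ℕ → ℝ := fun n => (∑ t ∈ Finset.range n, x t) / n - (S n - S 0) / n with hddef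
  have hsplit : ∀ n : ℕ, (∑ t ∈ Finset.range n, ((x t) ^ 2 - σ2))
      = (∑ t ∈ Finset.range n, (x t) ^ 2) - n * σ2 := by
    intro n
    rw [Finset.sum_sub_distrib, Finset.sum_const, Finset.card_range, nsmul_eq_mul]
  have htende : Tendsto e atTop (𝓝 σ2) := by
    have hcomp : Tendsto (fun n : ℕ => (2 * ((∑ t ∈ Finset.range n, S t * x t) / n)
        + ((∑ t ∈ Finset.range n, ((x t) ^ 2 - σ2)) / n)
        + (((S 0) ^ 2 - (S n) ^ 2) / n)) + σ2) atTop (𝓝 ((2 * 0 + 0 + 0) + σ2)) :=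
      (((h3.const_mul 2).add h2).add htendS).add_const σ2
    have hev : (fun n : ℕ => (2 * ((∑ t ∈ Finset.range n, S t * x t) / n)
        + ((∑ t ∈ Finset.range n, ((x t) ^ 2 - σ2)) / n)
        + (((S 0) ^ 2 - (S n) ^ 2) / n)) + σ2) =ᶠ[atTop] e := by
      filter_upwards [eventually_ge_atTop 1] with n hn
      have hn0 : (n : ℝ) ≠ 0 := by
        have : (0:ℝ) < n := by exact_mod_cast hn
        exact this.ne'
      simp only [hedef]
      rw [hsplit n]
      field_simp
      ring
    exact Tendsto.congr' hev (by simpa using hcomp)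
  have htendd : Tendsto d atTop (𝓝 0) := by
    have := h1.sub htendS1
    simpa using this
  -- boundedness of the averages
  have haW0 : ∀ n : ℕ, 0 ≤ (∑ t ∈ Finset.range n, W t) / n :=
    fun n => div_nonneg (Finset.sum_nonneg fun t _ => hW0 t) (Nat.cast_nonneg n)
  have haV0 : ∀ n : ℕ, 0 ≤ (∑ t ∈ Finset.range n, V t) / n :=
    fun n => div_nonneg (Finset.sum_nonneg fun t _ => hV0 t) (Nat.cast_nonneg n)
  have hsumb : ∀ (f : ℕ → ℝ), (∀ t, f t ≤ K) → ∀ n : ℕ,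
      (∑ t ∈ Finset.range n, f t) / n ≤ K := by
    intro f hf n
    rcases Nat.eq_zero_or_pos n with hn | hn
    · subst hn; simpa using hK
    · have hnp : (0 : ℝ) < n := by exact_mod_cast hn
      rw [div_le_iff₀ hnp]
      calc (∑ t ∈ Finset.range n, f t) ≤ ∑ _t ∈ Finset.range n, K :=
            Finset.sum_le_sum fun t _ => hf t
        _ = K * n := by simp [mul_comm]
  have haWK : ∀ n : ℕ, (∑ t ∈ Finset.range n, W t) / n ≤ K := hsumb W hWK
  have haVK : ∀ n : ℕ, (∑ t ∈ Finset.range n, V t) / n ≤ K := hsumb V hVK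
  -- main eventual inequalities
  have h2M : (0 : ℝ) < 2 * M := by linarith
  have h2MK : (0 : ℝ) < 2 * M + 2 * K := by linarith
  have hup : ∀ᶠ n : ℕ in atTop, (∑ t ∈ Finset.range n, W t) / n ≤ e n / (2 * M) := by
    filter_upwards [eventually_ge_atTop 1] with n hn
    have hnp : (0 : ℝ) < n := by exact_mod_cast hn
    have hen : e n * n = 2 * (∑ t ∈ Finset.range n, S t * x t)
        + (∑ t ∈ Finset.range n, (x t) ^ 2) + (S 0) ^ 2 - (S n) ^ 2 := by
      simp only [hedef]
      field_simp
    rw [div_le_div_iff₀ hnp h2M]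
    have := hkey n
    have := hSQ0 n
    linarith [hen]
  have hlo : ∀ᶠ n : ℕ in atTop,
      (e n + K * d n) / (2 * M + 2 * K) ≤ (∑ t ∈ Finset.range n, W t) / n := by
    filter_upwards [eventually_ge_atTop 1] with n hn
    have hnp : (0 : ℝ) < n := by exact_mod_cast hn
    have hen : e n * n = 2 * (∑ t ∈ Finset.range n, S t * x t)
        + (∑ t ∈ Finset.range n, (x t) ^ 2) + (S 0) ^ 2 - (S n) ^ 2 := by
      simp only [hedef]; field_simp
    have hdn : d n * n = (∑ t ∈ Finset.range n, x t) - (S n - S 0) := by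
      simp only [hddef]; field_simp
    rw [div_le_div_iff₀ h2MK hnp]
    have hk := hkey n
    have hq := hSQ n
    have hs1 := hsum1 n
    -- SV = SW - d n * n ; SQ ≤ K (2 SW - d n * n)
    nlinarith [hen, hdn]
  have hVev : ∀ᶠ n : ℕ in atTop,
      (∑ t ∈ Finset.range n, V t) / n = (∑ t ∈ Finset.range n, W t) / n - d n := by
    filter_upwards [eventually_ge_atTop 1] with n hn
    have hnp : (0 : ℝ) < n := by exact_mod_cast hn
    have hs1 := hsum1 n
    have hn0 : (n : ℝ) ≠ 0 := hnp.ne'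
    simp only [hddef]
    field_simp
    linarith
  -- limsup bounds for W
  have hgU : Tendsto (fun n : ℕ => e n / (2 * M)) atTop (𝓝 (σ2 / (2 * M))) :=
    htende.div_const _
  have hgL : Tendsto (fun n : ℕ => (e n + K * d n) / (2 * M + 2 * K)) atTop
      (𝓝 (σ2 / (2 * M + 2 * K))) := by
    have := (htende.add (htendd.const_mul K)).div_const (2 * M + 2 * K)
    simpa using this
  have hcobW : IsCoboundedUnder (· ≤ ·) atTop (fun n : ℕ => (∑ t ∈ Finset.range n, W t) / n) :=
    isCoboundedUnder_le_of_eventually_le atTop (x := 0) (Eventually.of_forall haW0)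
  have hbddW : IsBoundedUnder (· ≤ ·) atTop (fun n : ℕ => (∑ t ∈ Finset.range n, W t) / n) :=
    isBoundedUnder_of ⟨K, haWK⟩
  have hWup : limsup (fun n : ℕ => (∑ t ∈ Finset.range n, W t) / n) atTop ≤ σ2 / (2 * M) :=
    le_trans (limsup_le_limsup hup hcobW hgU.isBoundedUnder_le) (le_of_eq hgU.limsup_eq)
  have hWlo : σ2 / (2 * (M + K))
      ≤ limsup (fun n : ℕ => (∑ t ∈ Finset.range n, W t) / n) atTop := by
    have heq : σ2 / (2 * (M + K)) = σ2 / (2 * M + 2 * K) := by ring_nf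
    rw [heq]
    refine le_trans (le_of_eq hgL.limsup_eq.symm)
      (limsup_le_limsup hlo ?_ hbddW)
    exact hgL.isBoundedUnder_ge.isCoboundedUnder_le
  -- limsup bounds for V
  have hcobV : IsCoboundedUnder (· ≤ ·) atTop (fun n : ℕ => (∑ t ∈ Finset.range n, V t) / n) :=
    isCoboundedUnder_le_of_eventually_le atTop (x := 0) (Eventually.of_forall haV0)
  have hbddV : IsBoundedUnder (· ≤ ·) atTop (fun n : ℕ => (∑ t ∈ Finset.range n, V t) / n) :=
    isBoundedUnder_of ⟨K, haVK⟩
  have hgU' : Tendsto (fun n : ℕ => e n / (2 * M) - d n) atTop (𝓝 (σ2 / (2 * M))) := by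
    have := hgU.sub htendd
    simpa using this
  have hgL' : Tendsto (fun n : ℕ => (e n + K * d n) / (2 * M + 2 * K) - d n) atTop
      (𝓝 (σ2 / (2 * M + 2 * K))) := by
    have := hgL.sub htendd
    simpa using this
  have hupV : ∀ᶠ n : ℕ in atTop,
      (∑ t ∈ Finset.range n, V t) / n ≤ e n / (2 * M) - d n := by
    filter_upwards [hVev, hup] with n he hu
    rw [he]
    linarith
  have hloV : ∀ᶠ n : ℕ in atTop,
      (e n + K * d n) / (2 * M + 2 * K) - d n ≤ (∑ t ∈ Finset.range n, V t) / n := by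
    filter_upwards [hVev, hlo] with n he hl
    rw [he]
    linarith
  have hVup : limsup (fun n : ℕ => (∑ t ∈ Finset.range n, V t) / n) atTop ≤ σ2 / (2 * M) :=
    le_trans (limsup_le_limsup hupV hcobV hgU'.isBoundedUnder_le) (le_of_eq hgU'.limsup_eq)
  have hVlo : σ2 / (2 * (M + K))
      ≤ limsup (fun n : ℕ => (∑ t ∈ Finset.range n, V t) / n) atTop := by
    have heq : σ2 / (2 * (M + K)) = σ2 / (2 * M + 2 * K) := by ring_nf
    rw [heq]
    refine le_trans (le_of_eq hgL'.limsup_eq.symm)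
      (limsup_le_limsup hloV ?_ hbddV)
    exact hgL'.isBoundedUnder_ge.isCoboundedUnder_le
  exact ⟨hWlo, hWup, hVlo, hVup⟩

/-- Theorem 2 of the paper. The static (proportional) policy that allocates
`α* = μ_B/μ_N` in every round satisfies, for all large enough capacities `M`, almost surely
`c/M ≤ W̄ ≤ C/M` and `c/M ≤ V̄ ≤ C/M`, where the constants `0 < c ≤ C < ∞` and `M₀` depend
only on the distributions of `B₁, N₁` and not on `M`.  In particular, for any per-unit costs
`h, b > 0`, the inefficiency `h·W̄ + b·V̄` is `Θ(1/M)` as `M → ∞`. -/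
theorem stmt_2
    {Ω : Type*} [MeasurableSpace Ω] (μ : Measure Ω) [IsProbabilityMeasure μ]
    (Bmax Amax : ℝ) (Nmax : ℕ) (B N : ℕ → Ω → ℝ)
    (hBN : IsIIDPair μ B N)
    (hBrange : ∀ t ω, B t ω ∈ Set.Icc 0 Bmax)
    (hNrange : NatValued N Nmax)
    (hμB : 0 < ∫ ω, B 0 ω ∂μ) (hVarB : 0 < variance (B 0) μ)
    (hμN : 0 < ∫ ω, N 0 ω ∂μ)
    (αstar : ℝ) (hαdef : αstar = (∫ ω, B 0 ω ∂μ) / ∫ ω, N 0 ω ∂μ)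
    (hαA : αstar ≤ Amax) :
    ∃ c C M₀ : ℝ, 0 < c ∧ c ≤ C ∧ 0 < M₀ ∧
      ∀ M, M₀ ≤ M → ∀ S0 ∈ Set.Icc (0 : ℝ) M,
        ∀ᵐ ω ∂μ,
          (c / M ≤ Wbar M S0 B N (fun _ _ => αstar) ω ∧
            Wbar M S0 B N (fun _ _ => αstar) ω ≤ C / M) ∧
          (c / M ≤ Vbar M S0 B N (fun _ _ => αstar) ω ∧
            Vbar M S0 B N (fun _ _ => αstar) ω ≤ C / M) ∧
          ∀ h b : ℝ, 0 < h → 0 < b →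
            (h + b) * c / M ≤
                h * Wbar M S0 B N (fun _ _ => αstar) ω +
                  b * Vbar M S0 B N (fun _ _ => αstar) ω ∧
              h * Wbar M S0 B N (fun _ _ => αstar) ω +
                  b * Vbar M S0 B N (fun _ _ => αstar) ω ≤ (h + b) * C / M := by
  obtain ⟨hBmeas, hNmeas, hPairIndep, hPairIdent, hBNindep⟩ := hBN
  -- nonemptiness and basic positivity
  have hne : Nonempty Ω := by
    by_contra hc
    rw [not_nonempty_iff] at hc
    have h1 : μ Set.univ = 1 := measure_univ
    rw [Set.univ_eq_empty_iff.mpr hc, measure_empty] at h1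
    exact zero_ne_one h1
  obtain ⟨ω₀⟩ := hne
  have hα : 0 < αstar := hαdef ▸ div_pos hμB hμN
  have hB0 : ∀ t ω, 0 ≤ B t ω := fun t ω => (hBrange t ω).1
  have hBmax : ∀ t ω, B t ω ≤ Bmax := fun t ω => (hBrange t ω).2
  have hBmax0 : 0 ≤ Bmax := le_trans (hB0 0 ω₀) (hBmax 0 ω₀)
  have hN0 : ∀ t ω, 0 ≤ N t ω := by
    intro t ω; obtain ⟨k, _, he⟩ := hNrange t ω; rw [he]; positivity
  have hNmax : ∀ t ω, N t ω ≤ (Nmax : ℝ) := by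
    intro t ω; obtain ⟨k, hk, he⟩ := hNrange t ω; rw [he]; exact_mod_cast hk
  set K : ℝ := Bmax + (Nmax : ℝ) * αstar with hKdef
  have hK0 : 0 ≤ K := by positivity
  -- the centered increment
  set X : ℕ → Ω → ℝ := fun t ω => B t ω - N t ω * αstar with hXdef
  have hXmeas : ∀ t, Measurable (X t) := fun t =>
    (hBmeas t).sub ((hNmeas t).mul_const αstar)
  have hXbd : ∀ t ω, |X t ω| ≤ K := by
    intro t ω
    rw [abs_le]
    constructor
    · have h1 := hBmax t ω; have h2 := hNmax t ω; have h3 := hB0 t ω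
      have h4 : N t ω * αstar ≤ (Nmax : ℝ) * αstar :=
        mul_le_mul_of_nonneg_right h2 hα.le
      simp only [hXdef]; nlinarith
    · have h1 := hBmax t ω; have h2 := hN0 t ω
      have h3 : 0 ≤ N t ω * αstar := mul_nonneg h2 hα.le
      simp only [hXdef]; nlinarith [mul_nonneg (Nat.cast_nonneg Nmax : (0:ℝ) ≤ Nmax) hα.le]
  -- integrability helpers
  have hint_of_bd : ∀ (f : Ω → ℝ) (c : ℝ), Measurable f → (∀ ω, |f ω| ≤ c) →
      Integrable f μ := fun f c hf hbd =>
    (integrable_const c).mono' hf.aestronglyMeasurable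
      (ae_of_all _ fun ω => by rw [Real.norm_eq_abs]; exact hbd ω)
  have hBint : ∀ t, Integrable (B t) μ := fun t =>
    hint_of_bd _ Bmax (hBmeas t) (fun ω => abs_le.mpr ⟨by linarith [hB0 t ω], hBmax t ω⟩)
  have hNint : ∀ t, Integrable (N t) μ := fun t =>
    hint_of_bd _ (Nmax : ℝ) (hNmeas t) (fun ω => abs_le.mpr
      ⟨by have := hN0 t ω; have : (0:ℝ) ≤ (Nmax:ℝ) := Nat.cast_nonneg _; linarith [hN0 t ω], hNmax t ω⟩)
  have hXint : ∀ t, Integrable (X t) μ := fun t => hint_of_bd _ K (hXmeas t) (hXbd t)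
  have hX2int : ∀ t, Integrable (fun ω => (X t ω) ^ 2) μ := fun t =>
    hint_of_bd _ (K ^ 2) ((hXmeas t).pow_const 2) (fun ω => by
      rw [abs_of_nonneg (sq_nonneg _)]
      have h1 := hXbd t ω
      nlinarith [abs_nonneg (X t ω), sq_abs (X t ω)])
  -- mean of X is 0
  have hmX0 : ∫ ω, X 0 ω ∂μ = 0 := by
    simp only [hXdef]
    rw [integral_sub (hBint 0) ((hNint 0).mul_const αstar), integral_mul_const]
    rw [hαdef]
    field_simp; ring
  have hgm : Measurable (fun p : ℝ × ℝ => p.1 - p.2 * αstar) :=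
    measurable_fst.sub (measurable_snd.mul_const αstar)
  have hXident : ∀ t, IdentDistrib (X t) (X 0) μ μ := fun t => (hPairIdent t).comp hgm
  have hmXt : ∀ t, ∫ ω, X t ω ∂μ = 0 := fun t => by
    rw [show (∫ ω, X t ω ∂μ) = ∫ ω, X 0 ω ∂μ from (hXident t).integral_eq, hmX0]
  -- second moment
  set σ2 : ℝ := ∫ ω, (X 0 ω) ^ 2 ∂μ with hσ2def
  have hXmem : ∀ t, MemLp (X t) 2 μ := fun t =>
    memLp_of_bounded (ae_of_all _ fun ω => Set.mem_Icc.mpr (abs_le.mp (hXbd t ω)))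
      (hXmeas t).aestronglyMeasurable 2
  have hσ2var : σ2 = variance (X 0) μ := by
    rw [variance_eq_sub (hXmem 0)]
    have h1 : μ[X 0] = 0 := hmX0
    have h2 : μ[(X 0) ^ 2] = σ2 := rfl
    rw [h1, h2]; ring
  have hσpos : 0 < σ2 := by
    rw [hσ2var]
    have hdec : X 0 = B 0 + (-αstar) • (N 0) := by
      funext ω; simp only [hXdef, Pi.add_apply, Pi.smul_apply, smul_eq_mul]; ring
    have hBmem : MemLp (B 0) 2 μ :=
      memLp_of_bounded (ae_of_all _ fun ω => hBrange 0 ω)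
        (hBmeas 0).aestronglyMeasurable 2
    have hNmem : MemLp ((-αstar) • (N 0)) 2 μ := by
      refine MemLp.of_bound ?_ (αstar * (Nmax : ℝ)) (ae_of_all _ fun ω => ?_)
      · exact ((hNmeas 0).const_smul (-αstar)).aestronglyMeasurable
      · simp only [Pi.smul_apply, smul_eq_mul, Real.norm_eq_abs, abs_mul, abs_neg,
          abs_of_pos hα]
        rw [abs_of_nonneg (hN0 0 ω)]
        exact mul_le_mul_of_nonneg_left (hNmax 0 ω) hα.le
    have hind : IndepFun (B 0) ((-αstar) • (N 0)) μ :=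
      (hBNindep 0).comp measurable_id (measurable_id.const_mul (-αstar))
    rw [hdec, hind.variance_add hBmem hNmem, variance_smul]
    nlinarith [variance_nonneg (N 0) μ, hVarB]
  have hX2ident : ∀ t, IdentDistrib (fun ω => (X t ω) ^ 2) (fun ω => (X 0 ω) ^ 2) μ μ :=
    fun t => (hXident t).comp (measurable_id.pow_const 2)
  have hmX2 : ∀ t, ∫ ω, (X t ω) ^ 2 ∂μ = σ2 := fun t => (hX2ident t).integral_eq
  have hσ2K : σ2 ≤ K ^ 2 := by
    have h1 : ∀ ω, (X 0 ω) ^ 2 ≤ K ^ 2 := fun ω => by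
      have := hXbd 0 ω; nlinarith [abs_nonneg (X 0 ω), sq_abs (X 0 ω)]
    calc σ2 = ∫ ω, (X 0 ω) ^ 2 ∂μ := rfl
      _ ≤ ∫ _ω, K ^ 2 ∂μ := integral_mono (hX2int 0) (integrable_const _) h1
      _ = K ^ 2 := by simp
  have hσ2nn : 0 ≤ σ2 := hσpos.le
  -- independence machinery
  set P : ℕ → Ω → ℝ × ℝ := fun t ω => (B t ω, N t ω) with hPdef
  have hPmeas : ∀ t, Measurable (P t) := fun t => (hBmeas t).prodMk (hNmeas t)
  set mF : ℕ → MeasurableSpace Ω := fun i => MeasurableSpace.comap (P i) inferInstance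
    with hmFdef
  have hle : ∀ i, mF i ≤ _ := fun i => (hPmeas i).comap_le
  have hiI : iIndep mF μ := hPairIndep.iIndep
  have hIndepLT : ∀ t : ℕ, Indep (⨆ i ∈ {i : ℕ | i < t}, mF i) (mF t) μ := by
    intro t
    have hdisj : Disjoint {i : ℕ | i < t} ({t} : Set ℕ) := by
      rw [Set.disjoint_singleton_right]
      simp
    have h := indep_iSup_of_disjoint hle hiI hdisj
    simpa using h
  have hPm : ∀ t, Measurable[mF t] (P t) := fun t => Measurable.of_comap_le le_rfl
  have hBm : ∀ t, Measurable[mF t] (B t) := fun t => measurable_fst.comp (hPm t)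
  have hNm : ∀ t, Measurable[mF t] (N t) := fun t => measurable_snd.comp (hPm t)
  have hBlt : ∀ s t : ℕ, s < t → Measurable[⨆ i ∈ {i : ℕ | i < t}, mF i] (B s) :=
    fun s t hst => (hBm s).mono (le_iSup₂ (f := fun i (_ : i ∈ {i : ℕ | i < t}) => mF i) s hst) le_rfl
  have hNlt : ∀ s t : ℕ, s < t → Measurable[⨆ i ∈ {i : ℕ | i < t}, mF i] (N s) :=
    fun s t hst => (hNm s).mono (le_iSup₂ (f := fun i (_ : i ∈ {i : ℕ | i < t}) => mF i) s hst) le_rfl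
  have hXlt : ∀ s t : ℕ, s < t → Measurable[⨆ i ∈ {i : ℕ | i < t}, mF i] (X s) :=
    fun s t hst => ((hBlt s t hst).sub ((hNlt s t hst).mul_const αstar))
  have hindepXt : ∀ (t : ℕ) (F : Ω → ℝ),
      Measurable[⨆ i ∈ {i : ℕ | i < t}, mF i] F → IndepFun F (X t) μ := by
    intro t F hF
    rw [IndepFun_iff_Indep]
    refine indep_of_indep_of_le_left (indep_of_indep_of_le_right (hIndepLT t) ?_) ?_
    · have h1 : Measurable[mF t] (X t) := (hBm t).sub ((hNm t).mul_const αstar)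
      exact h1.comap_le
    · exact hF.comap_le
  -- strong law for X
  have horthX : ∀ s t : ℕ, s < t → ∫ ω, X s ω * X t ω ∂μ = 0 := by
    intro s t hst
    have hind := hindepXt t (X s) (hXlt s t hst)
    have h := hind.integral_mul_eq_mul_integral (hXmeas s).aestronglyMeasurable (hXmeas t).aestronglyMeasurable
    calc ∫ ω, X s ω * X t ω ∂μ = integral μ (X s * X t) := rfl
      _ = integral μ (X s) * integral μ (X t) := h
      _ = 0 := by rw [hmXt s, hmXt t]; ring
  have hL1 : ∀ᵐ ω ∂μ, Tendsto (fun n : ℕ => (∑ t ∈ Finset.range n, X t ω) / n)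
      atTop (𝓝 0) := lln_orth μ X K hK0 hXmeas hXbd horthX hmXt
  -- strong law for X² - σ²
  set Z : ℕ → Ω → ℝ := fun t ω => (X t ω) ^ 2 - σ2 with hZdef
  have hZmeas : ∀ t, Measurable (Z t) := fun t => ((hXmeas t).pow_const 2).sub measurable_const
  have hZbd : ∀ t ω, |Z t ω| ≤ K ^ 2 + σ2 := by
    intro t ω
    rw [abs_le]
    have h1 : (X t ω) ^ 2 ≤ K ^ 2 := by
      have := hXbd t ω; nlinarith [abs_nonneg (X t ω), sq_abs (X t ω)]
    have h2 : 0 ≤ (X t ω) ^ 2 := sq_nonneg _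
    constructor <;> simp only [hZdef] <;> nlinarith
  have hmZ : ∀ t, ∫ ω, Z t ω ∂μ = 0 := by
    intro t
    simp only [hZdef]
    rw [integral_sub (hX2int t) (integrable_const σ2), hmX2 t, integral_const]
    simp
  have hZlt : ∀ s t : ℕ, s < t → Measurable[⨆ i ∈ {i : ℕ | i < t}, mF i] (Z s) :=
    fun s t hst => (((hXlt s t hst).pow_const 2).sub measurable_const)
  have horthZ : ∀ s t : ℕ, s < t → ∫ ω, Z s ω * Z t ω ∂μ = 0 := by
    intro s t hst
    have hφ : Measurable (fun y : ℝ => y ^ 2 - σ2) := (measurable_id.pow_const 2).sub measurable_const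
    have hind : IndepFun (Z s) (Z t) μ :=
      (hindepXt t (Z s) (hZlt s t hst)).comp measurable_id hφ
    have h := hind.integral_mul_eq_mul_integral (hZmeas s).aestronglyMeasurable (hZmeas t).aestronglyMeasurable
    calc ∫ ω, Z s ω * Z t ω ∂μ = integral μ (Z s * Z t) := rfl
      _ = integral μ (Z s) * integral μ (Z t) := h
      _ = 0 := by rw [show integral μ (Z s) = 0 from hmZ s]; ring
  have hL2 : ∀ᵐ ω ∂μ, Tendsto (fun n : ℕ => (∑ t ∈ Finset.range n, Z t ω) / n)
      atTop (𝓝 0) :=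
    lln_orth μ Z (K ^ 2 + σ2) (by positivity) hZmeas hZbd horthZ hmZ
  -- choose constants
  refine ⟨σ2 / 4, σ2 / 2, K + 1, by positivity, by linarith, by positivity, ?_⟩
  intro M hM S0 hS0
  have hMpos : (0 : ℝ) < M := lt_of_lt_of_le (by positivity) hM
  have hMK : K ≤ M := by linarith
  -- the per-capacity strong law for the martingale term
  set A : ℕ → Ω → ℝ := fun _ _ => αstar with hAdef
  have hinc : ∀ t ω, B t ω - N t ω * A t ω = X t ω := by
    intro t ω; simp only [hXdef, hAdef]
  have hSmeas : ∀ t, Measurable (inv M S0 B N A t) := by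
    intro t
    induction t with
    | zero => exact measurable_const
    | succ t ih =>
        show Measurable fun ω => clamp M (inv M S0 B N A t ω + B t ω - N t ω * A t ω)
        unfold clamp
        exact (((ih.add (hBmeas t)).sub ((hNmeas t).mul_const αstar)).max
          measurable_const).min measurable_const
  have hSbd : ∀ t ω, inv M S0 B N A t ω ∈ Set.Icc (0:ℝ) M :=
    fun t ω => inv_mem M S0 hMpos.le hS0 B N A t ω
  set Y : ℕ → Ω → ℝ := fun t ω => inv M S0 B N A t ω * X t ω with hYdef
  have hYmeas : ∀ t, Measurable (Y t) := fun t => (hSmeas t).mul (hXmeas t)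
  have hYbd : ∀ t ω, |Y t ω| ≤ M * K := by
    intro t ω
    simp only [hYdef]
    rw [abs_mul]
    refine mul_le_mul ?_ (hXbd t ω) (abs_nonneg _) hMpos.le
    rw [abs_of_nonneg (hSbd t ω).1]
    exact (hSbd t ω).2
  have hSlt : ∀ t k : ℕ, k ≤ t → Measurable[⨆ i ∈ {i : ℕ | i < t}, mF i]
      (inv M S0 B N A k) := by
    intro t k hk
    induction k with
    | zero => exact measurable_const
    | succ k ih =>
        have hk' : k < t := lt_of_lt_of_le (Nat.lt_succ_self k) hk
        have h1 := ih hk'.le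
        show Measurable[⨆ i ∈ {i : ℕ | i < t}, mF i]
          fun ω => clamp M (inv M S0 B N A k ω + B k ω - N k ω * A k ω)
        unfold clamp
        exact (((h1.add (hBlt k t hk')).sub ((hNlt k t hk').mul_const αstar)).max
          measurable_const).min measurable_const
  have hmY : ∀ t, ∫ ω, Y t ω ∂μ = 0 := by
    intro t
    have hind : IndepFun (inv M S0 B N A t) (X t) μ := hindepXt t _ (hSlt t t le_rfl)
    have h := hind.integral_mul_eq_mul_integral (hSmeas t).aestronglyMeasurable (hXmeas t).aestronglyMeasurable
    calc ∫ ω, Y t ω ∂μ = integral μ (inv M S0 B N A t * X t) := rfl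
      _ = integral μ (inv M S0 B N A t) * integral μ (X t) := h
      _ = 0 := by rw [show integral μ (X t) = 0 from hmXt t]; ring
  have horthY : ∀ s t : ℕ, s < t → ∫ ω, Y s ω * Y t ω ∂μ = 0 := by
    intro s t hst
    have hF : Measurable[⨆ i ∈ {i : ℕ | i < t}, mF i]
        (fun ω => Y s ω * inv M S0 B N A t ω) :=
      ((hSlt t s hst.le).mul (hXlt s t hst)).mul (hSlt t t le_rfl)
    have hind : IndepFun (fun ω => Y s ω * inv M S0 B N A t ω) (X t) μ := hindepXt t _ hF
    have h := hind.integral_mul_eq_mul_integral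
      (((hSmeas s).mul (hXmeas s)).mul (hSmeas t)).aestronglyMeasurable
      (hXmeas t).aestronglyMeasurable
    have he : (fun ω => Y s ω * Y t ω)
        = fun ω => (Y s ω * inv M S0 B N A t ω) * X t ω := by
      funext ω; simp only [hYdef]; ring
    calc ∫ ω, Y s ω * Y t ω ∂μ
        = integral μ ((fun ω => Y s ω * inv M S0 B N A t ω) * X t) := by rw [he]; rfl
      _ = integral μ (fun ω => Y s ω * inv M S0 B N A t ω) * integral μ (X t) := h
      _ = 0 := by rw [show integral μ (X t) = 0 from hmXt t]; ring
  have hL3 : ∀ᵐ ω ∂μ, Tendsto (fun n : ℕ => (∑ t ∈ Finset.range n, Y t ω) / n)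
      atTop (𝓝 0) :=
    lln_orth μ Y (M * K) (by positivity) hYmeas hYbd horthY hmY
  -- pathwise analysis
  filter_upwards [hL1, hL2, hL3] with ω h1 h2 h3
  -- pathwise conclusions
  simp only [hZdef] at h2
  simp only [hYdef] at h3
  have hAv : ∀ t, A t ω = αstar := fun t => rfl
  have hW0' : ∀ t, 0 ≤ ovf M S0 B N A t ω := fun t => le_max_right _ _
  have hV0' : ∀ t, 0 ≤ sko M S0 B N A t ω := fun t => le_max_right _ _
  have hNmaxa : 0 ≤ (Nmax : ℝ) * αstar := by positivity
  have hWK' : ∀ t, ovf M S0 B N A t ω ≤ K := by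
    intro t
    show max (inv M S0 B N A t ω + B t ω - N t ω * A t ω - M) 0 ≤ K
    refine max_le ?_ hK0
    have hs := (hSbd t ω).2
    have hb := hBmax t ω
    have hna : 0 ≤ N t ω * A t ω := by
      rw [hAv t]; exact mul_nonneg (hN0 t ω) hα.le
    simp only [hKdef]; linarith
  have hVK' : ∀ t, sko M S0 B N A t ω ≤ K := by
    intro t
    show max (-(inv M S0 B N A t ω + B t ω - N t ω * A t ω)) 0 ≤ K
    refine max_le ?_ hK0
    have hs := (hSbd t ω).1
    have hb := hB0 t ω
    have hna : N t ω * A t ω ≤ (Nmax : ℝ) * αstar := by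
      rw [hAv t]; exact mul_le_mul_of_nonneg_right (hNmax t ω) hα.le
    simp only [hKdef]; linarith
  have hstep1' : ∀ t, inv M S0 B N A (t + 1) ω
      = inv M S0 B N A t ω + (X t ω - ovf M S0 B N A t ω + sko M S0 B N A t ω) := by
    intro t
    have h := (inv_step M S0 hMpos.le B N A t ω).1
    rw [hinc t ω] at h
    linarith
  have hstep2' : ∀ t, (inv M S0 B N A (t + 1) ω) ^ 2
      = (inv M S0 B N A t ω) ^ 2 + (2 * (inv M S0 B N A t ω * X t ω) + (X t ω) ^ 2
        - 2 * M * (ovf M S0 B N A t ω) - (ovf M S0 B N A t ω) ^ 2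
        - (sko M S0 B N A t ω) ^ 2) := by
    intro t
    have h := (inv_step M S0 hMpos.le B N A t ω).2
    rw [hinc t ω] at h
    linarith
  obtain ⟨kWlo, kWup, kVlo, kVup⟩ := pathwise M K σ2
    (fun t => inv M S0 B N A t ω) (fun t => ovf M S0 B N A t ω)
    (fun t => sko M S0 B N A t ω) (fun t => X t ω)
    hMpos hK0 hMK hσpos (fun t => hSbd t ω) hW0' hWK' hV0' hVK'
    hstep1' hstep2' h1 h2 h3
  have hWblo : σ2 / (2 * (M + K)) ≤ Wbar M S0 B N A ω := kWlo
  have hWbup : Wbar M S0 B N A ω ≤ σ2 / (2 * M) := kWup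
  have hVblo : σ2 / (2 * (M + K)) ≤ Vbar M S0 B N A ω := kVlo
  have hVbup : Vbar M S0 B N A ω ≤ σ2 / (2 * M) := kVup
  have hc1 : σ2 / 4 / M ≤ σ2 / (2 * (M + K)) := by
    rw [div_div, div_le_div_iff₀ (show (0:ℝ) < 4 * M by linarith)
      (show (0:ℝ) < 2 * (M + K) by linarith)]
    exact mul_le_mul_of_nonneg_left (show 2 * (M + K) ≤ 4 * M by linarith) hσpos.le
  have hc2 : σ2 / (2 * M) = σ2 / 2 / M := by rw [div_div]
  have W1 : σ2 / 4 / M ≤ Wbar M S0 B N A ω := le_trans hc1 hWblo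
  have W2 : Wbar M S0 B N A ω ≤ σ2 / 2 / M := hc2 ▸ hWbup
  have V1 : σ2 / 4 / M ≤ Vbar M S0 B N A ω := le_trans hc1 hVblo
  have V2 : Vbar M S0 B N A ω ≤ σ2 / 2 / M := hc2 ▸ hVbup
  refine ⟨⟨W1, W2⟩, ⟨V1, V2⟩, ?_⟩
  intro h b hh hb
  constructor
  · have e1 : (h + b) * (σ2 / 4) / M = h * (σ2 / 4 / M) + b * (σ2 / 4 / M) := by ring
    rw [e1]
    exact add_le_add (mul_le_mul_of_nonneg_left W1 hh.le)
      (mul_le_mul_of_nonneg_left V1 hb.le)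
  · have e1 : (h + b) * (σ2 / 2) / M = h * (σ2 / 2 / M) + b * (σ2 / 2 / M) := by ring
    rw [e1]
    exact add_le_add (mul_le_mul_of_nonneg_left W2 hh.le)
      (mul_le_mul_of_nonneg_left V2 hb.le)
end
end

section
/- Under the stated drift conditions, there exists a constant C > 0, depending only on the laws of B_1 and N_1 and on ε, δ (independent of M and Δ), such that P(Q_{τ̃₂} < M/2 | Q starts at M) ≥ C/M for all sufficiently large M. Moreover, there exist constants C₁, C₂ > 0 independent of M and Δ such that, for all sufficiently large M: for every starting point S ∈ [M/2 − Z_min, M/2), P(Q'_{τ̃₁} ≥ M/2 | Q' starts at S) ≥ 1 − e^{−C₁ΔM}; and for every starting point S ∈ [M/2, M/2 + Z_max], P(Q_{τ̃₂} < M/2 | Q starts at S) ≥ 1 − e^{−C₂ΔM}. -/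
open MeasureTheory ProbabilityTheory Filter Set Real

noncomputable section

/-- The random walk started at `S0` with per-step drift `B_s − N_s·α`. -/
def walkC {Ω : Type*} (B N : ℕ → Ω → ℝ) (α S0 : ℝ) (t : ℕ) (ω : Ω) : ℝ :=
  S0 + ∑ s ∈ Finset.range t, (B s ω - N s ω * α)

/-- First exit time (at a positive time) of the process `Q` from the set `I`;
by convention `sInf ∅ = 0`. -/
def exitTime {Ω : Type*} (Q : ℕ → Ω → ℝ) (I : Set ℝ) (ω : Ω) : ℕ :=
  sInf {t | 0 < t ∧ Q t ω ∉ I}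

set_option linter.unusedSectionVars false
set_option linter.unusedVariables false
set_option linter.dupNamespace false
set_option maxHeartbeats 1000000

open Topology
open scoped ENNReal NNReal

namespace Stmt7Aux

variable {Ω : Type*} [MeasurableSpace Ω] {μ : Measure Ω}

lemma integrable_of_bdd [IsFiniteMeasure μ] {f : Ω → ℝ} {c : ℝ}
    (hf : Measurable f) (h : ∀ ω, |f ω| ≤ c) : Integrable f μ :=
  ⟨hf.aestronglyMeasurable, HasFiniteIntegral.of_bounded (C := c) (ae_of_all _ h)⟩

lemma measurable_randomTime {Q : ℕ → Ω → ℝ} (hQ : ∀ t, Measurable (Q t))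
    {τ : Ω → ℕ} (hτ : Measurable τ) : Measurable (fun ω => Q (τ ω) ω) := by
  intro C hC
  have : (fun ω => Q (τ ω) ω) ⁻¹' C = ⋃ n, (τ ⁻¹' {n}) ∩ (Q n ⁻¹' C) := by
    ext ω
    simp only [Set.mem_preimage, Set.mem_iUnion, Set.mem_inter_iff, Set.mem_singleton_iff]
    constructor
    · intro h; exact ⟨τ ω, rfl, h⟩
    · rintro ⟨n, rfl, h⟩; exact h
  rw [this]
  exact MeasurableSet.iUnion fun n => (hτ (measurableSet_singleton n)).inter (hQ n hC)

lemma exitTime_eq_zero_iff {Q : ℕ → Ω → ℝ} {I : Set ℝ} {ω : Ω} :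
    exitTime Q I ω = 0 ↔ ∀ t, 0 < t → Q t ω ∈ I := by
  rw [exitTime, Nat.sInf_eq_zero]
  constructor
  · rintro (h | h)
    · exact absurd h.1 (lt_irrefl 0)
    · intro t ht
      by_contra hq
      exact absurd (Set.eq_empty_iff_forall_notMem.1 h t) (fun hh => hh ⟨ht, hq⟩)
  · intro h
    right
    ext t
    simp only [Set.mem_setOf_eq, Set.mem_empty_iff_false, iff_false, not_and]
    intro ht hq
    exact hq (h t ht)

lemma exitTime_eq_succ_iff {Q : ℕ → Ω → ℝ} {I : Set ℝ} {ω : Ω} {n : ℕ} :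
    exitTime Q I ω = n + 1 ↔ (Q (n+1) ω ∉ I ∧ ∀ m, 0 < m → m ≤ n → Q m ω ∈ I) := by
  constructor
  · intro h
    have hne : {t | 0 < t ∧ Q t ω ∉ I}.Nonempty := by
      by_contra hemp
      rw [Set.not_nonempty_iff_eq_empty] at hemp
      rw [exitTime, hemp, Nat.sInf_empty] at h
      exact Nat.succ_ne_zero n h.symm
    have hmem := Nat.sInf_mem hne
    rw [← exitTime, h] at hmem
    refine ⟨hmem.2, fun m hm hmn => ?_⟩
    by_contra hq
    have : exitTime Q I ω ≤ m := Nat.sInf_le ⟨hm, hq⟩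
    omega
  · rintro ⟨h1, h2⟩
    refine le_antisymm (Nat.sInf_le ⟨Nat.succ_pos n, h1⟩) ?_
    by_contra hlt
    push_neg at hlt
    have hne : {t | 0 < t ∧ Q t ω ∉ I}.Nonempty := by
      rcases Nat.eq_zero_or_pos (exitTime Q I ω) with h0 | h0
      · rw [exitTime_eq_zero_iff] at h0
        exact absurd (h0 (n+1) (Nat.succ_pos n)) h1
      · by_contra hemp
        rw [Set.not_nonempty_iff_eq_empty] at hemp
        rw [exitTime, hemp, Nat.sInf_empty] at h0
        exact lt_irrefl 0 h0
    have hmem := Nat.sInf_mem hne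
    rw [← exitTime] at hmem
    exact absurd (h2 _ hmem.1 (by omega)) hmem.2

lemma measurable_exitTime {Q : ℕ → Ω → ℝ} (hQ : ∀ t, Measurable (Q t))
    {I : Set ℝ} (hI : MeasurableSet I) : Measurable (exitTime Q I) := by
  apply measurable_to_countable'
  intro n
  cases n with
  | zero =>
    have : exitTime Q I ⁻¹' {0} = ⋂ (t : ℕ), ⋂ (_ : 0 < t), Q t ⁻¹' I := by
      ext ω
      simp only [Set.mem_preimage, Set.mem_singleton_iff, Set.mem_iInter, exitTime_eq_zero_iff]
    rw [this]
    exact MeasurableSet.iInter fun t => MeasurableSet.iInter fun _ => (hQ t) hI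
  | succ n =>
    have : exitTime Q I ⁻¹' {n+1} =
        (Q (n+1) ⁻¹' I)ᶜ ∩ ⋂ (m : ℕ), ⋂ (_ : 0 < m), ⋂ (_ : m ≤ n), Q m ⁻¹' I := by
      ext ω
      simp only [Set.mem_preimage, Set.mem_singleton_iff, Set.mem_inter_iff, Set.mem_compl_iff,
        Set.mem_iInter, exitTime_eq_succ_iff]
    rw [this]
    exact ((hQ (n+1) hI).compl).inter
      (MeasurableSet.iInter fun m => MeasurableSet.iInter fun _ =>
        MeasurableSet.iInter fun _ => (hQ m) hI)


variable [IsProbabilityMeasure μ]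

/-- σ-algebra generated by the first `t` steps. -/
def Fsig (Z : ℕ → Ω → ℝ) (t : ℕ) : MeasurableSpace Ω :=
  ⨆ s ∈ {n : ℕ | n < t}, MeasurableSpace.comap (Z s) inferInstance

variable {Z : ℕ → Ω → ℝ}

lemma measurable_Fsig (hZm : ∀ t, Measurable (Z t)) {s t : ℕ} (h : s < t) :
    Measurable[Fsig Z t] (Z s) :=
  Measurable.of_comap_le (le_biSup (f := fun n => MeasurableSpace.comap (Z n) inferInstance) h)

lemma indep_Fsig (hZm : ∀ t, Measurable (Z t))
    (hZiid : iIndepFun Z μ) (t : ℕ) :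
    Indep (Fsig Z t) (MeasurableSpace.comap (Z t) inferInstance) μ := by
  have h := indep_biSup_compl (fun n => (hZm n).comap_le) hZiid {n : ℕ | n < t}
  exact indep_of_indep_of_le_right h
    (le_biSup (f := fun n => MeasurableSpace.comap (Z n) inferInstance)
      (show t ∈ {n : ℕ | n < t}ᶜ by simp))

lemma indepFun_Fsig (hZm : ∀ t, Measurable (Z t))
    (hZiid : iIndepFun Z μ) {t : ℕ} {f : Ω → ℝ}
    (hf : Measurable[Fsig Z t] f) : IndepFun f (Z t) μ :=
  indep_of_indep_of_le_left (indep_Fsig hZm hZiid t) hf.comap_le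

/-- product formula. -/
lemma integral_mul_Fsig (hZm : ∀ t, Measurable (Z t))
    (hZiid : iIndepFun Z μ) {t : ℕ} {f : Ω → ℝ} {cf : ℝ}
    (hf : Measurable[Fsig Z t] f) (hfb : ∀ ω, |f ω| ≤ cf)
    {g : ℝ → ℝ} {cg : ℝ} (hg : Measurable g) (hgb : ∀ ω, |g (Z t ω)| ≤ cg) :
    ∫ ω, f ω * g (Z t ω) ∂μ = (∫ ω, f ω ∂μ) * ∫ ω, g (Z t ω) ∂μ := by
  have hind : IndepFun f (fun ω => g (Z t ω)) μ :=
    (indepFun_Fsig hZm hZiid hf).comp measurable_id hg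
  have hfm : Measurable f := hf.mono (by
      apply iSup_le; intro s; apply iSup_le; intro _; exact (hZm s).comap_le) le_rfl
  exact hind.integral_fun_mul_eq_mul_integral (integrable_of_bdd hfm hfb).aestronglyMeasurable
    (integrable_of_bdd (hg.comp (hZm t)) (fun ω => hgb _)).aestronglyMeasurable

lemma integral_exp_eq (hZm : ∀ t, Measurable (Z t))
    (hZid : ∀ t, IdentDistrib (Z t) (Z 0) μ μ) (l : ℝ) (t : ℕ) :
    ∫ ω, Real.exp (l * Z t ω) ∂μ = ∫ ω, Real.exp (l * Z 0 ω) ∂μ :=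
  ((hZid t).comp (Real.measurable_exp.comp (measurable_const_mul l))).integral_eq

lemma integral_prod_exp (hZm : ∀ t, Measurable (Z t))
    (hZiid : iIndepFun Z μ)
    (hZid : ∀ t, IdentDistrib (Z t) (Z 0) μ μ)
    {K : ℝ} (hZK : ∀ t ω, |Z t ω| ≤ K) (l : ℝ) (t : ℕ) :
    ∫ ω, ∏ s ∈ Finset.range t, Real.exp (l * Z s ω) ∂μ
      = (∫ ω, Real.exp (l * Z 0 ω) ∂μ) ^ t := by
  induction t with
  | zero => simp
  | succ t ih =>
    have hprodm : Measurable[Fsig Z (t)] (fun ω => ∏ s ∈ Finset.range t, Real.exp (l * Z s ω)) := by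
      apply Finset.measurable_prod
      intro s hs
      exact Real.measurable_exp.comp ((measurable_Fsig hZm (Finset.mem_range.1 hs)).const_mul l)
    have hb : ∀ ω, |∏ s ∈ Finset.range t, Real.exp (l * Z s ω)| ≤ Real.exp (|l| * K) ^ t := by
      intro ω
      rw [Finset.abs_prod]
      calc ∏ s ∈ Finset.range t, |Real.exp (l * Z s ω)|
          ≤ ∏ s ∈ Finset.range t, Real.exp (|l| * K) := by
            apply Finset.prod_le_prod
            · intro s _; positivity
            · intro s _
              rw [abs_of_pos (Real.exp_pos _)]
              apply Real.exp_le_exp.2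
              calc l * Z s ω ≤ |l * Z s ω| := le_abs_self _
                _ = |l| * |Z s ω| := abs_mul _ _
                _ ≤ |l| * K := by
                    apply mul_le_mul_of_nonneg_left (hZK s ω) (abs_nonneg l)
        _ = Real.exp (|l| * K) ^ t := by rw [Finset.prod_const, Finset.card_range]
    have key := integral_mul_Fsig (μ := μ) hZm hZiid (t := t) hprodm hb
      (g := fun x => Real.exp (l * x)) (cg := Real.exp (|l| * K))
      (Real.measurable_exp.comp (measurable_const_mul l))
      (fun ω => by
        rw [abs_of_pos (Real.exp_pos _)]
        apply Real.exp_le_exp.2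
        calc l * Z t ω ≤ |l * Z t ω| := le_abs_self _
          _ = |l| * |Z t ω| := abs_mul _ _
          _ ≤ |l| * K := mul_le_mul_of_nonneg_left (hZK t ω) (abs_nonneg l))
    simp only [Finset.prod_range_succ]
    rw [key, ih, pow_succ]
    congr 1
    exact integral_exp_eq hZm hZid l t

lemma exp_le_quadratic {x : ℝ} (h : |x| ≤ 1) : Real.exp x ≤ 1 + x + x ^ 2 := by
  have hb := Real.exp_bound h (by norm_num : 0 < 2)
  have hs : ∑ i ∈ Finset.range 2, x ^ i / (Nat.factorial i : ℝ) = 1 + x := by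
    simp [Finset.sum_range_succ]
  rw [hs] at hb
  have h1 : Real.exp x - (1 + x) ≤ |x| ^ 2 * ((2 : ℕ).succ / ((Nat.factorial 2 : ℝ) * 2)) :=
    le_trans (le_abs_self _) hb
  have h2 : |x| ^ 2 = x ^ 2 := sq_abs x
  norm_num [h2] at h1
  nlinarith [sq_nonneg x]

lemma chernoff (hZm : ∀ t, Measurable (Z t))
    (hZiid : iIndepFun Z μ)
    (hZid : ∀ t, IdentDistrib (Z t) (Z 0) μ μ)
    {K : ℝ} (hZK : ∀ t ω, |Z t ω| ≤ K) {l : ℝ} (hl : 0 < l) (a : ℝ) (t : ℕ) :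
    (μ {ω | a ≤ ∑ s ∈ Finset.range t, Z s ω}).toReal
      ≤ Real.exp (-(l * a)) * (∫ ω, Real.exp (l * Z 0 ω) ∂μ) ^ t := by
  set f : Ω → ℝ := fun ω => Real.exp (l * ∑ s ∈ Finset.range t, Z s ω) with hfdef
  have hfm : Measurable f :=
    Real.measurable_exp.comp ((Finset.measurable_sum _ (fun s _ => hZm s)).const_mul l)
  have hfb : ∀ ω, |f ω| ≤ Real.exp (l * (K * t)) := by
    intro ω
    rw [abs_of_pos (Real.exp_pos _)]
    apply Real.exp_le_exp.2
    apply mul_le_mul_of_nonneg_left _ hl.le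
    calc ∑ s ∈ Finset.range t, Z s ω ≤ ∑ s ∈ Finset.range t, K :=
          Finset.sum_le_sum fun s _ => le_trans (le_abs_self _) (hZK s ω)
      _ = K * t := by rw [Finset.sum_const, Finset.card_range, nsmul_eq_mul, mul_comm]
  have hint : Integrable f μ := integrable_of_bdd hfm hfb
  have hmark := mul_meas_ge_le_integral_of_nonneg (μ := μ)
    (ae_of_all _ fun ω => (Real.exp_pos (l * ∑ s ∈ Finset.range t, Z s ω)).le) hint
    (Real.exp (l * a))
  have hIf : ∫ ω, f ω ∂μ = (∫ ω, Real.exp (l * Z 0 ω) ∂μ) ^ t := by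
    rw [← integral_prod_exp hZm hZiid hZid hZK l t]
    apply integral_congr_ae
    apply ae_of_all
    intro ω
    rw [hfdef]
    simp only
    rw [Finset.mul_sum, Real.exp_sum]
  have hsub : {ω | a ≤ ∑ s ∈ Finset.range t, Z s ω} ⊆ {ω | Real.exp (l * a) ≤ f ω} := by
    intro ω h
    exact Real.exp_le_exp.2 (mul_le_mul_of_nonneg_left h hl.le)
  have h1 : (μ {ω | a ≤ ∑ s ∈ Finset.range t, Z s ω}).toReal
      ≤ (μ {ω | Real.exp (l * a) ≤ f ω}).toReal :=
    ENNReal.toReal_mono (measure_ne_top _ _) (measure_mono hsub)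
  rw [hIf] at hmark
  have hepos : (0 : ℝ) < Real.exp (l * a) := Real.exp_pos _
  calc (μ {ω | a ≤ ∑ s ∈ Finset.range t, Z s ω}).toReal
      ≤ (μ {ω | Real.exp (l * a) ≤ f ω}).toReal := h1
    _ ≤ (∫ ω, Real.exp (l * Z 0 ω) ∂μ) ^ t / Real.exp (l * a) := by
        rw [le_div_iff₀ hepos]
        calc (μ {ω | Real.exp (l*a) ≤ f ω}).toReal * Real.exp (l*a)
            = Real.exp (l*a) * (μ {x | Real.exp (l*a) ≤ f x}).toReal := by ring
          _ ≤ _ := hmark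
    _ = Real.exp (-(l * a)) * (∫ ω, Real.exp (l * Z 0 ω) ∂μ) ^ t := by
        rw [Real.exp_neg, div_eq_mul_inv, mul_comm]

lemma rho_le (hZm : ∀ t, Measurable (Z t)) {K : ℝ} (hZK : ∀ t ω, |Z t ω| ≤ K)
    (hK0 : 0 ≤ K) {l : ℝ} (hl0 : 0 ≤ l) (hlK : l * K ≤ 1) :
    ∫ ω, Real.exp (l * Z 0 ω) ∂μ ≤ 1 + l * (∫ ω, Z 0 ω ∂μ) + l ^ 2 * K ^ 2 := by
  have hpt : ∀ ω, Real.exp (l * Z 0 ω) ≤ 1 + l * Z 0 ω + l ^ 2 * K ^ 2 := by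
    intro ω
    have habs : |l * Z 0 ω| ≤ 1 := by
      rw [abs_mul, abs_of_nonneg hl0]
      exact le_trans (mul_le_mul_of_nonneg_left (hZK 0 ω) hl0) hlK
    have h1 := exp_le_quadratic habs
    have h2 : (l * Z 0 ω) ^ 2 ≤ l ^ 2 * K ^ 2 := by
      rw [mul_pow]
      apply mul_le_mul_of_nonneg_left _ (sq_nonneg l)
      rw [← sq_abs (Z 0 ω)]
      exact pow_le_pow_left₀ (abs_nonneg _) (hZK 0 ω) 2
    nlinarith
  have hintL : Integrable (fun ω => Real.exp (l * Z 0 ω)) μ :=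
    integrable_of_bdd (Real.measurable_exp.comp ((hZm 0).const_mul l))
      (fun ω => by
        rw [abs_of_pos (Real.exp_pos _)]
        apply Real.exp_le_exp.2
        calc l * Z 0 ω ≤ |l * Z 0 ω| := le_abs_self _
          _ = |l| * |Z 0 ω| := abs_mul _ _
          _ ≤ |l| * K := mul_le_mul_of_nonneg_left (hZK 0 ω) (abs_nonneg l))
  have hintR : Integrable (fun ω => 1 + l * Z 0 ω + l ^ 2 * K ^ 2) μ := by
    apply Integrable.add
    · exact (integrable_const 1).add ((integrable_of_bdd (hZm 0) (hZK 0)).const_mul l)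
    · exact integrable_const _
  calc ∫ ω, Real.exp (l * Z 0 ω) ∂μ ≤ ∫ ω, (1 + l * Z 0 ω + l ^ 2 * K ^ 2) ∂μ :=
        integral_mono hintL hintR hpt
    _ = 1 + l * (∫ ω, Z 0 ω ∂μ) + l ^ 2 * K ^ 2 := by
        have hZint : Integrable (fun ω => l * Z 0 ω) μ :=
          (integrable_of_bdd (hZm 0) (hZK 0)).const_mul l
        have e1 : ∫ ω, (1 + l * Z 0 ω + l ^ 2 * K ^ 2) ∂μ
            = (∫ ω, (1 + l * Z 0 ω) ∂μ) + ∫ _ω, (l ^ 2 * K ^ 2 : ℝ) ∂μ :=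
          integral_add ((integrable_const 1).add hZint) (integrable_const _)
        have e2 : ∫ ω, (1 + l * Z 0 ω) ∂μ = (∫ _ω, (1:ℝ) ∂μ) + ∫ ω, l * Z 0 ω ∂μ :=
          integral_add (integrable_const 1) hZint
        rw [e1, e2, integral_const, integral_const, integral_const_mul]
        simp

lemma rho_lt (hZm : ∀ t, Measurable (Z t)) {K : ℝ} (hZK : ∀ t ω, |Z t ω| ≤ K)
    (hK0 : 0 ≤ K) {l m : ℝ} (hl : 0 < l) (hlK : l * K ≤ 1) (hm : 0 < m)
    (hEZ : ∫ ω, Z 0 ω ∂μ ≤ -m) (hlK2 : l * K ^ 2 ≤ m / 2) :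
    ∫ ω, Real.exp (l * Z 0 ω) ∂μ ≤ 1 - l * m / 2 := by
  have h1 := rho_le (μ := μ) hZm hZK hK0 hl.le hlK
  have h2 : l * (∫ ω, Z 0 ω ∂μ) ≤ -(l * m) := by
    have := mul_le_mul_of_nonneg_left hEZ hl.le
    linarith
  have h3 : l ^ 2 * K ^ 2 ≤ l * (m / 2) := by
    have := mul_le_mul_of_nonneg_left hlK2 hl.le
    nlinarith
  linarith

lemma tail_bound (hZm : ∀ t, Measurable (Z t))
    (hZiid : iIndepFun Z μ)
    (hZid : ∀ t, IdentDistrib (Z t) (Z 0) μ μ)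
    {K : ℝ} (hZK : ∀ t ω, |Z t ω| ≤ K) (hK0 : 0 ≤ K) {l m : ℝ}
    (hl : 0 < l) (hlK : l * K ≤ 1) (hm : 0 < m) (hEZ : ∫ ω, Z 0 ω ∂μ ≤ -m)
    (hlK2 : l * K ^ 2 ≤ m / 2) (a : ℝ) :
    μ (⋃ t, {ω | a ≤ ∑ s ∈ Finset.range t, Z s ω})
      ≤ ENNReal.ofReal (Real.exp (-(l * a)) * (2 / (l * m))) := by
  set ρ := ∫ ω, Real.exp (l * Z 0 ω) ∂μ with hρdef
  have hρ0 : 0 ≤ ρ := integral_nonneg fun ω => (Real.exp_pos _).le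
  have hρlt : ρ ≤ 1 - l * m / 2 := rho_lt hZm hZK hK0 hl hlK hm hEZ hlK2
  have hlm : 0 < l * m := mul_pos hl hm
  have h1ρ : 0 < 1 - ρ := by linarith
  have hexp0 : (0:ℝ) ≤ Real.exp (-(l * a)) := (Real.exp_pos _).le
  calc μ (⋃ t, {ω | a ≤ ∑ s ∈ Finset.range t, Z s ω})
      ≤ ∑' t, μ {ω | a ≤ ∑ s ∈ Finset.range t, Z s ω} := measure_iUnion_le _
    _ ≤ ∑' t : ℕ, ENNReal.ofReal (Real.exp (-(l * a)) * ρ ^ t) := by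
        apply ENNReal.tsum_le_tsum
        intro t
        rw [← ENNReal.ofReal_toReal (measure_ne_top μ _)]
        exact ENNReal.ofReal_le_ofReal (chernoff hZm hZiid hZid hZK hl a t)
    _ = ENNReal.ofReal (Real.exp (-(l * a))) * ∑' t : ℕ, (ENNReal.ofReal ρ) ^ t := by
        rw [← ENNReal.tsum_mul_left]
        congr 1
        funext t
        rw [ENNReal.ofReal_mul hexp0, ENNReal.ofReal_pow hρ0]
    _ = ENNReal.ofReal (Real.exp (-(l * a))) * (1 - ENNReal.ofReal ρ)⁻¹ := by
        rw [ENNReal.tsum_geometric]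
    _ ≤ ENNReal.ofReal (Real.exp (-(l * a))) * ENNReal.ofReal (2 / (l * m)) := by
        apply mul_le_mul_right
        have heq : (1 : ℝ≥0∞) - ENNReal.ofReal ρ = ENNReal.ofReal (1 - ρ) := by
          rw [ENNReal.ofReal_sub 1 hρ0, ENNReal.ofReal_one]
        rw [heq, ← ENNReal.ofReal_inv_of_pos h1ρ]
        apply ENNReal.ofReal_le_ofReal
        have h2 : (1 - ρ)⁻¹ ≤ (l * m / 2)⁻¹ :=
          inv_anti₀ (by positivity) (by linarith)
        calc (1 - ρ)⁻¹ ≤ (l * m / 2)⁻¹ := h2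
          _ = 2 / (l * m) := by rw [inv_div]
    _ = ENNReal.ofReal (Real.exp (-(l * a)) * (2 / (l * m))) :=
        (ENNReal.ofReal_mul hexp0).symm

lemma measure_never (hZm : ∀ t, Measurable (Z t))
    (hZiid : iIndepFun Z μ)
    (hZid : ∀ t, IdentDistrib (Z t) (Z 0) μ μ)
    {K : ℝ} (hZK : ∀ t ω, |Z t ω| ≤ K) (hK0 : 0 ≤ K) {l m : ℝ}
    (hl : 0 < l) (hlK : l * K ≤ 1) (hm : 0 < m) (hEZ : ∫ ω, Z 0 ω ∂μ ≤ -m)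
    (hlK2 : l * K ^ 2 ≤ m / 2) (a : ℝ) {E : Set Ω}
    (hE : ∀ t, 0 < t → E ⊆ {ω | a ≤ ∑ s ∈ Finset.range t, Z s ω}) : μ E = 0 := by
  set ρ := ∫ ω, Real.exp (l * Z 0 ω) ∂μ with hρdef
  have hρ0 : 0 ≤ ρ := integral_nonneg fun ω => (Real.exp_pos _).le
  have hρlt : ρ ≤ 1 - l * m / 2 := rho_lt hZm hZK hK0 hl hlK hm hEZ hlK2
  have hρlt1 : ρ < 1 := by nlinarith
  have key : ∀ t, 0 < t → (μ E).toReal ≤ Real.exp (-(l * a)) * ρ ^ t := fun t ht =>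
    le_trans (ENNReal.toReal_mono (measure_ne_top _ _) (measure_mono (hE t ht)))
      (chernoff hZm hZiid hZid hZK hl a t)
  have hten : Tendsto (fun t : ℕ => Real.exp (-(l * a)) * ρ ^ t) atTop (𝓝 0) := by
    have := (tendsto_pow_atTop_nhds_zero_of_lt_one hρ0 hρlt1).const_mul (Real.exp (-(l * a)))
    simpa using this
  have hle : (μ E).toReal ≤ 0 :=
    ge_of_tendsto hten (eventually_atTop.2 ⟨1, fun t ht => key t (by omega)⟩)
  have h0 : (μ E).toReal = 0 := le_antisymm hle ENNReal.toReal_nonneg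
  exact ((ENNReal.toReal_eq_zero_iff _).1 h0).resolve_right (measure_ne_top μ E)


/-- The stopped time: first exit in `(0, t]`, or `t` if none. -/
def NN (Q : ℕ → Ω → ℝ) (I : Set ℝ) (t : ℕ) (ω : Ω) : ℕ :=
  sInf ({s | 0 < s ∧ Q s ω ∉ I} ∪ {t})

/-- No exit up to time `t`. -/
def Gset (Q : ℕ → Ω → ℝ) (I : Set ℝ) (t : ℕ) : Set Ω :=
  {ω | ∀ s, 0 < s → s ≤ t → Q s ω ∈ I}

/-- The stopped walk. -/
def VV (Q : ℕ → Ω → ℝ) (I : Set ℝ) (t : ℕ) (ω : Ω) : ℝ :=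
  Q (NN Q I t ω) ω

variable {Q : ℕ → Ω → ℝ} {I : Set ℝ}

lemma NN_zero (ω : Ω) : NN Q I 0 ω = 0 :=
  Nat.le_zero.1 (Nat.sInf_le (Or.inr rfl))

lemma NN_of_G {t : ℕ} {ω : Ω} (h : ω ∈ Gset Q I t) : NN Q I t ω = t := by
  refine le_antisymm (Nat.sInf_le (Or.inr rfl)) (le_csInf ⟨t, Or.inr rfl⟩ ?_)
  rintro b (⟨hb0, hbI⟩ | rfl)
  · by_contra hlt
    push_neg at hlt
    exact hbI (h b hb0 (by omega))
  · exact le_rfl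

lemma NN_succ_of_G {t : ℕ} {ω : Ω} (h : ω ∈ Gset Q I t) : NN Q I (t + 1) ω = t + 1 := by
  refine le_antisymm (Nat.sInf_le (Or.inr rfl)) (le_csInf ⟨t + 1, Or.inr rfl⟩ ?_)
  rintro b (⟨hb0, hbI⟩ | rfl)
  · by_contra hlt
    push_neg at hlt
    exact hbI (h b hb0 (by omega))
  · exact le_rfl

lemma NN_of_not_G {t : ℕ} {ω : Ω} (h : ω ∉ Gset Q I t) {t' : ℕ} (ht' : t ≤ t') :
    NN Q I t' ω = exitTime Q I ω := by
  simp only [Gset, Set.mem_setOf_eq, not_forall] at h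
  obtain ⟨s₀, hs0, hs0t, hs0I⟩ := h
  have hne : {s | 0 < s ∧ Q s ω ∉ I}.Nonempty := ⟨s₀, hs0, hs0I⟩
  refine le_antisymm (Nat.sInf_le (Or.inl (Nat.sInf_mem hne))) (le_csInf ⟨t', Or.inr rfl⟩ ?_)
  rintro b (hb | rfl)
  · exact Nat.sInf_le hb
  · exact le_trans (le_trans (Nat.sInf_le ⟨hs0, hs0I⟩) hs0t) ht'

lemma NN_one (ω : Ω) : NN Q I 1 ω = 1 := by
  by_cases h : ω ∈ Gset Q I 0
  · exact NN_succ_of_G h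
  · rw [NN_of_not_G h (Nat.zero_le 1)]
    simp only [Gset, Set.mem_setOf_eq, not_forall] at h
    obtain ⟨s₀, hs0, hs0t, _⟩ := h
    omega

lemma VV_succ (t : ℕ) (ω : Ω) :
    VV Q I (t + 1) ω = VV Q I t ω
      + Set.indicator (Gset Q I t) (fun ω' => Q (t + 1) ω' - Q t ω') ω := by
  by_cases h : ω ∈ Gset Q I t
  · rw [Set.indicator_of_mem h, VV, VV, NN_succ_of_G h, NN_of_G h]
    ring
  · rw [Set.indicator_of_notMem h, VV, VV, NN_of_not_G h le_rfl,
      NN_of_not_G h (Nat.le_succ t), add_zero]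

lemma measurableSet_Gset (hQm : ∀ t, Measurable (Q t)) (hI : MeasurableSet I) (t : ℕ) :
    MeasurableSet (Gset Q I t) := by
  have : Gset Q I t = ⋂ (s : ℕ), ⋂ (_ : 0 < s), ⋂ (_ : s ≤ t), Q s ⁻¹' I := by
    ext ω; simp [Gset]
  rw [this]
  exact MeasurableSet.iInter fun s => MeasurableSet.iInter fun _ =>
    MeasurableSet.iInter fun _ => (hQm s) hI

lemma measurable_VV (hQm : ∀ t, Measurable (Q t)) (hI : MeasurableSet I) (t : ℕ) :
    Measurable (VV Q I t) := by
  induction t with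
  | zero =>
    have : VV Q I 0 = Q 0 := by funext ω; rw [VV, NN_zero]
    rw [this]; exact hQm 0
  | succ t ih =>
    have : VV Q I (t + 1) = fun ω => VV Q I t ω
        + Set.indicator (Gset Q I t) (fun ω' => Q (t + 1) ω' - Q t ω') ω := by
      funext ω; exact VV_succ t ω
    rw [this]
    exact ih.add (((hQm (t+1)).sub (hQm t)).indicator (measurableSet_Gset hQm hI t))

section Claim1

variable [IsProbabilityMeasure μ] {Z : ℕ → Ω → ℝ} {M K : ℝ}

/-- walk hypothesis -/
def IsWalk (Q : ℕ → Ω → ℝ) (Z : ℕ → Ω → ℝ) (M : ℝ) : Prop :=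
  ∀ t ω, Q t ω = M + ∑ s ∈ Finset.range t, Z s ω

lemma IsWalk.zero (hQ : IsWalk Q Z M) (ω : Ω) : Q 0 ω = M := by simp [hQ 0 ω]

lemma IsWalk.succ (hQ : IsWalk Q Z M) (t : ℕ) (ω : Ω) : Q (t + 1) ω = Q t ω + Z t ω := by
  rw [hQ (t+1) ω, hQ t ω, Finset.sum_range_succ]; ring

lemma IsWalk.measurable (hQ : IsWalk Q Z M) (hZm : ∀ t, Measurable (Z t)) (t : ℕ) :
    Measurable (Q t) := by
  have : Q t = fun ω => M + ∑ s ∈ Finset.range t, Z s ω := by funext ω; exact hQ t ω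
  rw [this]
  exact measurable_const.add (Finset.measurable_sum _ fun s _ => hZm s)

lemma IsWalk.measurable_Fsig (hQ : IsWalk Q Z M) (hZm : ∀ t, Measurable (Z t))
    {s t : ℕ} (h : s ≤ t) : Measurable[Fsig Z t] (Q s) := by
  have : Q s = fun ω => M + ∑ u ∈ Finset.range s, Z u ω := by funext ω; exact hQ s ω
  rw [this]
  exact measurable_const.add (Finset.measurable_sum _ fun u hu =>
    Stmt7Aux.measurable_Fsig hZm (lt_of_lt_of_le (Finset.mem_range.1 hu) h))

/-- Bounds on the stopped walk, `I = Ico (M/2) M`. -/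
lemma VV_bounds (hQ : IsWalk Q Z M) (hZK : ∀ t ω, |Z t ω| ≤ K) (hK0 : 0 ≤ K)
    (hM0 : 0 < M) (t : ℕ) (ω : Ω) :
    M / 2 - K ≤ VV Q (Set.Ico (M/2) M) t ω ∧ VV Q (Set.Ico (M/2) M) t ω ≤ M + K := by
  set I := Set.Ico (M/2) M with hI
  induction t with
  | zero =>
    rw [VV, NN_zero, hQ.zero]
    constructor <;> linarith
  | succ t ih =>
    rw [VV_succ]
    by_cases h : ω ∈ Gset Q I t
    · rw [Set.indicator_of_mem h]
      have hVt : VV Q I t ω = Q t ω := by rw [VV, NN_of_G h]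
      have hQt : M / 2 ≤ Q t ω ∧ Q t ω ≤ M := by
        rcases Nat.eq_zero_or_pos t with rfl | ht
        · rw [hQ.zero]; constructor <;> linarith
        · have := h t ht le_rfl
          rw [hI] at this
          exact ⟨this.1, this.2.le⟩
      have hZ := hZK t ω
      have h1 := abs_le.1 hZ
      rw [hVt, hQ.succ]
      constructor <;> linarith [hQt.1, hQt.2]
    · rw [Set.indicator_of_notMem h, add_zero]
      exact ih

lemma exit_value_bounds (hQ : IsWalk Q Z M) (hZK : ∀ t ω, |Z t ω| ≤ K) (hK0 : 0 ≤ K)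
    (hM0 : 0 < M) {ω : Ω} (hT : exitTime Q (Set.Ico (M/2) M) ω ≠ 0) :
    M / 2 - K ≤ Q (exitTime Q (Set.Ico (M/2) M) ω) ω
      ∧ Q (exitTime Q (Set.Ico (M/2) M) ω) ω ≤ M + K := by
  set I := Set.Ico (M/2) M with hI
  obtain ⟨n, hn⟩ := Nat.exists_eq_succ_of_ne_zero hT
  have hQn : M / 2 ≤ Q n ω ∧ Q n ω ≤ M := by
    rcases Nat.eq_zero_or_pos n with rfl | hn0
    · rw [hQ.zero]; constructor <;> linarith
    · -- n < exitTime, so no exit at n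
      have hlt : n < sInf {t | 0 < t ∧ Q t ω ∉ I} := by
        rw [← exitTime, hn]; omega
      have := Nat.notMem_of_lt_sInf hlt
      simp only [Set.mem_setOf_eq, not_and, not_not] at this
      have hmem := this hn0
      rw [hI] at hmem
      exact ⟨hmem.1, hmem.2.le⟩
  have hZ := abs_le.1 (hZK n ω)
  rw [hn, hQ.succ]
  constructor <;> linarith [hQn.1, hQn.2]

/-- Main optional-stopping estimate for Claim 1. -/
lemma claim1 (hZm : ∀ t, Measurable (Z t))
    (hZiid : iIndepFun Z μ)
    (hZid : ∀ t, IdentDistrib (Z t) (Z 0) μ μ)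
    (hZK : ∀ t ω, |Z t ω| ≤ K) (hK0 : 0 ≤ K)
    (hQ : IsWalk Q Z M) (hM0 : 0 < M)
    (hEZ : ∫ ω, Z 0 ω ∂μ ≤ 0) {ε δ : ℝ} (hε : 0 < ε) (hδ : 0 < δ)
    (hA : ENNReal.ofReal δ ≤ μ {ω | Z 0 ω ≤ -ε})
    (hT0 : μ {ω | ∀ t, 0 < t → Q t ω ∈ Set.Ico (M/2) M} = 0) :
    ε * δ / (M / 2 + K) ≤ (μ {ω | Q (exitTime Q (Set.Ico (M/2) M) ω) ω < M / 2}).toReal := by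
  set I := Set.Ico (M/2) M with hIdef
  have hQm := hQ.measurable hZm
  set T := exitTime Q I with hTdef
  have hTm : Measurable T := measurable_exitTime hQm measurableSet_Ico
  set A := {ω | Z 0 ω ≤ -ε} with hAdef
  have hAm : MeasurableSet A := (hZm 0) measurableSet_Iic
  set D := {ω | Q (T ω) ω < M / 2} with hDdef
  have hQTm : Measurable (fun ω => Q (T ω) ω) := measurable_randomTime hQm hTm
  have hDm : MeasurableSet D := hQTm measurableSet_Iio
  have hc : 0 < M / 2 + K := by linarith
  -- the null set
  have hnull : μ {ω | T ω = 0} = 0 := by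
    have : {ω | T ω = 0} = {ω | ∀ t, 0 < t → Q t ω ∈ I} := by
      ext ω; exact exitTime_eq_zero_iff
    rw [this]; exact hT0
  -- VV bounds
  have hVb := VV_bounds hQ hZK hK0 hM0
  have hVabs : ∀ t ω, |VV Q I t ω| ≤ M + K := by
    intro t ω
    have := hVb t ω
    rw [abs_le]; constructor <;> linarith [this.1, this.2]
  have hVm := measurable_VV (I := I) hQm (measurableSet_Ico)
  -- Step D : decreasing integrals
  have hstep : ∀ t, 1 ≤ t → ∫ ω in A, VV Q I (t+1) ω ∂μ ≤ ∫ ω in A, VV Q I t ω ∂μ := by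
    intro t ht
    have hrec : ∀ ω, VV Q I (t+1) ω = VV Q I t ω
        + Set.indicator (Gset Q I t) (Z t) ω := by
      intro ω
      rw [VV_succ]
      congr 1
      by_cases h : ω ∈ Gset Q I t
      · rw [Set.indicator_of_mem h, Set.indicator_of_mem h, hQ.succ t ω]; ring
      · rw [Set.indicator_of_notMem h, Set.indicator_of_notMem h]
    have hGm : MeasurableSet (Gset Q I t) := measurableSet_Gset hQm measurableSet_Ico t
    have hintV : Integrable (VV Q I t) (μ.restrict A) :=
      integrable_of_bdd (hVm t) (hVabs t)
    have hintInd : Integrable (Set.indicator (Gset Q I t) (Z t)) (μ.restrict A) := by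
      apply integrable_of_bdd ((hZm t).indicator hGm)
      intro ω
      by_cases h : ω ∈ Gset Q I t
      · rw [Set.indicator_of_mem h]; exact hZK t ω
      · rw [Set.indicator_of_notMem h, abs_zero]
        exact le_trans (abs_nonneg _) (hZK t ω)
    have heq : ∫ ω in A, VV Q I (t+1) ω ∂μ
        = (∫ ω in A, VV Q I t ω ∂μ) + ∫ ω in A, Set.indicator (Gset Q I t) (Z t) ω ∂μ := by
      rw [← integral_add hintV hintInd]
      apply integral_congr_ae
      exact ae_of_all _ hrec
    have hsecond : ∫ ω in A, Set.indicator (Gset Q I t) (Z t) ω ∂μ ≤ 0 := by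
      rw [← integral_indicator hAm, Set.indicator_indicator]
      have hprod : Set.indicator (A ∩ Gset Q I t) (Z t)
          = fun ω => Set.indicator (A ∩ Gset Q I t) (fun _ => (1:ℝ)) ω * Z t ω := by
        funext ω
        by_cases h : ω ∈ A ∩ Gset Q I t
        · rw [Set.indicator_of_mem h, Set.indicator_of_mem h, one_mul]
        · rw [Set.indicator_of_notMem h, Set.indicator_of_notMem h, zero_mul]
      rw [hprod]
      have hAGm : MeasurableSet[Fsig Z t] (A ∩ Gset Q I t) := by
        apply MeasurableSet.inter
        · exact (Stmt7Aux.measurable_Fsig hZm (by omega : (0:ℕ) < t)) measurableSet_Iic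
        · have : Gset Q I t = ⋂ (s : ℕ), ⋂ (_ : 0 < s), ⋂ (_ : s ≤ t), Q s ⁻¹' I := by
            ext ω; simp [Gset]
          rw [this]
          exact MeasurableSet.iInter fun s => MeasurableSet.iInter fun _ =>
            MeasurableSet.iInter fun hs => (hQ.measurable_Fsig hZm hs) measurableSet_Ico
      have hmul := integral_mul_Fsig (μ := μ) hZm hZiid (t := t)
        (f := Set.indicator (A ∩ Gset Q I t) (fun _ => (1:ℝ))) (cf := 1)
        (measurable_const.indicator hAGm)
        (fun ω => by
          by_cases h : ω ∈ A ∩ Gset Q I t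
          · rw [Set.indicator_of_mem h]; simp
          · rw [Set.indicator_of_notMem h]; simp)
        (g := id) (cg := K) measurable_id (fun ω => hZK t ω)
      simp only [id] at hmul
      rw [hmul]
      apply mul_nonpos_of_nonneg_of_nonpos
      · apply integral_nonneg
        intro ω
        simp only [Pi.zero_apply]
        by_cases h : ω ∈ A ∩ Gset Q I t
        · rw [Set.indicator_of_mem h]; exact zero_le_one
        · rw [Set.indicator_of_notMem h]
      · rw [show ∫ ω, Z t ω ∂μ = ∫ ω, Z 0 ω ∂μ from (hZid t).integral_eq]
        exact hEZ
    linarith [heq, hsecond]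
  have hmono : ∀ t, 1 ≤ t → ∫ ω in A, VV Q I t ω ∂μ ≤ ∫ ω in A, VV Q I 1 ω ∂μ := by
    intro t ht
    induction t with
    | zero => omega
    | succ t ih =>
      rcases Nat.eq_zero_or_pos t with rfl | ht0
      · exact le_rfl
      · exact le_trans (hstep t ht0) (ih ht0)
  -- Step E : limit
  have hconv : Tendsto (fun t => ∫ ω in A, VV Q I t ω ∂μ) atTop
      (𝓝 (∫ ω in A, Q (T ω) ω ∂μ)) := by
    apply tendsto_integral_of_dominated_convergence (bound := fun _ => M + K)
    · exact fun t => ((hVm t)).aestronglyMeasurable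
    · exact integrable_const _
    · intro t
      exact ae_of_all _ fun ω => by
        rw [Real.norm_eq_abs]; exact hVabs t ω
    · -- a.e. convergence
      have hae : ∀ᵐ ω ∂(μ.restrict A), T ω ≠ 0 := by
        apply ae_restrict_of_ae
        rw [ae_iff]
        simpa using hnull
      filter_upwards [hae] with ω hω
      have hne : {s | 0 < s ∧ Q s ω ∉ I}.Nonempty := by
        by_contra hemp
        rw [Set.not_nonempty_iff_eq_empty] at hemp
        apply hω
        rw [hTdef, exitTime, hemp, Nat.sInf_empty]
      apply Tendsto.congr' _ tendsto_const_nhds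
      rw [Filter.EventuallyEq, eventually_atTop]
      refine ⟨T ω, fun t htt => ?_⟩
      have hnotG : ω ∉ Gset Q I t := by
        intro hG
        have hmem := Nat.sInf_mem hne
        rw [← exitTime, ← hTdef] at hmem
        exact hmem.2 (hG (T ω) (Nat.pos_of_ne_zero hω) htt)
      rw [VV, NN_of_not_G hnotG le_rfl, hTdef]
  have hupper : ∫ ω in A, Q (T ω) ω ∂μ ≤ (M - ε) * (μ A).toReal := by
    have h1 : ∫ ω in A, Q (T ω) ω ∂μ ≤ ∫ ω in A, VV Q I 1 ω ∂μ :=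
      le_of_tendsto hconv (eventually_atTop.2 ⟨1, fun t ht => hmono t ht⟩)
    have h2 : ∀ ω ∈ A, VV Q I 1 ω ≤ M - ε := by
      intro ω hω
      rw [VV, NN_one, hQ 1]
      simp only [Finset.range_one, Finset.sum_singleton]
      have : Z 0 ω ≤ -ε := hω
      linarith
    have h3 : ∫ ω in A, VV Q I 1 ω ∂μ ≤ ∫ _ω in A, (M - ε) ∂μ := by
      apply setIntegral_mono_on (integrable_of_bdd (hVm 1) (hVabs 1)) (integrableOn_const (measure_lt_top μ A).ne) hAm h2
    rw [setIntegral_const] at h3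
    calc ∫ ω in A, Q (T ω) ω ∂μ ≤ ∫ ω in A, VV Q I 1 ω ∂μ := h1
      _ ≤ (μ A).toReal • (M - ε) := h3
      _ = (M - ε) * (μ A).toReal := by rw [smul_eq_mul]; ring
  -- Step F : lower bound
  have hQTabs : ∀ ω, |Q (T ω) ω| ≤ M + K := by
    intro ω
    by_cases h : T ω = 0
    · rw [h, hQ.zero, abs_of_pos hM0]; linarith
    · have := exit_value_bounds hQ hZK hK0 hM0 h
      rw [abs_le]; constructor <;> linarith [this.1, this.2]
  have hlower : M * (μ A).toReal - (M / 2 + K) * (μ (A ∩ D)).toReal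
      ≤ ∫ ω in A, Q (T ω) ω ∂μ := by
    have hptw : ∀ᵐ ω ∂(μ.restrict A),
        M - (M / 2 + K) * Set.indicator D (fun _ => (1:ℝ)) ω ≤ Q (T ω) ω := by
      apply ae_restrict_of_ae
      have hae : ∀ᵐ ω ∂μ, T ω ≠ 0 := by rw [ae_iff]; simpa using hnull
      filter_upwards [hae] with ω hω
      by_cases hD : ω ∈ D
      · rw [Set.indicator_of_mem hD]
        have := (exit_value_bounds hQ hZK hK0 hM0 hω).1
        linarith
      · rw [Set.indicator_of_notMem hD]
        have hge : ¬ (Q (T ω) ω < M / 2) := hD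
        push_neg at hge
        have hnotI : Q (T ω) ω ∉ I := by
          have hne : {s | 0 < s ∧ Q s ω ∉ I}.Nonempty := by
            by_contra hemp
            rw [Set.not_nonempty_iff_eq_empty] at hemp
            apply hω
            rw [hTdef, exitTime, hemp, Nat.sInf_empty]
          have hmem := Nat.sInf_mem hne
          rw [← exitTime, ← hTdef] at hmem
          exact hmem.2
        rw [hIdef] at hnotI
        simp only [Set.mem_Ico, not_and, not_lt] at hnotI
        have := hnotI hge
        linarith
    have hint1 : Integrable (fun ω => M - (M / 2 + K) * Set.indicator D (fun _ => (1:ℝ)) ω)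
        (μ.restrict A) := by
      apply Integrable.sub (integrable_const _)
      apply Integrable.const_mul
      apply integrable_of_bdd (c := 1) (measurable_const.indicator hDm)
      intro ω
      by_cases h : ω ∈ D
      · rw [Set.indicator_of_mem h]; simp
      · rw [Set.indicator_of_notMem h]; simp
    have hint2 : Integrable (fun ω => Q (T ω) ω) (μ.restrict A) :=
      integrable_of_bdd hQTm hQTabs
    have := integral_mono_ae hint1 hint2 hptw
    have heval : ∫ ω in A, (M - (M / 2 + K) * Set.indicator D (fun _ => (1:ℝ)) ω) ∂μ
        = M * (μ A).toReal - (M / 2 + K) * (μ (A ∩ D)).toReal := by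
      rw [integral_sub (integrable_const _) (by
        apply Integrable.const_mul
        apply integrable_of_bdd (c := 1) (measurable_const.indicator hDm)
        intro ω
        by_cases h : ω ∈ D
        · rw [Set.indicator_of_mem h]; simp
        · rw [Set.indicator_of_notMem h]; simp)]
      rw [setIntegral_const, integral_const_mul]
      congr 1
      · rw [smul_eq_mul, mul_comm]; rfl
      · congr 1
        rw [← integral_indicator hAm, Set.indicator_indicator, Set.inter_comm]
        rw [integral_indicator_const (1:ℝ) (hDm.inter hAm)]
        rw [smul_eq_mul, mul_one, Set.inter_comm]; rfl
    rw [heval] at this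
    exact this
  -- Step G : combine
  have hμA : δ ≤ (μ A).toReal := by
    have h1 : (ENNReal.ofReal δ).toReal ≤ (μ A).toReal :=
      ENNReal.toReal_mono (measure_ne_top μ A) hA
    rwa [ENNReal.toReal_ofReal hδ.le] at h1
  have hεA : ε * (μ A).toReal ≤ (M / 2 + K) * (μ (A ∩ D)).toReal := by nlinarith [hupper, hlower]
  have hAD : μ (A ∩ D) ≤ μ D := measure_mono Set.inter_subset_right
  have hADr : (μ (A ∩ D)).toReal ≤ (μ D).toReal :=
    ENNReal.toReal_mono (measure_ne_top μ D) hAD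
  rw [div_le_iff₀ hc]
  have hεδ : ε * δ ≤ ε * (μ A).toReal := by nlinarith
  calc ε * δ ≤ (M / 2 + K) * (μ (A ∩ D)).toReal := by linarith
    _ ≤ (M / 2 + K) * (μ D).toReal := by nlinarith
    _ = (μ D).toReal * (M / 2 + K) := by ring

end Claim1

variable [IsProbabilityMeasure μ]


lemma fail_bound {Z : ℕ → Ω → ℝ} (hZm : ∀ t, Measurable (Z t))
    (hZiid : iIndepFun Z μ)
    (hZid : ∀ t, IdentDistrib (Z t) (Z 0) μ μ)
    {K : ℝ} (hZK : ∀ t ω, |Z t ω| ≤ K) (hK0 : 0 ≤ K) {l m : ℝ}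
    (hl : 0 < l) (hlK : l * K ≤ 1) (hm : 0 < m) (hEZ : ∫ ω, Z 0 ω ∂μ ≤ -m)
    (hlK2 : l * K ^ 2 ≤ m / 2) (a b : ℝ) {F E : Set Ω}
    (hF : F ⊆ (⋃ t, {ω | a ≤ ∑ s ∈ Finset.range t, Z s ω}) ∪ E)
    (hE : ∀ t, 0 < t → E ⊆ {ω | b ≤ ∑ s ∈ Finset.range t, Z s ω}) :
    μ F ≤ ENNReal.ofReal (Real.exp (-(l * a)) * (2 / (l * m))) := by
  calc μ F ≤ μ ((⋃ t, {ω | a ≤ ∑ s ∈ Finset.range t, Z s ω}) ∪ E) := measure_mono hF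
    _ ≤ μ (⋃ t, {ω | a ≤ ∑ s ∈ Finset.range t, Z s ω}) + μ E := measure_union_le _ _
    _ = μ (⋃ t, {ω | a ≤ ∑ s ∈ Finset.range t, Z s ω}) := by
        rw [measure_never hZm hZiid hZid hZK hK0 hl hlK hm hEZ hlK2 b hE, add_zero]
    _ ≤ ENNReal.ofReal (Real.exp (-(l * a)) * (2 / (l * m))) :=
        tail_bound hZm hZiid hZid hZK hK0 hl hlK hm hEZ hlK2 a

lemma success_bound {Sev : Set Ω} (hmeas : MeasurableSet Sev) {x : ℝ} (hx : 0 ≤ x)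
    (h : μ Sevᶜ ≤ ENNReal.ofReal x) : 1 - x ≤ (μ Sev).toReal := by
  have h1 : (μ Sevᶜ).toReal ≤ x := ENNReal.toReal_le_of_le_ofReal hx h
  have h2 : (μ Sev).toReal + (μ Sevᶜ).toReal = 1 := by
    have h3 := measure_add_measure_compl (μ := μ) hmeas
    rw [measure_univ] at h3
    have h4 := congrArg ENNReal.toReal h3
    rwa [ENNReal.toReal_add (measure_ne_top _ _) (measure_ne_top _ _), ENNReal.toReal_one] at h4
  linarith

lemma exp_glue {μN Δ D0 K M : ℝ} (hμN : 0 < μN) (hΔ : 0 < Δ) (hD0 : 0 < D0)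
    (hK0 : 0 ≤ K) (hM0 : 0 < M)
    (hlK : (Δ * μN / D0) * K ≤ 1)
    (hM : (8 * D0 / (3 * (Δ * μN))) * (2 / ((Δ * μN / D0) * (Δ * μN))) + 1 ≤ M) :
    Real.exp (-((Δ * μN / D0) * (M / 2 - K))) * (2 / ((Δ * μN / D0) * (Δ * μN)))
      ≤ Real.exp (-(μN / (8 * D0) * Δ * M)) := by
  set m := Δ * μN with hmdef
  set l := m / D0 with hldef
  have hm : 0 < m := mul_pos hΔ hμN
  have hl : 0 < l := div_pos hm hD0
  have hX : 0 < 2 / (l * m) := by positivity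
  have hMge : (3 * m / (8 * D0)) * M ≥ 2 / (l * m) := by
    have h1 : (8 * D0 / (3 * m)) * (2 / (l * m)) ≤ M - 1 := by linarith
    have h2 := mul_le_mul_of_nonneg_left h1 (le_of_lt (by positivity : (0:ℝ) < 3 * m / (8 * D0)))
    have h3 : (3 * m / (8 * D0)) * ((8 * D0 / (3 * m)) * (2 / (l * m))) = 2 / (l * m) := by
      field_simp
    rw [h3] at h2
    nlinarith [mul_pos (show (0:ℝ) < 3 * m / (8 * D0) by positivity) (show (0:ℝ) < (1:ℝ) by norm_num)]
  have key : 2 / (l * m) ≤ Real.exp (l * (M / 2 - K) - μN / (8 * D0) * Δ * M) := by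
    apply le_trans _ (Real.add_one_le_exp _)
    have harith : l * (M / 2 - K) - μN / (8 * D0) * Δ * M = (3 * m / (8 * D0)) * M - l * K := by
      rw [hldef, hmdef]; field_simp; ring
    rw [harith]
    linarith
  calc Real.exp (-(l * (M / 2 - K))) * (2 / (l * m))
      ≤ Real.exp (-(l * (M / 2 - K))) * Real.exp (l * (M / 2 - K) - μN / (8 * D0) * Δ * M) :=
        mul_le_mul_of_nonneg_left key (Real.exp_pos _).le
    _ = Real.exp (-(μN / (8 * D0) * Δ * M)) := by
        rw [← Real.exp_add]; ring_nf



end Stmt7Aux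

open Stmt7Aux

/-- Lemma 3 of the paper. For the upper-regime walk
`Q_t = S₀ + Σ_{s≤t}(B_s − N_s(α*+Δ))` with exit time `τ̃₂` from `[M/2, M)` and the
lower-regime walk `Q'_t = S₀ + Σ_{s≤t}(B_s − N_s(α*−Δ))` with exit time `τ̃₁` from
`(0, M/2)`: the walk started at `M` crosses below `M/2` before hitting `M` with probability
at least `C/M`; started in `[M/2 − Z_min, M/2)`, `Q'` exits above `M/2` with probability at
least `1 − e^{−C₁ΔM}`; and started in `[M/2, M/2 + Z_max]`, `Q` exits below `M/2` with
probability at least `1 − e^{−C₂ΔM}`, where `C, C₁, C₂ > 0` do not depend on `M` or `Δ`. -/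
theorem stmt_7
    {Ω : Type*} [MeasurableSpace Ω] (μ : Measure Ω) [IsProbabilityMeasure μ]
    (Bmax Amax : ℝ) (Nmax : ℕ) (B N : ℕ → Ω → ℝ)
    (hBN : IsIIDPair μ B N)
    (hBrange : ∀ t ω, B t ω ∈ Set.Icc 0 Bmax)
    (hNrange : NatValued N Nmax)
    (hμB : 0 < ∫ ω, B 0 ω ∂μ) (hμN : 0 < ∫ ω, N 0 ω ∂μ)
    (αstar : ℝ) (hαdef : αstar = (∫ ω, B 0 ω ∂μ) / ∫ ω, N 0 ω ∂μ) :
    ∀ ε δ : ℝ, 0 < ε → 0 < δ →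
      ∃ C C₁ C₂ : ℝ, 0 < C ∧ 0 < C₁ ∧ 0 < C₂ ∧
        ∀ Δ : ℝ, 0 < Δ → Δ < αstar → αstar + Δ ≤ Amax →
          ENNReal.ofReal δ ≤ μ {ω | ε ≤ B 0 ω - N 0 ω * (αstar + Δ)} →
          ENNReal.ofReal δ ≤ μ {ω | B 0 ω - N 0 ω * (αstar - Δ) ≤ -ε} →
          ∃ M₁ : ℝ, 0 < M₁ ∧ ∀ M, M₁ ≤ M →
            (C / M ≤ (μ {ω |
                walkC B N (αstar + Δ) M
                  (exitTime (walkC B N (αstar + Δ) M) (Set.Ico (M / 2) M) ω) ω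
                  < M / 2}).toReal) ∧
            (∀ S, M / 2 - Amax * Nmax ≤ S → S < M / 2 →
              1 - Real.exp (-(C₁ * Δ * M)) ≤ (μ {ω |
                M / 2 ≤ walkC B N (αstar - Δ) S
                  (exitTime (walkC B N (αstar - Δ) S) (Set.Ioo 0 (M / 2)) ω) ω}).toReal) ∧
            (∀ S, M / 2 ≤ S → S ≤ M / 2 + Bmax →
              1 - Real.exp (-(C₂ * Δ * M)) ≤ (μ {ω |
                walkC B N (αstar + Δ) S
                  (exitTime (walkC B N (αstar + Δ) S) (Set.Ico (M / 2) M) ω) ω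
                  < M / 2}).toReal) := by

  obtain ⟨hBm, hNm, hpiid, hpid, -⟩ := hBN
  intro ε δ hε hδ
  have hΩ : Nonempty Ω := by
    by_contra h
    rw [not_nonempty_iff] at h
    have h1 : (μ Set.univ) = 1 := measure_univ
    rw [Set.univ_eq_empty_iff.2 h, measure_empty] at h1
    exact zero_ne_one h1
  obtain ⟨ω₀⟩ := hΩ
  have hB0 : ∀ t ω, 0 ≤ B t ω := fun t ω => (hBrange t ω).1
  have hBB : ∀ t ω, B t ω ≤ Bmax := fun t ω => (hBrange t ω).2
  have hN0 : ∀ t ω, 0 ≤ N t ω := by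
    intro t ω; obtain ⟨k, _, he⟩ := hNrange t ω; rw [he]; positivity
  have hNN : ∀ t ω, N t ω ≤ (Nmax : ℝ) := by
    intro t ω; obtain ⟨k, hk, he⟩ := hNrange t ω; rw [he]; exact_mod_cast hk
  have hintB : Integrable (B 0) μ :=
    integrable_of_bdd (hBm 0) (c := Bmax) (fun ω => abs_le.2 ⟨by
      have := hB0 0 ω; have := le_trans (hB0 0 ω₀) (hBB 0 ω₀); linarith, hBB 0 ω⟩)
  have hintN : Integrable (N 0) μ :=
    integrable_of_bdd (hNm 0) (c := (Nmax : ℝ)) (fun ω => abs_le.2 ⟨by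
      have := hN0 0 ω; have : (0:ℝ) ≤ (Nmax:ℝ) := Nat.cast_nonneg _; linarith, hNN 0 ω⟩)
  have hμBle : (∫ ω, B 0 ω ∂μ) ≤ Bmax := by
    calc ∫ ω, B 0 ω ∂μ ≤ ∫ _ω, Bmax ∂μ :=
          integral_mono hintB (integrable_const _) (fun ω => hBB 0 ω)
      _ = Bmax := by simp
  have hBmaxpos : 0 < Bmax := lt_of_lt_of_le hμB hμBle
  have hα0 : 0 < αstar := hαdef ▸ div_pos hμB hμN
  have hαμ : αstar * (∫ ω, N 0 ω ∂μ) = ∫ ω, B 0 ω ∂μ := by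
    rw [hαdef]; field_simp
  set K := Bmax + |Amax| * (Nmax : ℝ) with hKdef
  have hK0 : 0 < K := by
    have h1 : (0:ℝ) ≤ |Amax| * (Nmax:ℝ) := by positivity
    linarith
  set D0 := 2 * K ^ 2 + (∫ ω, B 0 ω ∂μ) * K + 1 with hD0def
  have hD0 : 0 < D0 := by nlinarith [sq_nonneg K, mul_pos hμB hK0]
  refine ⟨ε * δ / 2, (∫ ω, N 0 ω ∂μ) / (8 * D0), (∫ ω, N 0 ω ∂μ) / (8 * D0),
    by positivity, by positivity, by positivity, ?_⟩
  intro Δ hΔ hΔα hAmaxh hhyp1 hhyp2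
  have hAmax0 : 0 < Amax := lt_of_lt_of_le (by linarith) hAmaxh
  have habsA : |Amax| = Amax := abs_of_pos hAmax0
  set m := Δ * (∫ ω, N 0 ω ∂μ) with hmdef
  have hm : 0 < m := mul_pos hΔ hμN
  set l := m / D0 with hldef
  have hl : 0 < l := div_pos hm hD0
  have hmB : m ≤ ∫ ω, B 0 ω ∂μ := by
    rw [hmdef, ← hαμ]
    exact mul_le_mul_of_nonneg_right hΔα.le hμN.le
  have hlK : l * K ≤ 1 := by
    rw [hldef, div_mul_eq_mul_div, div_le_one hD0]
    nlinarith [mul_le_mul_of_nonneg_right hmB hK0.le, sq_nonneg K]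
  have hlK2 : l * K ^ 2 ≤ m / 2 := by
    rw [hldef, div_mul_eq_mul_div, div_le_div_iff₀ hD0 two_pos]
    nlinarith [sq_nonneg K, hm.le, hμB.le, hK0.le, mul_pos hμB hK0]
  -- the step processes
  set Zp : ℕ → Ω → ℝ := fun t ω => B t ω - N t ω * (αstar + Δ) with hZpdef
  set Wm : ℕ → Ω → ℝ := fun t ω => N t ω * (αstar - Δ) - B t ω with hWmdef
  have hgp : Measurable (fun p : ℝ × ℝ => p.1 - p.2 * (αstar + Δ)) :=
    measurable_fst.sub (measurable_snd.mul_const _)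
  have hgm : Measurable (fun p : ℝ × ℝ => p.2 * (αstar - Δ) - p.1) :=
    (measurable_snd.mul_const _).sub measurable_fst
  have hZpm : ∀ t, Measurable (Zp t) := fun t => (hBm t).sub ((hNm t).mul_const _)
  have hWmm : ∀ t, Measurable (Wm t) := fun t => ((hNm t).mul_const _).sub (hBm t)
  have hZpiid : iIndepFun Zp μ :=
    hpiid.comp (fun _ => fun p : ℝ × ℝ => p.1 - p.2 * (αstar + Δ)) (fun _ => hgp)
  have hWmiid : iIndepFun Wm μ :=
    hpiid.comp (fun _ => fun p : ℝ × ℝ => p.2 * (αstar - Δ) - p.1) (fun _ => hgm)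
  have hZpid : ∀ t, IdentDistrib (Zp t) (Zp 0) μ μ := fun t => (hpid t).comp hgp
  have hWmid : ∀ t, IdentDistrib (Wm t) (Wm 0) μ μ := fun t => (hpid t).comp hgm
  have hNA : ∀ t ω (α : ℝ), 0 < α → α ≤ Amax → 0 ≤ N t ω * α ∧ N t ω * α ≤ |Amax| * Nmax := by
    intro t ω α hα1 hα2
    constructor
    · exact mul_nonneg (hN0 t ω) hα1.le
    · rw [habsA, mul_comm]
      exact mul_le_mul hα2 (hNN t ω) (hN0 t ω) hAmax0.le
  have hZpK : ∀ t ω, |Zp t ω| ≤ K := by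
    intro t ω
    have h1 := hNA t ω (αstar + Δ) (by linarith) hAmaxh
    rw [abs_le]
    constructor
    · simp only [hZpdef]; rw [hKdef]; nlinarith [hB0 t ω]
    · simp only [hZpdef]; rw [hKdef]; nlinarith [hBB t ω, h1.1]
  have hWmK : ∀ t ω, |Wm t ω| ≤ K := by
    intro t ω
    have h1 := hNA t ω (αstar - Δ) (by linarith) (by linarith)
    rw [abs_le]
    constructor
    · simp only [hWmdef]; rw [hKdef]; nlinarith [hBB t ω, h1.1]
    · simp only [hWmdef]; rw [hKdef]; nlinarith [hB0 t ω, h1.2]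
  have hEZp : ∫ ω, Zp 0 ω ∂μ = -m := by
    simp only [hZpdef]
    rw [integral_sub hintB (hintN.mul_const _), integral_mul_const, hmdef]
    nlinarith [hαμ]
  have hEWm : ∫ ω, Wm 0 ω ∂μ = -m := by
    simp only [hWmdef]
    rw [integral_sub (hintN.mul_const _) hintB, integral_mul_const, hmdef]
    nlinarith [hαμ]
  -- choice of M₁
  refine ⟨max (4 * K + 4) ((8 * D0 / (3 * m)) * (2 / (l * m)) + 1),
    lt_of_lt_of_le (by linarith) (le_max_left _ _), ?_⟩
  intro M hM
  have hM4 : 4 * K + 4 ≤ M := le_trans (le_max_left _ _) hM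
  have hMexp : (8 * D0 / (3 * m)) * (2 / (l * m)) + 1 ≤ M := le_trans (le_max_right _ _) hM
  have hM0 : 0 < M := by nlinarith
  have hglue : Real.exp (-(l * (M / 2 - K))) * (2 / (l * m))
      ≤ Real.exp (-((∫ ω, N 0 ω ∂μ) / (8 * D0) * Δ * M)) := by
    have := exp_glue (μN := ∫ ω, N 0 ω ∂μ) (Δ := Δ) (D0 := D0) (K := K) (M := M)
      hμN hΔ hD0 hK0.le hM0 (by rw [hldef, hmdef] at hlK; exact hlK)
      (by rw [hldef, hmdef] at hMexp; exact hMexp)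
    rw [hldef, hmdef]
    convert this using 4 <;> rw [hmdef]
  refine ⟨?_, ?_, ?_⟩
  -- CLAIM 1
  · have hQ1 : IsWalk (walkC B N (αstar + Δ) M) Zp M := fun t ω => rfl
    have hT0 : μ {ω | ∀ t, 0 < t → walkC B N (αstar + Δ) M t ω ∈ Set.Ico (M / 2) M} = 0 := by
      apply measure_never hZpm hZpiid hZpid hZpK hK0.le hl hlK hm (le_of_eq hEZp) hlK2 (-(M / 2))
      intro t ht ω hω
      have h1 := (hω t ht).1
      have h2 : walkC B N (αstar + Δ) M t ω = M + ∑ s ∈ Finset.range t, Zp s ω := hQ1 t ω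
      simp only [Set.mem_setOf_eq]
      linarith
    have hA : ENNReal.ofReal δ ≤ μ {ω | Zp 0 ω ≤ -ε} := by
      refine le_trans hhyp2 (measure_mono ?_)
      intro ω hω
      simp only [Set.mem_setOf_eq] at hω ⊢
      simp only [hZpdef]
      nlinarith [hN0 0 ω]
    have hclaim := claim1 hZpm hZpiid hZpid hZpK hK0.le hQ1 hM0
      (by rw [hEZp]; linarith) hε hδ hA hT0
    refine le_trans ?_ hclaim
    rw [div_le_div_iff₀ hM0 (by linarith : (0:ℝ) < M / 2 + K)]
    nlinarith [mul_pos hε hδ]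
  -- CLAIM 2
  · intro S hS1 hS2
    have hQ2 : ∀ t, Measurable (walkC B N (αstar - Δ) S t) := by
      intro t
      have : walkC B N (αstar - Δ) S t
          = fun ω => S + ∑ s ∈ Finset.range t, (B s ω - N s ω * (αstar - Δ)) := rfl
      rw [this]
      exact measurable_const.add
        (Finset.measurable_sum _ fun s _ => (hBm s).sub ((hNm s).mul_const _))
    set TT := exitTime (walkC B N (αstar - Δ) S) (Set.Ioo 0 (M / 2)) with hTTdef
    have hSev : MeasurableSet {ω | M / 2 ≤ walkC B N (αstar - Δ) S (TT ω) ω} :=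
      (measurable_randomTime hQ2 (measurable_exitTime hQ2 measurableSet_Ioo)) measurableSet_Ici
    apply success_bound hSev (Real.exp_pos _).le
    have hARN : Amax * (Nmax : ℝ) ≤ |Amax| * Nmax :=
      mul_le_mul_of_nonneg_right (le_abs_self _) (Nat.cast_nonneg _)
    have hAK : Amax * (Nmax : ℝ) ≤ K := by rw [hKdef]; linarith
    have hKAK : M / 2 - K ≤ S := by linarith
    have hsum : ∀ t ω, walkC B N (αstar - Δ) S t ω = S - ∑ s ∈ Finset.range t, Wm s ω := by
      intro t ω
      have h1 : ∑ s ∈ Finset.range t, (B s ω - N s ω * (αstar - Δ))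
          = - ∑ s ∈ Finset.range t, Wm s ω := by
        rw [← Finset.sum_neg_distrib]
        apply Finset.sum_congr rfl
        intro s _
        simp only [hWmdef]
        ring
      show S + ∑ s ∈ Finset.range t, (B s ω - N s ω * (αstar - Δ)) = _
      rw [h1]
      ring
    have hfail := fail_bound hWmm hWmiid hWmid hWmK hK0.le hl hlK hm (le_of_eq hEWm) hlK2
      (M / 2 - K) (-K)
      (F := {ω | M / 2 ≤ walkC B N (αstar - Δ) S (TT ω) ω}ᶜ)
      (E := {ω | ∀ t, 0 < t → walkC B N (αstar - Δ) S t ω ∈ Set.Ioo 0 (M / 2)}) ?_ ?_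
    · exact le_trans hfail (ENNReal.ofReal_le_ofReal hglue)
    · -- inclusion of the failure event
      intro ω hω
      rw [Set.mem_compl_iff, Set.mem_setOf_eq, not_le] at hω
      by_cases hnev : ∀ t, 0 < t → walkC B N (αstar - Δ) S t ω ∈ Set.Ioo 0 (M / 2)
      · exact Or.inr hnev
      · left
        push_neg at hnev
        obtain ⟨t₀, ht₀, hout⟩ := hnev
        have hne : {s | 0 < s ∧ walkC B N (αstar - Δ) S s ω ∉ Set.Ioo 0 (M / 2)}.Nonempty :=
          ⟨t₀, ht₀, hout⟩
        have hmem := Nat.sInf_mem hne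
        rw [← exitTime, ← hTTdef] at hmem
        have hle0 : walkC B N (αstar - Δ) S (TT ω) ω ≤ 0 := by
          by_contra hpos
          push_neg at hpos
          exact hmem.2 ⟨hpos, hω⟩
        refine Set.mem_iUnion.2 ⟨TT ω, ?_⟩
        simp only [Set.mem_setOf_eq]
        have h3 := hsum (TT ω) ω
        linarith
    · -- never-exit set inclusion
      intro t ht ω hω
      have h1 := (hω t ht).2
      have h2 := hsum t ω
      simp only [Set.mem_setOf_eq]
      linarith
  -- CLAIM 3
  · intro S hS1 hS2
    have hQ3 : ∀ t, Measurable (walkC B N (αstar + Δ) S t) := by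
      intro t
      have : walkC B N (αstar + Δ) S t
          = fun ω => S + ∑ s ∈ Finset.range t, (B s ω - N s ω * (αstar + Δ)) := rfl
      rw [this]
      exact measurable_const.add
        (Finset.measurable_sum _ fun s _ => (hBm s).sub ((hNm s).mul_const _))
    set TT := exitTime (walkC B N (αstar + Δ) S) (Set.Ico (M / 2) M) with hTTdef
    have hSev : MeasurableSet {ω | walkC B N (αstar + Δ) S (TT ω) ω < M / 2} :=
      (measurable_randomTime hQ3 (measurable_exitTime hQ3 measurableSet_Ico)) measurableSet_Iio
    apply success_bound hSev (Real.exp_pos _).le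
    have hsum : ∀ t ω, walkC B N (αstar + Δ) S t ω = S + ∑ s ∈ Finset.range t, Zp s ω :=
      fun t ω => rfl
    have hBK : Bmax ≤ K := by
      have h1 : (0:ℝ) ≤ |Amax| * (Nmax:ℝ) := by positivity
      rw [hKdef]; linarith
    have hfail := fail_bound hZpm hZpiid hZpid hZpK hK0.le hl hlK hm (le_of_eq hEZp) hlK2
      (M / 2 - K) (-K)
      (F := {ω | walkC B N (αstar + Δ) S (TT ω) ω < M / 2}ᶜ)
      (E := {ω | ∀ t, 0 < t → walkC B N (αstar + Δ) S t ω ∈ Set.Ico (M / 2) M}) ?_ ?_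
    · exact le_trans hfail (ENNReal.ofReal_le_ofReal hglue)
    · intro ω hω
      rw [Set.mem_compl_iff, Set.mem_setOf_eq, not_lt] at hω
      by_cases hnev : ∀ t, 0 < t → walkC B N (αstar + Δ) S t ω ∈ Set.Ico (M / 2) M
      · exact Or.inr hnev
      · left
        push_neg at hnev
        obtain ⟨t₀, ht₀, hout⟩ := hnev
        have hne : {s | 0 < s ∧ walkC B N (αstar + Δ) S s ω ∉ Set.Ico (M / 2) M}.Nonempty :=
          ⟨t₀, ht₀, hout⟩
        have hmem := Nat.sInf_mem hne
        rw [← exitTime, ← hTTdef] at hmem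
        have hgeM : M ≤ walkC B N (αstar + Δ) S (TT ω) ω := by
          by_contra hlt
          push_neg at hlt
          exact hmem.2 ⟨hω, hlt⟩
        refine Set.mem_iUnion.2 ⟨TT ω, ?_⟩
        simp only [Set.mem_setOf_eq]
        have h3 := hsum (TT ω) ω
        linarith
    · intro t ht ω hω
      have h1 := (hω t ht).1
      have h2 := hsum t ω
      simp only [Set.mem_setOf_eq]
      linarith
end
end

section
/- Let (Z_t)_{t≥1} be i.i.d. with μ = E[Z_1] > 0 and Z_1 ∈ [−Z_min, Z_max] almost surely, with P(Z_1 < 0) > 0, and suppose there exist ε, δ > 0 with P(Z_1 ≥ ε) ≥ δ and P(Z_1 ≤ −ε) ≥ δ. Let Q_t = M + Σ_{s=1}^t Z_s and τ = inf{t > 0 : Q_t ∉ (0, M)}. Then P(Q_τ ≥ M | Z_1 < 0) ≥ ( M + E[Z_1 | Z_1 < 0] ) / ( M + Z_max ). -/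
open MeasureTheory ProbabilityTheory Filter Set Real
open scoped ENNReal NNReal

noncomputable section

/-- The random walk `Q_t = S0 + Σ_{s=1}^t Z_s` started at `S0` with increments `Z`.
(Indexing: the paper's `Z_t` for `t ≥ 1` corresponds to `Z (t-1)` here.) -/
def walkZ {Ω : Type*} (S0 : ℝ) (Z : ℕ → Ω → ℝ) (t : ℕ) (ω : Ω) : ℝ :=
  S0 + ∑ s ∈ Finset.range t, Z s ω

/-- First exit time (at a positive time) of the walk from the open interval `(0, M)`;
by convention `sInf ∅ = 0`. -/
def exitZ {Ω : Type*} (M S0 : ℝ) (Z : ℕ → Ω → ℝ) (ω : Ω) : ℕ :=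
  sInf {t | 0 < t ∧ walkZ S0 Z t ω ∉ Set.Ioo 0 M}

/-- The value of the walk at its exit time. -/
def stopVal {Ω : Type*} (M S0 : ℝ) (Z : ℕ → Ω → ℝ) (ω : Ω) : ℝ :=
  walkZ S0 Z (exitZ M S0 Z ω) ω

/-- `Z` is an i.i.d. sequence of (measurable) real random variables. -/
def IsIID {Ω : Type*} [MeasurableSpace Ω] (μ : Measure Ω) (Z : ℕ → Ω → ℝ) : Prop :=
  (∀ t, Measurable (Z t)) ∧ iIndepFun Z μ ∧
  ∀ t, IdentDistrib (Z t) (Z 0) μ μ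

/-- Elementary conditional expectation of `f` given the event `E`. -/
def cexp {Ω : Type*} [MeasurableSpace Ω] (μ : Measure Ω) (f : Ω → ℝ) (E : Set Ω) : ℝ :=
  (∫ ω in E, f ω ∂μ) / (μ E).toReal

/-- Elementary conditional probability of `A` given the event `E`. -/
def cprob {Ω : Type*} [MeasurableSpace Ω] (μ : Measure Ω) (A E : Set Ω) : ℝ :=
  (μ (A ∩ E)).toReal / (μ E).toReal

/- ### Auxiliary definitions and lemmas -/

section Aux

open scoped Classical

variable {Ω : Type*}

/-- "Not yet exited by time `n`": the walk stays in `(0,M)` at all times `1..n`. -/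
def notex (M : ℝ) (Z : ℕ → Ω → ℝ) (n : ℕ) (ω : Ω) : Prop :=
  ∀ t, 1 ≤ t → t ≤ n → walkZ M Z t ω ∈ Set.Ioo 0 M

/-- The stopped walk: equals `Q_n` before exit, `Q_τ` afterwards (and stays `M` forever on
never-exiting paths' limit version). -/
noncomputable def Ystop (M : ℝ) (Z : ℕ → Ω → ℝ) (n : ℕ) (ω : Ω) : ℝ :=
  if notex M Z n ω then walkZ M Z n ω else stopVal M M Z ω

variable {M Zmin Zmax : ℝ} {Z : ℕ → Ω → ℝ} {ω : Ω} {n : ℕ}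

lemma walkZ_succ (S0 : ℝ) (t : ℕ) :
    walkZ S0 Z (t + 1) ω = walkZ S0 Z t ω + Z t ω := by
  simp [walkZ, Finset.sum_range_succ, add_assoc]

lemma walkZ_zero (S0 : ℝ) : walkZ S0 Z 0 ω = S0 := by simp [walkZ]

lemma notex_zero : notex M Z 0 ω := by
  intro t ht ht0; omega

lemma notex_anti (h : notex M Z (n + 1) ω) : notex M Z n ω :=
  fun t ht htn => h t ht (htn.trans n.le_succ)

lemma notex_of_le {m : ℕ} (hmn : m ≤ n) (h : notex M Z n ω) : notex M Z m ω :=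
  fun t ht htm => h t ht (htm.trans hmn)

/-- If the walk has not exited by `n` but `Q_{n+1} ∉ (0,M)`, then the exit time is `n+1`. -/
lemma exit_eq_of (h1 : notex M Z n ω) (h2 : walkZ M Z (n + 1) ω ∉ Set.Ioo 0 M) :
    exitZ M M Z ω = n + 1 := by
  rw [exitZ]
  have hmem : n + 1 ∈ {t | 0 < t ∧ walkZ M Z t ω ∉ Set.Ioo 0 M} := ⟨n.succ_pos, h2⟩
  have hle : sInf {t | 0 < t ∧ walkZ M Z t ω ∉ Set.Ioo 0 M} ≤ n + 1 := Nat.sInf_le hmem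
  have hself := Nat.sInf_mem (⟨n + 1, hmem⟩ :
    Set.Nonempty {t | 0 < t ∧ walkZ M Z t ω ∉ Set.Ioo 0 M})
  rcases lt_or_eq_of_le hle with h | h
  · exfalso
    exact hself.2 (h1 _ hself.1 (by omega))
  · exact h

/-- Dichotomy: either the walk never exits (and then `stopVal = M`), or the exit time is some
`k+1` with no exit through time `k` and `Q_{k+1} ∉ (0,M)`. -/
lemma exit_cases (M : ℝ) (Z : ℕ → Ω → ℝ) (ω : Ω) :
    ((∀ m, notex M Z m ω) ∧ stopVal M M Z ω = M) ∨
    (∃ k, exitZ M M Z ω = k + 1 ∧ notex M Z k ω ∧ walkZ M Z (k + 1) ω ∉ Set.Ioo 0 M) := by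
  by_cases hS : Set.Nonempty {t | 0 < t ∧ walkZ M Z t ω ∉ Set.Ioo 0 M}
  · right
    have hself := Nat.sInf_mem hS
    obtain ⟨k, hk⟩ : ∃ k, exitZ M M Z ω = k + 1 := ⟨exitZ M M Z ω - 1, by
      have := hself.1; unfold exitZ; omega⟩
    refine ⟨k, hk, ?_, ?_⟩
    · intro t ht htk
      by_contra hcon
      have : t ∈ {t | 0 < t ∧ walkZ M Z t ω ∉ Set.Ioo 0 M} := ⟨ht, hcon⟩
      have := Nat.sInf_le this
      unfold exitZ at hk; omega
    · have := hself.2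
      rwa [show sInf {t | 0 < t ∧ walkZ M Z t ω ∉ Set.Ioo 0 M} = k + 1 from hk] at this
  · left
    rw [Set.not_nonempty_iff_eq_empty] at hS
    constructor
    · intro m t ht htm
      by_contra hcon
      have hmem : t ∈ {t | 0 < t ∧ walkZ M Z t ω ∉ Set.Ioo 0 M} := ⟨ht, hcon⟩
      rw [hS] at hmem
      exact hmem
    · unfold stopVal exitZ
      rw [hS, Nat.sInf_empty, walkZ_zero]

lemma stopVal_mem (hM : 0 < M) (hZmin : 0 < Zmin) (hZmax : 0 < Zmax)
    (hZ : ∀ t, Z t ω ∈ Set.Icc (-Zmin) Zmax) :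
    stopVal M M Z ω ∈ Set.Icc (-Zmin) (M + Zmax) := by
  rcases exit_cases M Z ω with ⟨_, h⟩ | ⟨k, hk, hnk, _⟩
  · rw [h]; constructor <;> nlinarith
  · have hQk : walkZ M Z k ω ∈ Set.Icc 0 M := by
      rcases Nat.eq_zero_or_pos k with h0 | h0
      · rw [h0, walkZ_zero]; exact ⟨hM.le, le_refl M⟩
      · have := hnk k h0 le_rfl
        exact ⟨this.1.le, this.2.le⟩
    have : stopVal M M Z ω = walkZ M Z k ω + Z k ω := by
      rw [stopVal, hk, walkZ_succ]
    rw [this]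
    have := hZ k
    constructor <;> [nlinarith [hQk.1, this.1]; nlinarith [hQk.2, this.2]]

lemma stopVal_nonpos (h : ¬ notex M Z n ω) (hs : stopVal M M Z ω < M) :
    stopVal M M Z ω ≤ 0 := by
  rcases exit_cases M Z ω with ⟨hall, _⟩ | ⟨k, hk, _, hout⟩
  · exact absurd (hall n) h
  · have : stopVal M M Z ω = walkZ M Z (k + 1) ω := by rw [stopVal, hk]
    rw [this] at hs ⊢
    simp only [Set.mem_Ioo, not_and, not_lt] at hout
    by_contra hcon
    push_neg at hcon
    exact absurd (hout hcon) (not_le.2 hs)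

lemma Ystop_zero : Ystop M Z 0 ω = M := by
  simp [Ystop, notex_zero, walkZ_zero]

lemma Ystop_step (n : ℕ) :
    Ystop M Z (n + 1) ω - Ystop M Z n ω = if notex M Z n ω then Z n ω else 0 := by
  by_cases h1 : notex M Z (n + 1) ω
  · have h0 := notex_anti h1
    rw [Ystop, Ystop, if_pos h1, if_pos h0, if_pos h0, walkZ_succ]
    ring
  · by_cases h0 : notex M Z n ω
    · -- exit exactly at time n+1
      have hout : walkZ M Z (n + 1) ω ∉ Set.Ioo 0 M := by
        by_contra hcon
        apply h1
        intro t ht htn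
        rcases Nat.lt_or_ge t (n + 1) with h | h
        · exact h0 t ht (by omega)
        · have : t = n + 1 := by omega
          rwa [this]
      have hexit := exit_eq_of h0 hout
      have hsv : stopVal M M Z ω = walkZ M Z (n + 1) ω := by rw [stopVal, hexit]
      rw [Ystop, Ystop, if_neg h1, if_pos h0, if_pos h0, hsv, walkZ_succ]
      ring
    · have h1' : ¬ notex M Z (n + 1) ω := fun h => h0 (notex_anti h)
      rw [Ystop, Ystop, if_neg h1', if_neg h0, if_neg h0]
      ring

lemma Ystop_one : Ystop M Z 1 ω = M + Z 0 ω := by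
  have := Ystop_step (M := M) (Z := Z) (ω := ω) 0
  rw [if_pos notex_zero, Ystop_zero] at this
  linarith

lemma Ystop_mem (hM : 0 < M) (hZmin : 0 < Zmin) (hZmax : 0 < Zmax)
    (hZ : ∀ t, Z t ω ∈ Set.Icc (-Zmin) Zmax) (n : ℕ) :
    Ystop M Z n ω ∈ Set.Icc (-Zmin) (M + Zmax) := by
  unfold Ystop
  split_ifs with h
  · rcases Nat.eq_zero_or_pos n with h0 | h0
    · rw [h0, walkZ_zero]; constructor <;> nlinarith
    · have := h n h0 le_rfl
      constructor <;> [nlinarith [this.1]; nlinarith [this.2]]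
  · exact stopVal_mem hM hZmin hZmax hZ

lemma Ystop_le (hM : 0 < M) (hZmin : 0 < Zmin) (hZmax : 0 < Zmax)
    (hZ : ∀ t, Z t ω ∈ Set.Icc (-Zmin) Zmax) (n : ℕ) :
    Ystop M Z n ω ≤ if (M ≤ stopVal M M Z ω ∨ notex M Z n ω) then M + Zmax else 0 := by
  by_cases h : notex M Z n ω
  · rw [if_pos (Or.inr h)]
    unfold Ystop
    rw [if_pos h]
    rcases Nat.eq_zero_or_pos n with h0 | h0
    · rw [h0, walkZ_zero]; linarith
    · have := h n h0 le_rfl; nlinarith [this.2]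
  · unfold Ystop
    rw [if_neg h]
    by_cases hs : M ≤ stopVal M M Z ω
    · rw [if_pos (Or.inl hs)]
      exact (stopVal_mem hM hZmin hZmax hZ).2
    · rw [if_neg (by tauto)]
      exact stopVal_nonpos h (not_le.1 hs)

lemma notex_all_stopVal (h : ∀ m, notex M Z m ω) : stopVal M M Z ω = M := by
  rcases exit_cases M Z ω with ⟨_, hsv⟩ | ⟨k, _, _, hout⟩
  · exact hsv
  · exact absurd (h (k + 1) (k + 1) (by omega) le_rfl) hout

/- ### Measurability -/

lemma measurable_walkZ {m : MeasurableSpace Ω} (hm : ∀ t, Measurable[m] (Z t)) (S0 : ℝ) (t : ℕ) :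
    Measurable[m] (walkZ S0 Z t) := by
  unfold walkZ
  exact measurable_const.add (Finset.measurable_sum _ fun s _ => hm s)

lemma measurableSet_notex {m : MeasurableSpace Ω} (hm : ∀ t, Measurable[m] (Z t)) (n : ℕ) :
    MeasurableSet[m] {ω | notex M Z n ω} := by
  have : {ω | notex M Z n ω} = ⋂ t ∈ Finset.Icc 1 n, (walkZ M Z t) ⁻¹' (Set.Ioo 0 M) := by
    ext ω
    simp only [notex, Set.mem_setOf_eq, Set.mem_iInter, Finset.mem_Icc, Set.mem_preimage]
    exact ⟨fun h t ht => h t ht.1 ht.2, fun h t h1 h2 => h t ⟨h1, h2⟩⟩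
  rw [this]
  exact Finset.measurableSet_biInter _ fun t _ => (measurable_walkZ hm M t) measurableSet_Ioo

lemma measurable_exitZ [MeasurableSpace Ω] (hm : ∀ t, Measurable (Z t)) :
    Measurable (exitZ M M Z) := by
  have hp : ∀ t : ℕ, MeasurableSet {ω | 0 < t ∧ walkZ M Z t ω ∉ Set.Ioo 0 M} := by
    intro t
    have : {ω | 0 < t ∧ walkZ M Z t ω ∉ Set.Ioo 0 M} =
        {ω : Ω | 0 < t} ∩ ((walkZ M Z t) ⁻¹' (Set.Ioo 0 M))ᶜ := rfl
    rw [this]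
    exact (MeasurableSet.const _).inter ((measurable_walkZ hm M t) measurableSet_Ioo).compl
  apply measurable_to_countable'
  intro k
  have hset : (exitZ M M Z) ⁻¹' {k} =
      ({ω | 0 < k ∧ walkZ M Z k ω ∉ Set.Ioo 0 M} ∩
        ⋂ j ∈ Finset.range k, {ω | 0 < j ∧ walkZ M Z j ω ∉ Set.Ioo 0 M}ᶜ) ∪
      ({ω : Ω | k = 0} ∩ ⋂ t, {ω | 0 < t ∧ walkZ M Z t ω ∉ Set.Ioo 0 M}ᶜ) := by
    ext ω
    simp only [Set.mem_preimage, Set.mem_singleton_iff, Set.mem_union, Set.mem_inter_iff,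
      Set.mem_iInter, Finset.mem_range, Set.mem_compl_iff, Set.mem_setOf_eq, exitZ]
    constructor
    · intro hk
      by_cases hS : Set.Nonempty {u | 0 < u ∧ walkZ M Z u ω ∉ Set.Ioo 0 M}
      · left
        constructor
        · have := Nat.sInf_mem hS
          rw [hk] at this
          exact this
        · intro j hj
          have hj' : j < sInf {u | 0 < u ∧ walkZ M Z u ω ∉ Set.Ioo 0 M} := by rw [hk]; exact hj
          exact Nat.notMem_of_lt_sInf hj'
      · right
        rw [Set.not_nonempty_iff_eq_empty] at hS
        rw [hS, Nat.sInf_empty] at hk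
        refine ⟨hk.symm, fun t ht => ?_⟩
        have : t ∈ {u | 0 < u ∧ walkZ M Z u ω ∉ Set.Ioo 0 M} := ht
        rw [hS] at this
        exact this
    · rintro (⟨hmem, hlt⟩ | ⟨hk0, hall⟩)
      · have h1 : sInf {u | 0 < u ∧ walkZ M Z u ω ∉ Set.Ioo 0 M} ≤ k := Nat.sInf_le hmem
        rcases lt_or_eq_of_le h1 with h | h
        · exact absurd (Nat.sInf_mem (⟨k, hmem⟩ : Set.Nonempty {u | 0 < u ∧ walkZ M Z u ω ∉ Set.Ioo 0 M})) (hlt _ h)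
        · exact h
      · have : {u | 0 < u ∧ walkZ M Z u ω ∉ Set.Ioo 0 M} = ∅ := by
          ext t
          simp only [Set.mem_empty_iff_false, iff_false]
          exact hall t
        rw [this, Nat.sInf_empty, hk0]
  rw [hset]
  refine MeasurableSet.union ((hp k).inter ?_) ((MeasurableSet.const _).inter ?_)
  · exact Finset.measurableSet_biInter _ fun j _ => (hp j).compl
  · exact MeasurableSet.iInter fun t => (hp t).compl

lemma measurable_stopVal [MeasurableSpace Ω] (hm : ∀ t, Measurable (Z t)) :
    Measurable (stopVal M M Z) := by
  have h1 : Measurable (fun p : Ω × ℕ => walkZ M Z p.2 p.1) :=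
    measurable_from_prod_countable_left fun k : ℕ => measurable_walkZ hm M k
  exact h1.comp (measurable_id.prodMk (measurable_exitZ hm))

lemma measurable_Ystop [MeasurableSpace Ω] (hm : ∀ t, Measurable (Z t)) (n : ℕ) :
    Measurable (Ystop M Z n) := by
  unfold Ystop
  exact Measurable.ite (measurableSet_notex hm n) (measurable_walkZ hm M n)
    (measurable_stopVal hm)

/- ### Independence: set integral over a past-measurable event -/

lemma setIntegral_indep [MeasurableSpace Ω] {μ : Measure Ω} [IsProbabilityMeasure μ]
    (hm : ∀ t, Measurable (Z t)) (hI : iIndepFun Z μ)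
    {n : ℕ} (hint : Integrable (Z n) μ) {A : Set Ω}
    (hA : MeasurableSet[MeasurableSpace.comap
      (fun ω (i : {i // i ∈ Finset.range n}) => Z i ω) inferInstance] A) :
    ∫ ω in A, Z n ω ∂μ = (μ A).toReal * ∫ ω, Z n ω ∂μ := by
  obtain ⟨B, hB, rfl⟩ := hA
  set V : Ω → ({i // i ∈ Finset.range n} → ℝ) := fun ω i => Z i ω with hV
  have hVmeas : Measurable V := measurable_pi_lambda _ fun i => hm i
  have hAm : MeasurableSet (V ⁻¹' B) := hVmeas hB
  have hdisj : Disjoint (Finset.range n) ({n} : Finset ℕ) := by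
    simp [Finset.disjoint_singleton_right]
  have hind0 := hI.indepFun_finset (Finset.range n) {n} hdisj hm
  have hindVZ : IndepFun V (Z n) μ := by
    exact hind0.comp measurable_id
      (measurable_pi_apply (⟨n, Finset.mem_singleton_self n⟩ : {i // i ∈ ({n} : Finset ℕ)}))
  have hindg : IndepFun ((V ⁻¹' B).indicator (fun _ => (1:ℝ))) (Z n) μ := by
    have hcomp : (V ⁻¹' B).indicator (fun _ => (1:ℝ)) =
        (B.indicator (fun _ => (1:ℝ))) ∘ V := by
      funext ω
      by_cases h : ω ∈ V ⁻¹' B <;> simp [Set.indicator, h, Set.mem_preimage] <;>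
        simp [Set.mem_preimage] at h <;> simp [h]
    rw [hcomp]
    exact hindVZ.comp (measurable_const.indicator hB) measurable_id
  have hintg : Integrable ((V ⁻¹' B).indicator (fun _ => (1:ℝ))) μ :=
    (integrable_const (1:ℝ)).indicator hAm
  have hmul : ∫ ω, (V ⁻¹' B).indicator (fun _ => (1:ℝ)) ω * Z n ω ∂μ =
      (∫ ω, (V ⁻¹' B).indicator (fun _ => (1:ℝ)) ω ∂μ) * ∫ ω, Z n ω ∂μ :=
    hindg.integral_mul_eq_mul_integral hintg.aestronglyMeasurable hint.aestronglyMeasurable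
  have heq1 : (fun ω => (V ⁻¹' B).indicator (fun _ => (1:ℝ)) ω * Z n ω) =
      (V ⁻¹' B).indicator (fun ω => Z n ω) := by
    funext ω
    by_cases h : ω ∈ V ⁻¹' B <;> simp [Set.indicator, h]
  rw [heq1] at hmul
  rw [integral_indicator hAm] at hmul
  rw [hmul, integral_indicator_const _ hAm]
  simp [mul_comm]
  exact Or.inl rfl

end Aux

/-- Lemma 8 of the paper. For a bounded i.i.d. walk with strictly positive
mean started at `M`, conditioning on a negative first step,
`P(Q_τ ≥ M | Z₁ < 0) ≥ (M + E[Z₁ | Z₁ < 0]) / (M + Z_max)`. -/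
theorem stmt_14
    {Ω : Type*} [MeasurableSpace Ω] (μ : Measure Ω) [IsProbabilityMeasure μ]
    (M Zmin Zmax : ℝ) (Z : ℕ → Ω → ℝ)
    (hM : 0 < M) (hZmin : 0 < Zmin) (hZmax : 0 < Zmax)
    (hiid : IsIID μ Z)
    (hmean : 0 < ∫ ω, Z 0 ω ∂μ)
    (hrange : ∀ t, ∀ᵐ ω ∂μ, Z t ω ∈ Set.Icc (-Zmin) Zmax)
    (hneg : 0 < μ {ω | Z 0 ω < 0})
    (ε δ : ℝ) (hε : 0 < ε) (hδ : 0 < δ)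
    (hup : ENNReal.ofReal δ ≤ μ {ω | ε ≤ Z 0 ω})
    (hdown : ENNReal.ofReal δ ≤ μ {ω | Z 0 ω ≤ -ε}) :
    (M + cexp μ (Z 0) {ω | Z 0 ω < 0}) / (M + Zmax) ≤
      cprob μ {ω | M ≤ stopVal M M Z ω} {ω | Z 0 ω < 0} := by
  obtain ⟨hm, hI, hid⟩ := hiid
  set E : Set Ω := {ω | Z 0 ω < 0} with hEdef
  have hEm : MeasurableSet E := measurableSet_lt (hm 0) measurable_const
  set G : Set Ω := {ω | M ≤ stopVal M M Z ω} with hGdef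
  have hGm : MeasurableSet G := measurableSet_le measurable_const (measurable_stopVal hm)
  set N : ℕ → Set Ω := fun n => {ω | notex M Z n ω} with hNdef
  have hNm : ∀ n, MeasurableSet (N n) := fun n => measurableSet_notex hm n
  have hrange' : ∀ᵐ ω ∂μ, ∀ t, Z t ω ∈ Set.Icc (-Zmin) Zmax := ae_all_iff.2 hrange
  have hμE0 : 0 < (μ E).toReal := ENNReal.toReal_pos hneg.ne' (measure_ne_top μ E)
  -- integrability of the Z's
  have hintZ : ∀ t, Integrable (Z t) μ := by
    intro t
    refine Integrable.mono' (integrable_const (max Zmin Zmax)) (hm t).aestronglyMeasurable ?_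
    filter_upwards [hrange t] with ω hω
    rw [Real.norm_eq_abs, abs_le]
    constructor
    · have h1 : -(max Zmin Zmax) ≤ -Zmin := neg_le_neg (le_max_left _ _)
      linarith [hω.1]
    · exact hω.2.trans (le_max_right _ _)
  -- integrability of the stopped process
  have hYbd : ∀ n, ∀ᵐ ω ∂μ, Ystop M Z n ω ∈ Set.Icc (-Zmin) (M + Zmax) := by
    intro n
    filter_upwards [hrange'] with ω hω
    exact Ystop_mem hM hZmin hZmax hω n
  have hYint : ∀ n, Integrable (Ystop M Z n) μ := by
    intro n
    refine Integrable.mono' (integrable_const (max Zmin (M + Zmax)))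
      (measurable_Ystop hm n).aestronglyMeasurable ?_
    filter_upwards [hYbd n] with ω hω
    rw [Real.norm_eq_abs, abs_le]
    constructor
    · have h1 : -(max Zmin (M + Zmax)) ≤ -Zmin := neg_le_neg (le_max_left _ _)
      linarith [hω.1]
    · exact hω.2.trans (le_max_right _ _)
  -- the mean of each Z n is the (positive) mean of Z 0
  have hmeann : ∀ n, ∫ ω, Z n ω ∂μ = ∫ ω, Z 0 ω ∂μ := fun n => (hid n).integral_eq
  -- the key monotonicity step
  have key : ∀ n, 1 ≤ n →
      ∫ ω in E, Ystop M Z n ω ∂μ ≤ ∫ ω in E, Ystop M Z (n + 1) ω ∂μ := by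
    intro n hn
    have hdiffeq : ∀ ω, Ystop M Z (n + 1) ω - Ystop M Z n ω = (N n).indicator (Z n) ω := by
      intro ω
      rw [Ystop_step n]
      by_cases h : notex M Z n ω <;> simp [Set.indicator, hNdef, h]
    -- E ∩ N n is measurable w.r.t. the σ-algebra generated by Z 0, ..., Z (n-1)
    have hcomap : MeasurableSet[MeasurableSpace.comap
        (fun ω (i : {i // i ∈ Finset.range n}) => Z i ω) inferInstance] (E ∩ N n) := by
      set m' := MeasurableSpace.comap
        (fun ω (i : {i // i ∈ Finset.range n}) => Z i ω) inferInstance with hm'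
      have hVm : Measurable[m'] (fun ω (i : {i // i ∈ Finset.range n}) => Z i ω) :=
        Measurable.of_comap_le le_rfl
      have hZm' : ∀ s : ℕ, s < n → Measurable[m'] (Z s) := by
        intro s hs
        have : Z s = (fun v : {i // i ∈ Finset.range n} → ℝ =>
            v ⟨s, Finset.mem_range.2 hs⟩) ∘ (fun ω (i : {i // i ∈ Finset.range n}) => Z i ω) := rfl
        rw [this]
        exact (measurable_pi_apply _).comp hVm
      have hEmm : MeasurableSet[m'] E :=
        measurableSet_lt (hZm' 0 (by omega)) measurable_const
      have hNmm : MeasurableSet[m'] (N n) := by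
        have hwalk : ∀ t : ℕ, t ≤ n → Measurable[m'] (walkZ M Z t) := by
          intro t ht
          unfold walkZ
          exact measurable_const.add
            (Finset.measurable_sum _ fun s hs => hZm' s (by
              have := Finset.mem_range.1 hs; omega))
        have : N n = ⋂ t ∈ Finset.Icc 1 n, (walkZ M Z t) ⁻¹' (Set.Ioo 0 M) := by
          ext ω
          simp only [hNdef, notex, Set.mem_setOf_eq, Set.mem_iInter, Finset.mem_Icc,
            Set.mem_preimage]
          exact ⟨fun h t ht => h t ht.1 ht.2, fun h t h1 h2 => h t ⟨h1, h2⟩⟩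
        rw [this]
        exact Finset.measurableSet_biInter _ fun t ht =>
          (hwalk t (Finset.mem_Icc.1 ht).2) measurableSet_Ioo
      exact hEmm.inter hNmm
    have hstep := setIntegral_indep hm hI (hintZ n) hcomap
    have hpos : 0 ≤ ∫ ω in E ∩ N n, Z n ω ∂μ := by
      rw [hstep, hmeann n]
      positivity
    have hsub : ∫ ω in E, (Ystop M Z (n + 1) ω - Ystop M Z n ω) ∂μ =
        ∫ ω in E, Ystop M Z (n + 1) ω ∂μ - ∫ ω in E, Ystop M Z n ω ∂μ :=
      integral_sub ((hYint (n + 1)).integrableOn) ((hYint n).integrableOn)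
    have hindint : ∫ ω in E, (Ystop M Z (n + 1) ω - Ystop M Z n ω) ∂μ =
        ∫ ω in E ∩ N n, Z n ω ∂μ := by
      calc ∫ ω in E, (Ystop M Z (n + 1) ω - Ystop M Z n ω) ∂μ
          = ∫ ω in E, (N n).indicator (Z n) ω ∂μ := by
            congr 1; funext ω; exact hdiffeq ω
        _ = ∫ ω in E ∩ N n, Z n ω ∂μ := setIntegral_indicator (hNm n)
    linarith [hsub ▸ hindint ▸ hpos]
  have mono : ∀ n, 1 ≤ n → ∫ ω in E, Ystop M Z 1 ω ∂μ ≤ ∫ ω in E, Ystop M Z n ω ∂μ := by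
    intro n hn
    induction n with
    | zero => omega
    | succ k ih =>
      rcases Nat.eq_zero_or_pos k with h0 | h0
      · rw [h0]
      · exact (ih h0).trans (key k h0)
  -- the value at time 1
  have hY1 : ∫ ω in E, Ystop M Z 1 ω ∂μ = M * (μ E).toReal + ∫ ω in E, Z 0 ω ∂μ := by
    have : ∀ ω, Ystop M Z 1 ω = M + Z 0 ω := fun ω => Ystop_one
    calc ∫ ω in E, Ystop M Z 1 ω ∂μ = ∫ ω in E, (M + Z 0 ω) ∂μ := by
          congr 1; funext ω; exact this ω
      _ = ∫ _ω in E, M ∂μ + ∫ ω in E, Z 0 ω ∂μ :=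
          integral_add (integrableOn_const (measure_ne_top μ E))
            ((hintZ 0).integrableOn)
      _ = M * (μ E).toReal + ∫ ω in E, Z 0 ω ∂μ := by
          rw [setIntegral_const, smul_eq_mul, measureReal_def]; ring
  -- the upper bound
  have upper : ∀ n, ∫ ω in E, Ystop M Z n ω ∂μ ≤
      (M + Zmax) * ((μ (G ∩ E)).toReal + (μ (N n \ G)).toReal) := by
    intro n
    have hptwise : ∀ᵐ ω ∂μ, ∀ _h : ω ∈ E, Ystop M Z n ω ≤
        (G ∪ N n).indicator (fun _ => M + Zmax) ω := by
      filter_upwards [hrange'] with ω hω _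
      have := Ystop_le hM hZmin hZmax hω n
      by_cases h : ω ∈ G ∪ N n
      · rw [Set.indicator_of_mem h]
        exact (Ystop_mem hM hZmin hZmax hω n).2
      · rw [Set.indicator_of_notMem h]
        simp only [Set.mem_union, hGdef, hNdef, Set.mem_setOf_eq] at h
        push_neg at h
        rwa [if_neg (by push_neg; exact ⟨h.1, h.2⟩)] at this
    have hindm : MeasurableSet (G ∪ N n) := hGm.union (hNm n)
    have h1 : ∫ ω in E, Ystop M Z n ω ∂μ ≤
        ∫ ω in E, (G ∪ N n).indicator (fun _ => M + Zmax) ω ∂μ := by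
      apply setIntegral_mono_on_ae ((hYint n).integrableOn)
        (((integrable_const (M + Zmax)).indicator hindm).integrableOn) hEm
      filter_upwards [hptwise] with ω hω
      exact hω
    have h2 : ∫ ω in E, (G ∪ N n).indicator (fun _ => M + Zmax) ω ∂μ =
        (M + Zmax) * (μ ((G ∪ N n) ∩ E)).toReal := by
      rw [setIntegral_indicator hindm, setIntegral_const, smul_eq_mul, Set.inter_comm, measureReal_def]
      ring
    have h3 : (μ ((G ∪ N n) ∩ E)).toReal ≤ (μ (G ∩ E)).toReal + (μ (N n \ G)).toReal := by
      have hsub : (G ∪ N n) ∩ E ⊆ (G ∩ E) ∪ (N n \ G) := by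
        rintro ω ⟨hGN, hE⟩
        rcases hGN with h | h
        · exact Or.inl ⟨h, hE⟩
        · by_cases hG : ω ∈ G
          · exact Or.inl ⟨hG, hE⟩
          · exact Or.inr ⟨h, hG⟩
      calc (μ ((G ∪ N n) ∩ E)).toReal ≤ (μ ((G ∩ E) ∪ (N n \ G))).toReal := by
            apply ENNReal.toReal_mono (measure_ne_top _ _) (measure_mono hsub)
        _ ≤ (μ (G ∩ E)).toReal + (μ (N n \ G)).toReal := by
            rw [← ENNReal.toReal_add (measure_ne_top _ _) (measure_ne_top _ _)]
            exact ENNReal.toReal_mono (by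
              exact ENNReal.add_ne_top.2 ⟨measure_ne_top _ _, measure_ne_top _ _⟩)
              (measure_union_le _ _)
    calc ∫ ω in E, Ystop M Z n ω ∂μ ≤ (M + Zmax) * (μ ((G ∪ N n) ∩ E)).toReal :=
          h1.trans_eq h2
      _ ≤ (M + Zmax) * ((μ (G ∩ E)).toReal + (μ (N n \ G)).toReal) := by
          apply mul_le_mul_of_nonneg_left h3 (by linarith)
  -- the remainder tends to 0
  have hlim : Tendsto (fun n => (μ (N n \ G)).toReal) atTop (nhds 0) := by
    have hanti : Antitone (fun n => N n \ G) := by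
      intro a b hab ω hω
      exact ⟨notex_of_le hab hω.1, hω.2⟩
    have hiInter : (⋂ n, N n \ G) = ∅ := by
      ext ω
      simp only [Set.mem_iInter, Set.mem_empty_iff_false, iff_false]
      intro hcon
      have hall : ∀ m, notex M Z m ω := fun m => (hcon m).1
      have := notex_all_stopVal hall
      exact (hcon 0).2 (by rw [hGdef]; simp only [Set.mem_setOf_eq]; rw [this])
    have := tendsto_measure_iInter_atTop (μ := μ)
      (fun n => ((hNm n).diff hGm).nullMeasurableSet) hanti ⟨0, measure_ne_top μ _⟩
    rw [hiInter] at this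
    simp only [measure_empty] at this
    have h2 := (ENNReal.tendsto_toReal (by simp : (0:ℝ≥0∞) ≠ ⊤)).comp this
    exact h2
  -- combine: pass to the limit
  have final : M * (μ E).toReal + ∫ ω in E, Z 0 ω ∂μ ≤ (M + Zmax) * (μ (G ∩ E)).toReal := by
    have hconv : Tendsto (fun n => (M + Zmax) * ((μ (G ∩ E)).toReal + (μ (N n \ G)).toReal))
        atTop (nhds ((M + Zmax) * ((μ (G ∩ E)).toReal + 0))) :=
      (tendsto_const_nhds.add hlim).const_mul _
    rw [add_zero] at hconv
    apply ge_of_tendsto hconv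
    filter_upwards [eventually_ge_atTop 1] with n hn
    calc M * (μ E).toReal + ∫ ω in E, Z 0 ω ∂μ = ∫ ω in E, Ystop M Z 1 ω ∂μ := hY1.symm
      _ ≤ ∫ ω in E, Ystop M Z n ω ∂μ := mono n hn
      _ ≤ (M + Zmax) * ((μ (G ∩ E)).toReal + (μ (N n \ G)).toReal) := upper n
  -- final algebra
  unfold cexp cprob
  rw [div_le_div_iff₀ (by linarith) hμE0]
  have hexp : (M + (∫ ω in E, Z 0 ω ∂μ) / (μ E).toReal) * (μ E).toReal =
      M * (μ E).toReal + ∫ ω in E, Z 0 ω ∂μ := by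
    field_simp
  rw [hexp]
  calc M * (μ E).toReal + ∫ ω in E, Z 0 ω ∂μ ≤ (M + Zmax) * (μ (G ∩ E)).toReal := final
    _ = (μ (G ∩ E)).toReal * (M + Zmax) := by ring
end
end

section
/- Let L be a positive even integer and let B be a Binomial(L, 1/2) random variable. Then for every integer t with 0 < t ≤ L/8, P(B ≥ L/2 + t) ≥ (1/15)·e^{−16t²/L}. -/
open Finset

private lemma exp_le_inv_one_sub' {x : ℝ} (h1 : x < 1) : Real.exp x ≤ 1 / (1 - x) := by
  rw [le_div_iff₀ (by linarith)]
  have h2 : 1 - x ≤ Real.exp (-x) := by linarith [Real.add_one_le_exp (-x)]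
  calc Real.exp x * (1 - x) ≤ Real.exp x * Real.exp (-x) :=
        mul_le_mul_of_nonneg_left h2 (Real.exp_nonneg x)
    _ = 1 := by rw [← Real.exp_add]; simp


private lemma sqrt_pi_le_stirlingSeq (n : ℕ) :
    Real.sqrt Real.pi ≤ Stirling.stirlingSeq (n + 1) := by
  apply le_of_tendsto Stirling.tendsto_stirlingSeq_sqrt_pi
  filter_upwards [Filter.eventually_ge_atTop (n + 1)] with k hk
  obtain ⟨j, rfl⟩ : ∃ j, k = j + 1 := ⟨k - 1, by omega⟩
  exact Stirling.stirlingSeq'_antitone (by omega : n ≤ j)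

private lemma central_binom_lower' (m : ℕ) (hm : 1 ≤ m) :
    (47 / 100 : ℝ) * 4 ^ m ≤ ((2 * m).choose m : ℝ) * Real.sqrt m := by
  have hm0 : (0 : ℝ) < (m : ℝ) := by exact_mod_cast hm
  set s1 := Stirling.stirlingSeq m with hs1def
  set s2 := Stirling.stirlingSeq (2 * m) with hs2def
  set P := ((m : ℝ) / Real.exp 1) ^ m with hPdef
  set C := ((2 * m).choose m : ℝ) with hCdef
  set R := Real.sqrt (m : ℝ) with hRdef
  have hPpos : 0 < P := by positivity
  have hRpos : 0 < R := Real.sqrt_pos.mpr hm0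
  have hR2 : R ^ 2 = (m : ℝ) := Real.sq_sqrt hm0.le
  -- stirling bounds
  have hs2l : Real.sqrt Real.pi ≤ s2 := by
    obtain ⟨j, hj⟩ : ∃ j, 2 * m = j + 1 := ⟨2 * m - 1, by omega⟩
    rw [hs2def, hj]; exact sqrt_pi_le_stirlingSeq j
  have hs1l : Real.sqrt Real.pi ≤ s1 := by
    obtain ⟨j, hj⟩ : ∃ j, m = j + 1 := ⟨m - 1, by omega⟩
    rw [hs1def, hj]; exact sqrt_pi_le_stirlingSeq j
  have hs1u : s1 ≤ Real.exp 1 / Real.sqrt 2 := by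
    obtain ⟨j, hj⟩ : ∃ j, m = j + 1 := ⟨m - 1, by omega⟩
    rw [hs1def, hj, ← Stirling.stirlingSeq_one]
    exact Stirling.stirlingSeq'_antitone (Nat.zero_le j)
  have hpi4 : (1.7724 : ℝ) ≤ Real.sqrt Real.pi := by
    nlinarith [Real.sq_sqrt Real.pi_pos.le, Real.sqrt_nonneg Real.pi, Real.pi_gt_d6]
  have hsqrt2 : (1.414 : ℝ) ≤ Real.sqrt 2 := by
    nlinarith [Real.sq_sqrt (by norm_num : (0:ℝ) ≤ 2), Real.sqrt_nonneg 2]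
  have hs1pos : 0 < s1 := lt_of_lt_of_le (by positivity) hs1l
  have hs1b : s1 ≤ 1.9225 := by
    refine hs1u.trans ?_
    rw [div_le_iff₀ (by positivity)]
    nlinarith [Real.exp_one_lt_d9, Real.exp_pos 1]
  -- factorial identities
  have hQ2 : Real.sqrt (2 * (m : ℝ)) ^ 2 = 2 * (m : ℝ) := Real.sq_sqrt (by positivity)
  have hfm : (m.factorial : ℝ) = s1 * (Real.sqrt (2 * (m : ℝ)) * P) := by
    rw [hs1def, Stirling.stirlingSeq, hPdef]
    field_simp
  have hsq4 : Real.sqrt (2 * ((2 * m : ℕ) : ℝ)) = 2 * R := by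
    push_cast
    rw [show 2 * (2 * (m:ℝ)) = 2 ^ 2 * (m:ℝ) by ring, Real.sqrt_mul (by positivity),
      Real.sqrt_sq (by norm_num)]
  have hP4 : (((2 * m : ℕ) : ℝ) / Real.exp 1) ^ (2 * m) = 4 ^ m * P ^ 2 := by
    push_cast
    rw [pow_mul, show (2 * (m:ℝ) / Real.exp 1) ^ 2 = 4 * ((m:ℝ) / Real.exp 1) ^ 2 by ring,
      mul_pow, hPdef, ← pow_mul, ← pow_mul, Nat.mul_comm 2 m]
  have hf2m : (((2 * m).factorial : ℝ)) = s2 * (2 * R * (4 ^ m * P ^ 2)) := by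
    rw [hs2def, Stirling.stirlingSeq, hsq4, hP4]
    field_simp
  have hc : C * (m.factorial : ℝ) * (m.factorial : ℝ) = (((2 * m).factorial : ℝ)) := by
    rw [hCdef]
    have hnat : (2 * m).choose m * m.factorial * m.factorial = (2 * m).factorial := by
      have h := Nat.choose_mul_factorial_mul_factorial (show m ≤ 2 * m by omega)
      rwa [show 2 * m - m = m by omega] at h
    exact_mod_cast congrArg (Nat.cast : ℕ → ℝ) hnat
  have hmain : C * R * s1 ^ 2 = s2 * 4 ^ m := by
    apply mul_right_cancel₀ (b := 2 * R * P ^ 2) (by positivity)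
    rw [hfm, hf2m] at hc
    linear_combination hc + (C * s1 ^ 2 * P ^ 2) * (2 * hR2 - hQ2)
  -- finish
  have hCR : 0 ≤ C * R := by positivity
  have hs1sq : s1 ^ 2 ≤ 3.6961 := by nlinarith
  have h4pos : (0 : ℝ) < 4 ^ m := by positivity
  have p1 : C * R * s1 ^ 2 ≤ C * R * 3.6961 := mul_le_mul_of_nonneg_left hs1sq hCR
  have p2 : (1.7724 : ℝ) * 4 ^ m ≤ s2 * 4 ^ m :=
    mul_le_mul_of_nonneg_right (hpi4.trans hs2l) h4pos.le
  linarith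


private lemma ratio_bound' (m : ℕ) (hm : 0 < m) :
    ∀ j : ℕ, 2 * j ≤ m + 2 →
      ((2 * m).choose m : ℝ) * Real.exp (-(2 * (j : ℝ) ^ 2) / m) ≤ ((2 * m).choose (m + j) : ℝ) := by
  have hm0 : (0 : ℝ) < (m : ℝ) := by exact_mod_cast hm
  intro j
  induction j with
  | zero => simp
  | succ j ih =>
    intro hj
    have hj' : 2 * j ≤ m := by omega
    have hj'c : 2 * (j : ℝ) ≤ (m : ℝ) := by exact_mod_cast hj'
    have IH := ih (by omega)
    have hjm : j ≤ m := by omega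
    have hjc : (0:ℝ) ≤ (j : ℝ) := Nat.cast_nonneg j
    -- choose recurrence
    have hrec : ((2 * m).choose (m + j + 1) : ℝ) * ((m : ℝ) + j + 1) =
        ((2 * m).choose (m + j) : ℝ) * ((m : ℝ) - j) := by
      have h := Nat.choose_succ_right_eq (2 * m) (m + j)
      have h2 : 2 * m - (m + j) = m - j := by omega
      rw [h2] at h
      have := congrArg (Nat.cast : ℕ → ℝ) h
      push_cast [Nat.cast_sub hjm] at this
      linarith [this]
    have hx : (0:ℝ) < ((m:ℝ) + 4 * j + 2) := by positivity
    have hepos := Real.exp_pos ((4 * (j:ℝ) + 2) / m)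
    have he' : (m:ℝ) + 4 * j + 2 ≤ (m:ℝ) * Real.exp ((4 * (j:ℝ) + 2) / m) := by
      have he := Real.add_one_le_exp ((4 * (j:ℝ) + 2) / m)
      have h3 := mul_le_mul_of_nonneg_left he hm0.le
      have he2 : (m:ℝ) * ((4 * (j:ℝ) + 2) / m + 1) = (m:ℝ) + 4 * j + 2 := by
        field_simp
        ring
      linarith
    have hfrac : Real.exp (-(4 * (j:ℝ) + 2) / m) ≤ (m:ℝ) / ((m:ℝ) + 4 * j + 2) := by
      rw [neg_div, Real.exp_neg, inv_eq_one_div, div_le_div_iff₀ hepos hx]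
      linarith
    -- exp step bound : exp (-(4j+2)/m) * (m + j + 1) ≤ m - j
    have hstep : Real.exp (-(4 * (j:ℝ) + 2) / m) * ((m:ℝ) + j + 1) ≤ (m:ℝ) - j := by
      have h4 : Real.exp (-(4 * (j:ℝ) + 2) / m) * ((m:ℝ) + j + 1) ≤
          (m:ℝ) / ((m:ℝ) + 4 * j + 2) * ((m:ℝ) + j + 1) :=
        mul_le_mul_of_nonneg_right hfrac (by positivity)
      have h5 : (m:ℝ) / ((m:ℝ) + 4 * j + 2) * ((m:ℝ) + j + 1) ≤ (m:ℝ) - j := by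
        rw [div_mul_eq_mul_div, div_le_iff₀ hx]
        nlinarith [hj'c, hjc]
      linarith
    have hsplit : Real.exp (-(2 * ((j:ℝ) + 1) ^ 2) / m) =
        Real.exp (-(2 * (j:ℝ) ^ 2) / m) * Real.exp (-(4 * (j:ℝ) + 2) / m) := by
      rw [← Real.exp_add]
      congr 1
      field_simp
      ring
    have hchoose_nonneg : (0:ℝ) ≤ ((2 * m).choose (m + j) : ℝ) := Nat.cast_nonneg _
    have h1 : ((2*m).choose m : ℝ) * Real.exp (-(2 * ((j:ℝ) + 1) ^ 2) / m) * ((m:ℝ) + j + 1)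
        ≤ ((2*m).choose (m + j + 1) : ℝ) * ((m:ℝ) + j + 1) := by
      rw [hrec]
      calc ((2*m).choose m : ℝ) * Real.exp (-(2 * ((j:ℝ) + 1) ^ 2) / m) * ((m:ℝ) + j + 1)
          = (((2*m).choose m : ℝ) * Real.exp (-(2 * (j:ℝ) ^ 2) / m)) *
            (Real.exp (-(4 * (j:ℝ) + 2) / m) * ((m:ℝ) + j + 1)) := by rw [hsplit]; ring
        _ ≤ ((2*m).choose (m + j) : ℝ) * ((m:ℝ) - j) :=
            mul_le_mul IH hstep (by positivity) hchoose_nonneg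
    have h6 := le_of_mul_le_mul_right h1 (by positivity : (0:ℝ) < (m:ℝ) + j + 1)
    have heq : ((j:ℝ) + 1) = ((j + 1 : ℕ) : ℝ) := by push_cast; ring
    rw [heq] at h6
    exact h6

private lemma sum_bound' (m t J : ℕ) (hm : 0 < m) (htJ : t ≤ J) (hJm : J ≤ m)
    (hJ2 : 2 * J ≤ m + 2) :
    ((J - t + 1 : ℕ) : ℝ) * (((2 * m).choose m : ℝ) * Real.exp (-(2 * (J : ℝ) ^ 2) / m)) ≤
      ∑ k ∈ Icc (m + t) (2 * m), ((2 * m).choose k : ℝ) := by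
  have hm0 : (0 : ℝ) < (m : ℝ) := by exact_mod_cast hm
  have hsub : Icc (m + t) (m + J) ⊆ Icc (m + t) (2 * m) :=
    Icc_subset_Icc le_rfl (by omega)
  have h1 : ∑ k ∈ Icc (m + t) (m + J), ((2 * m).choose k : ℝ) ≤
      ∑ k ∈ Icc (m + t) (2 * m), ((2 * m).choose k : ℝ) :=
    sum_le_sum_of_subset_of_nonneg hsub (fun i _ _ => Nat.cast_nonneg _)
  refine le_trans ?_ h1
  have h2 : ∀ k ∈ Icc (m + t) (m + J),
      ((2 * m).choose m : ℝ) * Real.exp (-(2 * (J : ℝ) ^ 2) / m) ≤ ((2 * m).choose k : ℝ) := by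
    intro k hk
    rw [mem_Icc] at hk
    obtain ⟨j, rfl⟩ : ∃ j, k = m + j := ⟨k - m, by omega⟩
    have hjJ : j ≤ J := by omega
    have hjJ' : (j : ℝ) ≤ (J : ℝ) := by exact_mod_cast hjJ
    have hsq : (j : ℝ) ^ 2 ≤ (J : ℝ) ^ 2 := by nlinarith [show (0:ℝ) ≤ (j:ℝ) from Nat.cast_nonneg j]
    calc ((2 * m).choose m : ℝ) * Real.exp (-(2 * (J : ℝ) ^ 2) / m)
        ≤ ((2 * m).choose m : ℝ) * Real.exp (-(2 * (j : ℝ) ^ 2) / m) := by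
          apply mul_le_mul_of_nonneg_left _ (Nat.cast_nonneg _)
          apply Real.exp_le_exp.mpr
          rw [div_le_div_iff₀ hm0 hm0]
          nlinarith
      _ ≤ ((2 * m).choose (m + j) : ℝ) := ratio_bound' m hm j (by omega)
  have h3 := Finset.card_nsmul_le_sum (Icc (m + t) (m + J))
    (fun k => ((2 * m).choose k : ℝ)) _ h2
  have hcard : (Icc (m + t) (m + J)).card = J - t + 1 := by
    rw [Nat.card_Icc]; omega
  rw [hcard, nsmul_eq_mul] at h3
  exact h3

set_option maxHeartbeats 2000000 in
/-- Proposition 3 of the paper, adapted from Proposition 7.3.2 of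
Alon–Spencer. For `B ~ Binomial(L, 1/2)` with `L` a positive even integer, and any integer
`t` with `0 < t ≤ L/8`,
`P(B ≥ L/2 + t) = (Σ_{k=L/2+t}^{L} C(L,k)) / 2^L ≥ (1/15)·e^{−16t²/L}`. -/
theorem stmt_16 (L : ℕ) (hEven : Even L) (hLpos : 0 < L) (t : ℕ) (ht : 0 < t)
    (ht8 : 8 * t ≤ L) :
    (1 / 15 : ℝ) * Real.exp (-(16 * (t : ℝ) ^ 2 / L)) ≤
      (∑ k ∈ Finset.Icc (L / 2 + t) L, (L.choose k : ℝ)) / 2 ^ L := by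
  obtain ⟨m, hLm⟩ : ∃ m, L = 2 * m := by
    obtain ⟨r, hr⟩ := hEven; exact ⟨r, by omega⟩
  subst hLm
  have hm4 : 4 ≤ m := by omega
  have hm : 0 < m := by omega
  have hm0 : (0 : ℝ) < (m : ℝ) := by exact_mod_cast hm
  have ht1 : (1 : ℝ) ≤ (t : ℝ) := by exact_mod_cast ht
  have h4t : 4 * t ≤ m := by omega
  have h4tc : 4 * (t : ℝ) ≤ (m : ℝ) := by exact_mod_cast h4t
  have hhalf : 2 * m / 2 = m := by omega
  rw [hhalf]
  have hpow : ((2 : ℝ)) ^ (2 * m) = 4 ^ m := by rw [pow_mul]; norm_num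
  rw [hpow, le_div_iff₀ (by positivity : (0 : ℝ) < (4 : ℝ) ^ m)]
  have hexp : -(16 * (t : ℝ) ^ 2 / ((2 * m : ℕ) : ℝ)) = -(8 * (t : ℝ) ^ 2) / m := by
    push_cast
    field_simp
    ring
  rw [hexp]
  set Cm := ((2 * m).choose m : ℝ) with hCmdef
  have hCm0 : (0 : ℝ) ≤ Cm := Nat.cast_nonneg _
  set R := Real.sqrt (m : ℝ) with hRdef
  have hR2 : R ^ 2 = (m : ℝ) := Real.sq_sqrt hm0.le
  have hRpos : 0 < R := Real.sqrt_pos.mpr hm0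
  have hcb : (47 / 100 : ℝ) * 4 ^ m ≤ Cm * R := central_binom_lower' m (by omega)
  set E := Real.exp (-(8 * (t : ℝ) ^ 2) / m) with hEdef
  have hE0 : 0 < E := Real.exp_pos _
  have hE1 : E ≤ 1 := by
    rw [hEdef, ← Real.exp_zero]
    apply Real.exp_le_exp.mpr
    apply div_nonpos_of_nonpos_of_nonneg (by nlinarith [sq_nonneg (t:ℝ)]) hm0.le
  set S := ∑ k ∈ Icc (m + t) (2 * m), ((2 * m).choose k : ℝ) with hSdef
  show (1 / 15 : ℝ) * E * 4 ^ m ≤ S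
  by_cases hA : R ≤ 7 * t
  · -- case A : large t
    have hsum := sum_bound' m t (2 * t - 1) hm (by omega) (by omega) (by omega)
    have hidx : 2 * t - 1 - t + 1 = t := by omega
    rw [hidx] at hsum
    have hJc : ((2 * t - 1 : ℕ) : ℝ) = 2 * (t : ℝ) - 1 := by
      rw [Nat.cast_sub (by omega)]; push_cast; ring
    have e1 : E ≤ Real.exp (-(2 * ((2 * t - 1 : ℕ) : ℝ) ^ 2) / m) := by
      apply Real.exp_le_exp.mpr
      rw [hJc, div_le_div_iff₀ hm0 hm0]
      nlinarith
    have hkey : (1 / 15 : ℝ) * 4 ^ m ≤ (t : ℝ) * Cm := by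
      have h1 : Cm * R ≤ Cm * (7 * t) := mul_le_mul_of_nonneg_left hA hCm0
      have h4pos : (0 : ℝ) < 4 ^ m := by positivity
      nlinarith
    calc (1 / 15 : ℝ) * E * 4 ^ m = ((1 / 15 : ℝ) * 4 ^ m) * E := by ring
      _ ≤ ((t : ℝ) * Cm) * E := mul_le_mul_of_nonneg_right hkey hE0.le
      _ ≤ ((t : ℝ) * Cm) * Real.exp (-(2 * ((2 * t - 1 : ℕ) : ℝ) ^ 2) / m) :=
          mul_le_mul_of_nonneg_left e1 (by positivity)
      _ ≤ S := le_of_eq_of_le (by ring) hsum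
  · -- case B : small t
    push_neg at hA
    have hRt : 7 * (t : ℝ) < R := hA
    have hR7 : (7 : ℝ) < R := by nlinarith
    have hm49 : (49 : ℝ) < (m : ℝ) := by nlinarith
    have hm50 : 50 ≤ m := by
      have h49 : 49 < m := by exact_mod_cast hm49
      omega
    have hm50c : (50 : ℝ) ≤ (m : ℝ) := by exact_mod_cast hm50
    obtain ⟨n, hnle, hnlt⟩ : ∃ n : ℕ, n * n ≤ m ∧ m < (n + 1) * (n + 1) :=
      ⟨Nat.sqrt m, Nat.sqrt_le m, Nat.lt_succ_sqrt m⟩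
    obtain ⟨J, hJdef⟩ : ∃ J : ℕ, J = n / 2 + 1 := ⟨_, rfl⟩
    have hn1 : (n : ℝ) ≤ R := by
      have hc : ((n : ℝ)) * n ≤ (m : ℝ) := by exact_mod_cast hnle
      nlinarith [hc, hR2, hRpos.le, show (0:ℝ) ≤ (n:ℝ) from Nat.cast_nonneg n]
    have hn2 : R < (n : ℝ) + 1 := by
      have hc : (m : ℝ) < ((n : ℝ) + 1) * ((n : ℝ) + 1) := by exact_mod_cast hnlt
      nlinarith [hR2, hRpos.le, show (0:ℝ) ≤ (n:ℝ) from Nat.cast_nonneg n]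
    have hv : (n : ℝ) ≤ 2 * ((n / 2 : ℕ) : ℝ) + 1 := by
      exact_mod_cast (by omega : n ≤ 2 * (n / 2) + 1)
    have hv2 : 2 * ((n / 2 : ℕ) : ℝ) ≤ (n : ℝ) := by
      exact_mod_cast (by omega : 2 * (n / 2) ≤ n)
    have hJcast : (J : ℝ) = ((n / 2 : ℕ) : ℝ) + 1 := by rw [hJdef]; push_cast; ring
    have hJlo : R / 2 < (J : ℝ) := by rw [hJcast]; linarith
    have hJhi : (J : ℝ) ≤ R / 2 + 1 := by rw [hJcast]; linarith
    have htJR : (t : ℝ) < (J : ℝ) := by linarith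
    have htJ : t ≤ J := le_of_lt (by exact_mod_cast htJR)
    have hJm : J ≤ m := by
      have h : (J : ℝ) ≤ (m : ℝ) := by nlinarith [hJhi, hR7, hR2]
      exact_mod_cast h
    have hJ2 : 2 * J ≤ m + 2 := by
      have h : 2 * (J : ℝ) ≤ (m : ℝ) + 2 := by nlinarith [hJhi, hR7, hR2]
      exact_mod_cast h
    have hsum := sum_bound' m t J hm htJ hJm hJ2
    have hcnt : (5 / 14 : ℝ) * R ≤ ((J - t + 1 : ℕ) : ℝ) := by
      rw [Nat.cast_add, Nat.cast_sub htJ]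
      push_cast
      linarith
    have hR7m : 7 * R < (m : ℝ) := by nlinarith [hR2, hR7]
    have hexp2 : Real.exp (-(289 / 350 : ℝ)) ≤ Real.exp (-(2 * (J : ℝ) ^ 2) / m) := by
      apply Real.exp_le_exp.mpr
      rw [neg_div]
      apply neg_le_neg
      rw [div_le_iff₀ hm0]
      nlinarith [hJhi, hR7m, hm50c, hR2, hRpos.le, show (0:ℝ) ≤ (J:ℝ) from Nat.cast_nonneg J]
    have hnum : Real.exp ((289 : ℝ) / 350) ≤ 705 / 280 := by
      have h8 : ((289 : ℝ) / 350) = ((8 : ℕ) : ℝ) * (289 / 2800) := by norm_num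
      rw [h8, Real.exp_nat_mul]
      have hx := exp_le_inv_one_sub' (x := 289 / 2800) (by norm_num)
      calc Real.exp (289 / 2800) ^ 8 ≤ (1 / (1 - 289 / 2800)) ^ 8 :=
            pow_le_pow_left₀ (Real.exp_nonneg _) hx 8
        _ ≤ 705 / 280 := by norm_num
    have hc0 : (56 / 141 : ℝ) ≤ Real.exp (-(289 / 350 : ℝ)) := by
      rw [Real.exp_neg]
      have hp := Real.exp_pos ((289 : ℝ) / 350)
      rw [inv_eq_one_div, le_div_iff₀ hp]
      nlinarith [hnum, hp.le]
    have step1 : ((5 / 14 : ℝ) * R) * (Cm * Real.exp (-(289 / 350 : ℝ))) ≤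
        ((J - t + 1 : ℕ) : ℝ) * (Cm * Real.exp (-(2 * (J : ℝ) ^ 2) / m)) :=
      mul_le_mul hcnt (mul_le_mul_of_nonneg_left hexp2 hCm0) (by positivity)
        (Nat.cast_nonneg _)
    have h4pos : (0 : ℝ) < (4 : ℝ) ^ m := by positivity
    calc (1 / 15 : ℝ) * E * 4 ^ m
        ≤ (5 / 14) * (56 / 141) * ((47 / 100) * 4 ^ m) := by nlinarith [hE1, h4pos, hE0]
      _ ≤ (5 / 14) * Real.exp (-(289 / 350 : ℝ)) * ((47 / 100) * 4 ^ m) :=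
          mul_le_mul_of_nonneg_right (by nlinarith [hc0]) (by positivity)
      _ ≤ (5 / 14) * Real.exp (-(289 / 350 : ℝ)) * (Cm * R) :=
          mul_le_mul_of_nonneg_left hcb (by positivity)
      _ = ((5 / 14 : ℝ) * R) * (Cm * Real.exp (-(289 / 350 : ℝ))) := by ring
      _ ≤ ((J - t + 1 : ℕ) : ℝ) * (Cm * Real.exp (-(2 * (J : ℝ) ^ 2) / m)) := step1
      _ ≤ S := hsum
end

section
/- Let B and N be independent random variables with B ≥ 0, N ≥ 0, means μ_B = E[B] > 0 and μ_N = E[N] > 0. Suppose c > 0 satisfies δ₀ := min{ P(B ≥ μ_B + c), P(B ≤ μ_B − c), P(N ≥ μ_N + c/2), P(N ≤ μ_N − c/2) } > 0. Then for every Δ with 0 < Δ ≤ c(μ_B + μ_N)/(μ_N(μ_N + c/2)), taking ε = c/2 and δ = δ₀², one has P(B − N(μ_B/μ_N + Δ/2) ≥ ε) ≥ δ and P(B − N(μ_B/μ_N − Δ/2) ≤ −ε) ≥ δ. -/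
open MeasureTheory ProbabilityTheory Filter Set Real
open scoped ENNReal

noncomputable section

/-- Proposition 4 of the paper. Let `B, N` be independent nonnegative
random variables with means `μ_B, μ_N > 0` and suppose
`δ₀ = min{P(B ≥ μ_B + c), P(B ≤ μ_B − c), P(N ≥ μ_N + c/2), P(N ≤ μ_N − c/2)} > 0`
for some `c > 0`.  Then for every `0 < Δ ≤ c(μ_B + μ_N)/(μ_N(μ_N + c/2))`, taking
`ε = c/2` and `δ = δ₀²`, the two Bang-Bang drift conditions hold:
`P(B − N(μ_B/μ_N + Δ/2) ≥ ε) ≥ δ` and `P(B − N(μ_B/μ_N − Δ/2) ≤ −ε) ≥ δ`. -/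
theorem stmt_17
    {Ω : Type*} [MeasurableSpace Ω] (μ : Measure Ω) [IsProbabilityMeasure μ]
    (B N : Ω → ℝ) (hBmeas : Measurable B) (hNmeas : Measurable N)
    (hBnn : ∀ᵐ ω ∂μ, 0 ≤ B ω) (hNnn : ∀ᵐ ω ∂μ, 0 ≤ N ω)
    (hInd : IndepFun B N μ)
    (hBint : Integrable B μ) (hNint : Integrable N μ)
    (muB muN : ℝ) (hmuB : muB = ∫ ω, B ω ∂μ) (hmuN : muN = ∫ ω, N ω ∂μ)
    (hmuBpos : 0 < muB) (hmuNpos : 0 < muN)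
    (c : ℝ) (hc : 0 < c)
    (δ0 : ℝ)
    (hδ0 : δ0 = min
      (min ((μ {ω | muB + c ≤ B ω}).toReal) ((μ {ω | B ω ≤ muB - c}).toReal))
      (min ((μ {ω | muN + c / 2 ≤ N ω}).toReal) ((μ {ω | N ω ≤ muN - c / 2}).toReal)))
    (hδ0pos : 0 < δ0) :
    ∀ Δ : ℝ, 0 < Δ → Δ ≤ c * (muB + muN) / (muN * (muN + c / 2)) →
      δ0 ^ 2 ≤ (μ {ω | c / 2 ≤ B ω - N ω * (muB / muN + Δ / 2)}).toReal ∧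
      δ0 ^ 2 ≤ (μ {ω | B ω - N ω * (muB / muN - Δ / 2) ≤ -(c / 2)}).toReal := by
  -- abbreviations for the four probabilities
  have hδB1 : δ0 ≤ (μ {ω | muB + c ≤ B ω}).toReal := by
    rw [hδ0]; exact le_trans (min_le_left _ _) (min_le_left _ _)
  have hδB2 : δ0 ≤ (μ {ω | B ω ≤ muB - c}).toReal := by
    rw [hδ0]; exact le_trans (min_le_left _ _) (min_le_right _ _)
  have hδN1 : δ0 ≤ (μ {ω | muN + c / 2 ≤ N ω}).toReal := by
    rw [hδ0]; exact le_trans (min_le_right _ _) (min_le_left _ _)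
  have hδN2 : δ0 ≤ (μ {ω | N ω ≤ muN - c / 2}).toReal := by
    rw [hδ0]; exact le_trans (min_le_right _ _) (min_le_right _ _)
  -- c ≤ muB
  have hcB : c ≤ muB := by
    by_contra h
    push_neg at h
    have hsub : {ω | B ω ≤ muB - c} ⊆ {ω | ¬ (0 ≤ B ω)} := by
      intro ω hω
      simp only [mem_setOf_eq] at hω ⊢
      intro h0
      linarith
    have hnull : μ {ω | ¬ (0 ≤ B ω)} = 0 := by
      rw [← ae_iff] at *
      exact hBnn
    have : μ {ω | B ω ≤ muB - c} = 0 := le_antisymm ((measure_mono hsub).trans hnull.le) (zero_le)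
    rw [this] at hδB2
    simp at hδB2
    linarith
  have hcN : c / 2 ≤ muN := by
    by_contra h
    push_neg at h
    have hsub : {ω | N ω ≤ muN - c / 2} ⊆ {ω | ¬ (0 ≤ N ω)} := by
      intro ω hω
      simp only [mem_setOf_eq] at hω ⊢
      intro h0
      linarith
    have hnull : μ {ω | ¬ (0 ≤ N ω)} = 0 := by
      rw [← ae_iff] at *
      exact hNnn
    have : μ {ω | N ω ≤ muN - c / 2} = 0 :=
      le_antisymm ((measure_mono hsub).trans hnull.le) (zero_le)
    rw [this] at hδN2
    simp at hδN2
    linarith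
  intro Δ hΔpos hΔle
  have hden : 0 < muN * (muN + c / 2) := by positivity
  have hΔ' : Δ * (muN * (muN + c / 2)) ≤ c * (muB + muN) := by
    exact (le_div_iff₀ hden).mp hΔle
  have hx : muN * (muB / muN) = muB := by field_simp
  have hxnn : 0 ≤ muB / muN := by positivity
  -- first condition
  constructor
  · have hα : 0 ≤ muB / muN + Δ / 2 := by positivity
    have key1 : c / 2 ≤ muB + c - (muN - c / 2) * (muB / muN + Δ / 2) := by
      nlinarith [mul_pos hΔpos hmuNpos, mul_nonneg hxnn hc.le]
    have hsub : (B ⁻¹' Ici (muB + c)) ∩ (N ⁻¹' Iic (muN - c / 2)) ⊆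
        {ω | c / 2 ≤ B ω - N ω * (muB / muN + Δ / 2)} := by
      rintro ω ⟨h1, h2⟩
      simp only [mem_preimage, mem_Ici, mem_Iic] at h1 h2
      simp only [mem_setOf_eq]
      have := mul_le_mul_of_nonneg_right h2 hα
      linarith
    have hmul : μ ((B ⁻¹' Ici (muB + c)) ∩ (N ⁻¹' Iic (muN - c / 2)))
        = μ (B ⁻¹' Ici (muB + c)) * μ (N ⁻¹' Iic (muN - c / 2)) :=
      hInd.measure_inter_preimage_eq_mul _ _ measurableSet_Ici measurableSet_Iic
    calc δ0 ^ 2 ≤ (μ (B ⁻¹' Ici (muB + c))).toReal * (μ (N ⁻¹' Iic (muN - c / 2))).toReal := by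
          rw [sq]
          exact mul_le_mul hδB1 hδN2 hδ0pos.le ENNReal.toReal_nonneg
      _ = (μ ((B ⁻¹' Ici (muB + c)) ∩ (N ⁻¹' Iic (muN - c / 2)))).toReal := by
          rw [hmul, ENNReal.toReal_mul]
      _ ≤ (μ {ω | c / 2 ≤ B ω - N ω * (muB / muN + Δ / 2)}).toReal := by
          apply ENNReal.toReal_mono (measure_ne_top _ _)
          exact measure_mono hsub
  · have hα : 0 ≤ muB / muN - Δ / 2 := by
      rw [sub_nonneg, div_le_div_iff₀ two_pos hmuNpos]
      nlinarith
    have key2 : muB - c - (muN + c / 2) * (muB / muN - Δ / 2) ≤ -(c / 2) := by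
      nlinarith [mul_nonneg hxnn hc.le]
    have hsub : (B ⁻¹' Iic (muB - c)) ∩ (N ⁻¹' Ici (muN + c / 2)) ⊆
        {ω | B ω - N ω * (muB / muN - Δ / 2) ≤ -(c / 2)} := by
      rintro ω ⟨h1, h2⟩
      simp only [mem_preimage, mem_Ici, mem_Iic] at h1 h2
      simp only [mem_setOf_eq]
      have := mul_le_mul_of_nonneg_right h2 hα
      linarith
    have hmul : μ ((B ⁻¹' Iic (muB - c)) ∩ (N ⁻¹' Ici (muN + c / 2)))
        = μ (B ⁻¹' Iic (muB - c)) * μ (N ⁻¹' Ici (muN + c / 2)) :=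
      hInd.measure_inter_preimage_eq_mul _ _ measurableSet_Iic measurableSet_Ici
    calc δ0 ^ 2 ≤ (μ (B ⁻¹' Iic (muB - c))).toReal * (μ (N ⁻¹' Ici (muN + c / 2))).toReal := by
          rw [sq]
          exact mul_le_mul hδB2 hδN1 hδ0pos.le ENNReal.toReal_nonneg
      _ = (μ ((B ⁻¹' Iic (muB - c)) ∩ (N ⁻¹' Ici (muN + c / 2)))).toReal := by
          rw [hmul, ENNReal.toReal_mul]
      _ ≤ (μ {ω | B ω - N ω * (muB / muN - Δ / 2) ≤ -(c / 2)}).toReal := by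
          apply ENNReal.toReal_mono (measure_ne_top _ _)
          exact measure_mono hsub
end
end
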